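/- arXiv:2206.05925 — 2 statements merged into one kernel-verified Lean document; each statement's English description precedes it below -/
import Mathlib

section
/- Every symmetric super-biderivation φ of the N=1 super-BMS₃ algebra ℬ (homogeneous of either ℤ/2-degree, with ℬ acting on itself by the adjoint action) is trivial, i.e. φ(x, y) = 0 for all x, y ∈ ℬ. -/
namespace SBMS

open Module

abbrev Idx : Type := ((ℤ ⊕ ℤ) ⊕ (Unit ⊕ Unit)) ⊕ ℤ

def iL (m : ℤ) : Idx := Sum.inl (Sum.inl (Sum.inl m))
def iW (m : ℤ) : Idx := Sum.inl (Sum.inl (Sum.inr m))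
def iC1 : Idx := Sum.inl (Sum.inr (Sum.inl ()))
def iC2 : Idx := Sum.inl (Sum.inr (Sum.inr ()))
def iQ (k : ℤ) : Idx := Sum.inr k

def sg (p : ZMod 2) : ℂ := if p = 1 then -1 else 1

lemma sg_zero : sg 0 = 1 := rfl
lemma sg_one : sg 1 = -1 := rfl

lemma zmod_cases (p : ZMod 2) : p = 0 ∨ p = 1 := by revert p; decide

lemma sg_ne (p : ZMod 2) : sg p ≠ 0 := by
  rcases zmod_cases p with h | h <;> simp [h, sg]

lemma int_ne (a : ℤ) (h : a ≠ 0) : (a : ℂ) ≠ 0 := by exact_mod_cast h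

lemma half_ne (a : ℤ) : (a : ℂ) + 1/2 ≠ 0 := by
  intro h
  have h2 : ((2*a + 1 : ℤ) : ℂ) = 0 := by push_cast; linear_combination 2*h
  have : (2*a + 1 : ℤ) = 0 := by exact_mod_cast h2
  omega

structure Setup (V : Type) [AddCommGroup V] [Module ℂ V] : Type where
  bV : Module.Basis Idx ℂ V
  br : V →ₗ[ℂ] V →ₗ[ℂ] V
  Vsub : ZMod 2 → Submodule ℂ V
  φ : V →ₗ[ℂ] V →ₗ[ℂ] V
  d : ZMod 2
  hV0 : Vsub 0 = Submodule.span ℂ (Set.range (fun i : (ℤ ⊕ ℤ) ⊕ (Unit ⊕ Unit) => bV (Sum.inl i)))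
  hV1 : Vsub 1 = Submodule.span ℂ (Set.range fun j : ℤ => bV (Sum.inr j))
  hLL : ∀ m n : ℤ, br (bV (iL m)) (bV (iL n)) = ((m : ℂ) - n) • bV (iL (m+n)) + (if m + n = 0 then ((m:ℂ)^3 - m)/12 else 0) • bV iC1
  hLW : ∀ m n : ℤ, br (bV (iL m)) (bV (iW n)) = ((m : ℂ) - n) • bV (iW (m+n)) + (if m + n = 0 then ((m:ℂ)^3 - m)/12 else 0) • bV iC2
  hQQ : ∀ k l : ℤ, br (bV (iQ k)) (bV (iQ l)) = (2:ℂ) • bV (iW (k+l+1)) + (if k + l + 1 = 0 then (((k:ℂ)+1/2)^2 - 1/4)/3 else 0) • bV iC2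
  hLQ : ∀ m k : ℤ, br (bV (iL m)) (bV (iQ k)) = ((m:ℂ)/2 - ((k:ℂ)+1/2)) • bV (iQ (m+k))
  hWW : ∀ m n : ℤ, br (bV (iW m)) (bV (iW n)) = 0
  hWQ : ∀ m k : ℤ, br (bV (iW m)) (bV (iQ k)) = 0
  hC1x : ∀ x : V, br (bV iC1) x = 0
  hC2x : ∀ x : V, br (bV iC2) x = 0
  hskew : ∀ p q : ZMod 2, ∀ x ∈ Vsub p, ∀ y ∈ Vsub q, br x y = (-(sg (p*q))) • br y x
  hhom : ∀ p q : ZMod 2, ∀ x ∈ Vsub p, ∀ y ∈ Vsub q, φ x y ∈ Vsub (p+q+d)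
  hbd1 : ∀ p q t : ZMod 2, ∀ x ∈ Vsub p, ∀ y ∈ Vsub q, ∀ z ∈ Vsub t,
      φ (br x y) z = sg (d*p) • br x (φ y z) - sg (q*(d+p)) • br y (φ x z)
  hbd2 : ∀ p q t : ZMod 2, ∀ x ∈ Vsub p, ∀ y ∈ Vsub q, ∀ z ∈ Vsub t,
      φ x (br y z) = sg ((d+p)*q) • br y (φ x z) - sg (t*(d+p+q)) • br z (φ x y)
  hsym : ∀ p q : ZMod 2, ∀ x ∈ Vsub p, ∀ y ∈ Vsub q, φ x y = sg (p*q) • φ y x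

namespace Setup

variable {V : Type} [AddCommGroup V] [Module ℂ V] (S : Setup V)

noncomputable def Lv (m : ℤ) : V := S.bV (iL m)
noncomputable def Wv (m : ℤ) : V := S.bV (iW m)
noncomputable def C1v : V := S.bV iC1
noncomputable def C2v : V := S.bV iC2
noncomputable def Qv (k : ℤ) : V := S.bV (iQ k)

lemma memL (m : ℤ) : S.Lv m ∈ S.Vsub 0 := by
  rw [hV0]; exact Submodule.subset_span ⟨Sum.inl (Sum.inl m), rfl⟩
lemma memW (m : ℤ) : S.Wv m ∈ S.Vsub 0 := by
  rw [hV0]; exact Submodule.subset_span ⟨Sum.inl (Sum.inr m), rfl⟩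
lemma memC1 : S.C1v ∈ S.Vsub 0 := by
  rw [hV0]; exact Submodule.subset_span ⟨Sum.inr (Sum.inl ()), rfl⟩
lemma memC2 : S.C2v ∈ S.Vsub 0 := by
  rw [hV0]; exact Submodule.subset_span ⟨Sum.inr (Sum.inr ()), rfl⟩
lemma memQ (k : ℤ) : S.Qv k ∈ S.Vsub 1 := by
  rw [hV1]; exact Submodule.subset_span ⟨k, rfl⟩

def par : Idx → ZMod 2
  | .inl _ => 0
  | .inr _ => 1

lemma membas (idx : Idx) : S.bV idx ∈ S.Vsub (par idx) := by
  rcases idx with i | k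
  · rw [par, hV0]; exact Submodule.subset_span ⟨i, rfl⟩
  · rw [par, hV1]; exact Submodule.subset_span ⟨k, rfl⟩

/-- coordinates of even vectors vanish on odd indices -/
lemma repr0 (v : V) (hv : v ∈ S.Vsub 0) (k : ℤ) : S.bV.repr v (iQ k) = 0 := by
  have hle : S.Vsub 0 ≤ LinearMap.ker (S.bV.coord (iQ k)) := by
    rw [S.hV0]
    apply Submodule.span_le.mpr
    rintro _ ⟨i, rfl⟩
    simp [LinearMap.mem_ker, Basis.coord_apply, Basis.repr_self, Finsupp.single_apply, iQ]
  simpa [Basis.coord_apply] using hle hv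

lemma repr1 (v : V) (hv : v ∈ S.Vsub 1) (i0 : (ℤ ⊕ ℤ) ⊕ (Unit ⊕ Unit)) :
    S.bV.repr v (Sum.inl i0) = 0 := by
  have hle : S.Vsub 1 ≤ LinearMap.ker (S.bV.coord (Sum.inl i0)) := by
    rw [S.hV1]
    apply Submodule.span_le.mpr
    rintro _ ⟨j, rfl⟩
    simp [LinearMap.mem_ker, Basis.coord_apply, Basis.repr_self, Finsupp.single_apply]
  simpa [Basis.coord_apply] using hle hv

@[simp] lemma repr_ite (cond : Prop) [Decidable cond] (x : V) (j : Idx) :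
    S.bV.repr (if cond then x else 0) j = if cond then S.bV.repr x j else 0 := by
  split_ifs <;> simp

lemma eq_zero_of_repr (v : V) (h : ∀ idx, S.bV.repr v idx = 0) : v = 0 := by
  have : S.bV.repr v = 0 := Finsupp.ext h
  simpa using congrArg (S.bV.repr.symm) this


/-! derived brackets -/

lemma brLC1 (n : ℤ) : S.br (S.Lv n) S.C1v = 0 := by
  have h := S.hskew 0 0 _ (S.memL n) _ S.memC1
  rw [h]; simp [C1v, S.hC1x, sg_zero]

lemma brLC2 (n : ℤ) : S.br (S.Lv n) S.C2v = 0 := by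
  have h := S.hskew 0 0 _ (S.memL n) _ S.memC2
  rw [h]; simp [C2v, S.hC2x, sg_zero]

lemma brQC1 (k : ℤ) : S.br (S.Qv k) S.C1v = 0 := by
  have h := S.hskew 1 0 _ (S.memQ k) _ S.memC1
  rw [h]; simp [C1v, S.hC1x, sg_zero]

lemma brQC2 (k : ℤ) : S.br (S.Qv k) S.C2v = 0 := by
  have h := S.hskew 1 0 _ (S.memQ k) _ S.memC2
  rw [h]; simp [C2v, S.hC2x, sg_zero]

lemma brQW (k m : ℤ) : S.br (S.Qv k) (S.Wv m) = 0 := by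
  have h := S.hskew 1 0 _ (S.memQ k) _ (S.memW m)
  rw [h]; simp [show S.br (S.Wv m) (S.Qv k) = 0 from S.hWQ m k, sg_zero]

lemma brQL (k m : ℤ) : S.br (S.Qv k) (S.Lv m) =
    (-((m:ℂ)/2 - ((k:ℂ)+1/2))) • S.Qv (m+k) := by
  have h := S.hskew 1 0 _ (S.memQ k) _ (S.memL m)
  rw [h]; rw [show S.br (S.Lv m) (S.Qv k) = ((m:ℂ)/2 - ((k:ℂ)+1/2)) • S.Qv (m+k) from S.hLQ m k]
  simp [sg_zero, smul_smul]

/-! coordinate engine -/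

lemma reprBrL_L (n i : ℤ) (v : V) :
    S.bV.repr (S.br (S.Lv n) v) (iL i) = (2*(n:ℂ) - i) * S.bV.repr v (iL (i - n)) := by
  have h : (S.bV.coord (iL i)) ∘ₗ (S.br (S.Lv n)) = (2*(n:ℂ) - i) • (S.bV.coord (iL (i-n))) := by
    apply S.bV.ext
    rintro (((m | m) | (⟨⟩ | ⟨⟩)) | q) <;>
      simp only [LinearMap.comp_apply, LinearMap.smul_apply, smul_eq_mul, Basis.coord_apply, Lv]
    · rw [show (S.br (S.bV (iL n)) (S.bV (Sum.inl (Sum.inl (Sum.inl m)))) : V)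
            = S.br (S.bV (iL n)) (S.bV (iL m)) from rfl, S.hLL n m]
      rcases eq_or_ne (n + m) i with h1 | h1
      · have hi : (i:ℂ) = (n:ℂ) + m := by exact_mod_cast h1.symm
        simp [Basis.repr_self, Finsupp.single_apply, iL, iC1, h1, show m = i - n by omega]
        try rw [hi]
        try ring
      · simp [Basis.repr_self, Finsupp.single_apply, iL, iC1, h1, show ¬ (m = i - n) by omega]
    · rw [show (S.br (S.bV (iL n)) (S.bV (Sum.inl (Sum.inl (Sum.inr m)))) : V)
            = S.br (S.bV (iL n)) (S.bV (iW m)) from rfl, S.hLW n m]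
      simp [Basis.repr_self, Finsupp.single_apply, iL, iW, iC2]
    · rw [show (S.br (S.bV (iL n)) (S.bV (Sum.inl (Sum.inr (Sum.inl ())))) : V)
            = S.br (S.Lv n) S.C1v from rfl, S.brLC1 n]
      simp [C1v, Basis.repr_self, Finsupp.single_apply, iL, iC1]
    · rw [show (S.br (S.bV (iL n)) (S.bV (Sum.inl (Sum.inr (Sum.inr ())))) : V)
            = S.br (S.Lv n) S.C2v from rfl, S.brLC2 n]
      simp [C2v, Basis.repr_self, Finsupp.single_apply, iL, iC2]
    · rw [show (S.br (S.bV (iL n)) (S.bV (Sum.inr q)) : V)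
            = S.br (S.bV (iL n)) (S.bV (iQ q)) from rfl, S.hLQ n q]
      simp [Basis.repr_self, Finsupp.single_apply, iL, iQ]
  simpa [Basis.coord_apply] using LinearMap.congr_fun h v

lemma reprBrL_W (n i : ℤ) (v : V) :
    S.bV.repr (S.br (S.Lv n) v) (iW i) = (2*(n:ℂ) - i) * S.bV.repr v (iW (i - n)) := by
  have h : (S.bV.coord (iW i)) ∘ₗ (S.br (S.Lv n)) = (2*(n:ℂ) - i) • (S.bV.coord (iW (i-n))) := by
    apply S.bV.ext
    rintro (((m | m) | (⟨⟩ | ⟨⟩)) | q) <;>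
      simp only [LinearMap.comp_apply, LinearMap.smul_apply, smul_eq_mul, Basis.coord_apply, Lv]
    · rw [show (S.br (S.bV (iL n)) (S.bV (Sum.inl (Sum.inl (Sum.inl m)))) : V)
            = S.br (S.bV (iL n)) (S.bV (iL m)) from rfl, S.hLL n m]
      simp [Basis.repr_self, Finsupp.single_apply, iL, iW, iC1]
    · rw [show (S.br (S.bV (iL n)) (S.bV (Sum.inl (Sum.inl (Sum.inr m)))) : V)
            = S.br (S.bV (iL n)) (S.bV (iW m)) from rfl, S.hLW n m]
      rcases eq_or_ne (n + m) i with h1 | h1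
      · have hi : (i:ℂ) = (n:ℂ) + m := by exact_mod_cast h1.symm
        simp [Basis.repr_self, Finsupp.single_apply, iW, iC2, h1, show m = i - n by omega]
        try rw [hi]
        try ring
      · simp [Basis.repr_self, Finsupp.single_apply, iW, iC2, h1, show ¬ (m = i - n) by omega]
    · rw [show (S.br (S.bV (iL n)) (S.bV (Sum.inl (Sum.inr (Sum.inl ())))) : V)
            = S.br (S.Lv n) S.C1v from rfl, S.brLC1 n]
      simp [C1v, Basis.repr_self, Finsupp.single_apply, iW, iC1]
    · rw [show (S.br (S.bV (iL n)) (S.bV (Sum.inl (Sum.inr (Sum.inr ())))) : V)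
            = S.br (S.Lv n) S.C2v from rfl, S.brLC2 n]
      simp [C2v, Basis.repr_self, Finsupp.single_apply, iW, iC2]
    · rw [show (S.br (S.bV (iL n)) (S.bV (Sum.inr q)) : V)
            = S.br (S.bV (iL n)) (S.bV (iQ q)) from rfl, S.hLQ n q]
      simp [Basis.repr_self, Finsupp.single_apply, iW, iQ]
  simpa [Basis.coord_apply] using LinearMap.congr_fun h v

lemma reprBrL_Q (n i : ℤ) (v : V) :
    S.bV.repr (S.br (S.Lv n) v) (iQ i)
      = ((n:ℂ)/2 - (((i:ℂ) - n) + 1/2)) * S.bV.repr v (iQ (i - n)) := by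
  have h : (S.bV.coord (iQ i)) ∘ₗ (S.br (S.Lv n))
      = ((n:ℂ)/2 - (((i:ℂ) - n) + 1/2)) • (S.bV.coord (iQ (i-n))) := by
    apply S.bV.ext
    rintro (((m | m) | (⟨⟩ | ⟨⟩)) | q) <;>
      simp only [LinearMap.comp_apply, LinearMap.smul_apply, smul_eq_mul, Basis.coord_apply, Lv]
    · rw [show (S.br (S.bV (iL n)) (S.bV (Sum.inl (Sum.inl (Sum.inl m)))) : V)
            = S.br (S.bV (iL n)) (S.bV (iL m)) from rfl, S.hLL n m]
      simp [Basis.repr_self, Finsupp.single_apply, iL, iQ, iC1]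
    · rw [show (S.br (S.bV (iL n)) (S.bV (Sum.inl (Sum.inl (Sum.inr m)))) : V)
            = S.br (S.bV (iL n)) (S.bV (iW m)) from rfl, S.hLW n m]
      simp [Basis.repr_self, Finsupp.single_apply, iW, iQ, iC2]
    · rw [show (S.br (S.bV (iL n)) (S.bV (Sum.inl (Sum.inr (Sum.inl ())))) : V)
            = S.br (S.Lv n) S.C1v from rfl, S.brLC1 n]
      simp [C1v, Basis.repr_self, Finsupp.single_apply, iQ, iC1]
    · rw [show (S.br (S.bV (iL n)) (S.bV (Sum.inl (Sum.inr (Sum.inr ())))) : V)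
            = S.br (S.Lv n) S.C2v from rfl, S.brLC2 n]
      simp [C2v, Basis.repr_self, Finsupp.single_apply, iQ, iC2]
    · rw [show (S.br (S.bV (iL n)) (S.bV (Sum.inr q)) : V)
            = S.br (S.bV (iL n)) (S.bV (iQ q)) from rfl, S.hLQ n q]
      rcases eq_or_ne (n + q) i with h1 | h1
      · have hi : (i:ℂ) = (n:ℂ) + q := by exact_mod_cast h1.symm
        simp [Basis.repr_self, Finsupp.single_apply, iQ, h1, show q = i - n by omega]
        try rw [hi]
        try ring
      · simp [Basis.repr_self, Finsupp.single_apply, iQ, h1, show ¬ (q = i - n) by omega]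
  simpa [Basis.coord_apply] using LinearMap.congr_fun h v

lemma reprBrL_C1 (n : ℤ) (v : V) :
    S.bV.repr (S.br (S.Lv n) v) iC1 = (((n:ℂ)^3 - n)/12) * S.bV.repr v (iL (-n)) := by
  have h : (S.bV.coord iC1) ∘ₗ (S.br (S.Lv n))
      = (((n:ℂ)^3 - n)/12) • (S.bV.coord (iL (-n))) := by
    apply S.bV.ext
    rintro (((m | m) | (⟨⟩ | ⟨⟩)) | q) <;>
      simp only [LinearMap.comp_apply, LinearMap.smul_apply, smul_eq_mul, Basis.coord_apply, Lv]
    · rw [show (S.br (S.bV (iL n)) (S.bV (Sum.inl (Sum.inl (Sum.inl m)))) : V)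
            = S.br (S.bV (iL n)) (S.bV (iL m)) from rfl, S.hLL n m]
      rcases eq_or_ne m (-n) with h1 | h1
      · simp [Basis.repr_self, Finsupp.single_apply, iL, iC1, h1]
      · simp [Basis.repr_self, Finsupp.single_apply, iL, iC1, h1, show ¬ (n + m = 0) by omega]
    · rw [show (S.br (S.bV (iL n)) (S.bV (Sum.inl (Sum.inl (Sum.inr m)))) : V)
            = S.br (S.bV (iL n)) (S.bV (iW m)) from rfl, S.hLW n m]
      simp [Basis.repr_self, Finsupp.single_apply, iW, iL, iC1, iC2]
    · rw [show (S.br (S.bV (iL n)) (S.bV (Sum.inl (Sum.inr (Sum.inl ())))) : V)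
            = S.br (S.Lv n) S.C1v from rfl, S.brLC1 n]
      simp [C1v, Basis.repr_self, Finsupp.single_apply, iL, iC1]
    · rw [show (S.br (S.bV (iL n)) (S.bV (Sum.inl (Sum.inr (Sum.inr ())))) : V)
            = S.br (S.Lv n) S.C2v from rfl, S.brLC2 n]
      simp [C2v, Basis.repr_self, Finsupp.single_apply, iL, iC2, iC1]
    · rw [show (S.br (S.bV (iL n)) (S.bV (Sum.inr q)) : V)
            = S.br (S.bV (iL n)) (S.bV (iQ q)) from rfl, S.hLQ n q]
      simp [Basis.repr_self, Finsupp.single_apply, iQ, iL, iC1]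
  simpa [Basis.coord_apply] using LinearMap.congr_fun h v

lemma reprBrL_C2 (n : ℤ) (v : V) :
    S.bV.repr (S.br (S.Lv n) v) iC2 = (((n:ℂ)^3 - n)/12) * S.bV.repr v (iW (-n)) := by
  have h : (S.bV.coord iC2) ∘ₗ (S.br (S.Lv n))
      = (((n:ℂ)^3 - n)/12) • (S.bV.coord (iW (-n))) := by
    apply S.bV.ext
    rintro (((m | m) | (⟨⟩ | ⟨⟩)) | q) <;>
      simp only [LinearMap.comp_apply, LinearMap.smul_apply, smul_eq_mul, Basis.coord_apply, Lv]
    · rw [show (S.br (S.bV (iL n)) (S.bV (Sum.inl (Sum.inl (Sum.inl m)))) : V)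
            = S.br (S.bV (iL n)) (S.bV (iL m)) from rfl, S.hLL n m]
      simp [Basis.repr_self, Finsupp.single_apply, iL, iW, iC1, iC2]
    · rw [show (S.br (S.bV (iL n)) (S.bV (Sum.inl (Sum.inl (Sum.inr m)))) : V)
            = S.br (S.bV (iL n)) (S.bV (iW m)) from rfl, S.hLW n m]
      rcases eq_or_ne m (-n) with h1 | h1
      · simp [Basis.repr_self, Finsupp.single_apply, iW, iC2, h1]
      · simp [Basis.repr_self, Finsupp.single_apply, iW, iC2, h1, show ¬ (n + m = 0) by omega]
    · rw [show (S.br (S.bV (iL n)) (S.bV (Sum.inl (Sum.inr (Sum.inl ())))) : V)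
            = S.br (S.Lv n) S.C1v from rfl, S.brLC1 n]
      simp [C1v, Basis.repr_self, Finsupp.single_apply, iW, iC1, iC2]
    · rw [show (S.br (S.bV (iL n)) (S.bV (Sum.inl (Sum.inr (Sum.inr ())))) : V)
            = S.br (S.Lv n) S.C2v from rfl, S.brLC2 n]
      simp [C2v, Basis.repr_self, Finsupp.single_apply, iW, iC2]
    · rw [show (S.br (S.bV (iL n)) (S.bV (Sum.inr q)) : V)
            = S.br (S.bV (iL n)) (S.bV (iQ q)) from rfl, S.hLQ n q]
      simp [Basis.repr_self, Finsupp.single_apply, iQ, iW, iC2]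
  simpa [Basis.coord_apply] using LinearMap.congr_fun h v

lemma reprBrQ_L (k i : ℤ) (v : V) :
    S.bV.repr (S.br (S.Qv k) v) (iL i) = 0 := by
  have h : (S.bV.coord (iL i)) ∘ₗ (S.br (S.Qv k)) = 0 := by
    apply S.bV.ext
    rintro (((m | m) | (⟨⟩ | ⟨⟩)) | q) <;>
      simp only [LinearMap.comp_apply, LinearMap.zero_apply, Basis.coord_apply, Qv]
    · rw [show (S.br (S.bV (iQ k)) (S.bV (Sum.inl (Sum.inl (Sum.inl m)))) : V)
            = S.br (S.Qv k) (S.Lv m) from rfl, S.brQL k m]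
      simp [Qv, Basis.repr_self, Finsupp.single_apply, iQ, iL]
    · rw [show (S.br (S.bV (iQ k)) (S.bV (Sum.inl (Sum.inl (Sum.inr m)))) : V)
            = S.br (S.Qv k) (S.Wv m) from rfl, S.brQW k m]
      simp
    · rw [show (S.br (S.bV (iQ k)) (S.bV (Sum.inl (Sum.inr (Sum.inl ())))) : V)
            = S.br (S.Qv k) S.C1v from rfl, S.brQC1 k]
      simp
    · rw [show (S.br (S.bV (iQ k)) (S.bV (Sum.inl (Sum.inr (Sum.inr ())))) : V)
            = S.br (S.Qv k) S.C2v from rfl, S.brQC2 k]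
      simp
    · rw [show (S.br (S.bV (iQ k)) (S.bV (Sum.inr q)) : V)
            = S.br (S.bV (iQ k)) (S.bV (iQ q)) from rfl, S.hQQ k q]
      simp [Basis.repr_self, Finsupp.single_apply, iW, iL, iC2]
  simpa [Basis.coord_apply] using LinearMap.congr_fun h v

lemma reprBrQ_C1 (k : ℤ) (v : V) :
    S.bV.repr (S.br (S.Qv k) v) iC1 = 0 := by
  have h : (S.bV.coord iC1) ∘ₗ (S.br (S.Qv k)) = 0 := by
    apply S.bV.ext
    rintro (((m | m) | (⟨⟩ | ⟨⟩)) | q) <;>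
      simp only [LinearMap.comp_apply, LinearMap.zero_apply, Basis.coord_apply, Qv]
    · rw [show (S.br (S.bV (iQ k)) (S.bV (Sum.inl (Sum.inl (Sum.inl m)))) : V)
            = S.br (S.Qv k) (S.Lv m) from rfl, S.brQL k m]
      simp [Qv, Basis.repr_self, Finsupp.single_apply, iQ, iC1]
    · rw [show (S.br (S.bV (iQ k)) (S.bV (Sum.inl (Sum.inl (Sum.inr m)))) : V)
            = S.br (S.Qv k) (S.Wv m) from rfl, S.brQW k m]
      simp
    · rw [show (S.br (S.bV (iQ k)) (S.bV (Sum.inl (Sum.inr (Sum.inl ())))) : V)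
            = S.br (S.Qv k) S.C1v from rfl, S.brQC1 k]
      simp
    · rw [show (S.br (S.bV (iQ k)) (S.bV (Sum.inl (Sum.inr (Sum.inr ())))) : V)
            = S.br (S.Qv k) S.C2v from rfl, S.brQC2 k]
      simp
    · rw [show (S.br (S.bV (iQ k)) (S.bV (Sum.inr q)) : V)
            = S.br (S.bV (iQ k)) (S.bV (iQ q)) from rfl, S.hQQ k q]
      simp [Basis.repr_self, Finsupp.single_apply, iW, iC1, iC2]
  simpa [Basis.coord_apply] using LinearMap.congr_fun h v

lemma reprBrQ_Q (k i : ℤ) (v : V) :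
    S.bV.repr (S.br (S.Qv k) v) (iQ i)
      = (-((((i:ℂ)-k))/2 - ((k:ℂ)+1/2))) * S.bV.repr v (iL (i - k)) := by
  have h : (S.bV.coord (iQ i)) ∘ₗ (S.br (S.Qv k))
      = (-((((i:ℂ)-k))/2 - ((k:ℂ)+1/2))) • (S.bV.coord (iL (i-k))) := by
    apply S.bV.ext
    rintro (((m | m) | (⟨⟩ | ⟨⟩)) | q) <;>
      simp only [LinearMap.comp_apply, LinearMap.smul_apply, smul_eq_mul, Basis.coord_apply, Qv]
    · rw [show (S.br (S.bV (iQ k)) (S.bV (Sum.inl (Sum.inl (Sum.inl m)))) : V)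
            = S.br (S.Qv k) (S.Lv m) from rfl, S.brQL k m]
      rcases eq_or_ne (m + k) i with h1 | h1
      · have hi : (i:ℂ) = (m:ℂ) + k := by exact_mod_cast h1.symm
        simp [Qv, Basis.repr_self, Finsupp.single_apply, iQ, iL, h1, show m = i - k by omega]
        try rw [hi]
        try ring
      · simp [Qv, Basis.repr_self, Finsupp.single_apply, iQ, iL, h1, show ¬ (m = i - k) by omega]
    · rw [show (S.br (S.bV (iQ k)) (S.bV (Sum.inl (Sum.inl (Sum.inr m)))) : V)
            = S.br (S.Qv k) (S.Wv m) from rfl, S.brQW k m]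
      simp [Basis.repr_self, Finsupp.single_apply, iW, iQ, iL]
    · rw [show (S.br (S.bV (iQ k)) (S.bV (Sum.inl (Sum.inr (Sum.inl ())))) : V)
            = S.br (S.Qv k) S.C1v from rfl, S.brQC1 k]
      simp [Basis.repr_self, Finsupp.single_apply, iC1, iQ, iL]
    · rw [show (S.br (S.bV (iQ k)) (S.bV (Sum.inl (Sum.inr (Sum.inr ())))) : V)
            = S.br (S.Qv k) S.C2v from rfl, S.brQC2 k]
      simp [Basis.repr_self, Finsupp.single_apply, iC2, iQ, iL]
    · rw [show (S.br (S.bV (iQ k)) (S.bV (Sum.inr q)) : V)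
            = S.br (S.bV (iQ k)) (S.bV (iQ q)) from rfl, S.hQQ k q]
      simp [Basis.repr_self, Finsupp.single_apply, iW, iQ, iL, iC2]
  simpa [Basis.coord_apply] using LinearMap.congr_fun h v

lemma reprBrQ_W (k i : ℤ) (v : V) :
    S.bV.repr (S.br (S.Qv k) v) (iW i) = 2 * S.bV.repr v (iQ (i - k - 1)) := by
  have h : (S.bV.coord (iW i)) ∘ₗ (S.br (S.Qv k)) = (2:ℂ) • (S.bV.coord (iQ (i-k-1))) := by
    apply S.bV.ext
    rintro (((m | m) | (⟨⟩ | ⟨⟩)) | q) <;>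
      simp only [LinearMap.comp_apply, LinearMap.smul_apply, smul_eq_mul, Basis.coord_apply, Qv]
    · rw [show (S.br (S.bV (iQ k)) (S.bV (Sum.inl (Sum.inl (Sum.inl m)))) : V)
            = S.br (S.Qv k) (S.Lv m) from rfl, S.brQL k m]
      simp [Qv, Basis.repr_self, Finsupp.single_apply, iQ, iW, iL]
    · rw [show (S.br (S.bV (iQ k)) (S.bV (Sum.inl (Sum.inl (Sum.inr m)))) : V)
            = S.br (S.Qv k) (S.Wv m) from rfl, S.brQW k m]
      simp [Basis.repr_self, Finsupp.single_apply, iW, iQ]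
    · rw [show (S.br (S.bV (iQ k)) (S.bV (Sum.inl (Sum.inr (Sum.inl ())))) : V)
            = S.br (S.Qv k) S.C1v from rfl, S.brQC1 k]
      simp [Basis.repr_self, Finsupp.single_apply, iC1, iW, iQ]
    · rw [show (S.br (S.bV (iQ k)) (S.bV (Sum.inl (Sum.inr (Sum.inr ())))) : V)
            = S.br (S.Qv k) S.C2v from rfl, S.brQC2 k]
      simp [Basis.repr_self, Finsupp.single_apply, iC2, iW, iQ]
    · rw [show (S.br (S.bV (iQ k)) (S.bV (Sum.inr q)) : V)
            = S.br (S.bV (iQ k)) (S.bV (iQ q)) from rfl, S.hQQ k q]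
      rcases eq_or_ne (k + q + 1) i with h1 | h1
      · simp [Basis.repr_self, Finsupp.single_apply, iW, iQ, iC2, h1,
          show q = i - k - 1 by omega, show k + (i - k - 1) + 1 = i by ring]
      · simp [Basis.repr_self, Finsupp.single_apply, iW, iQ, iC2, h1,
          show ¬ (q = i - k - 1) by omega]
  simpa [Basis.coord_apply] using LinearMap.congr_fun h v

lemma reprBrQ_C2 (k : ℤ) (v : V) :
    S.bV.repr (S.br (S.Qv k) v) iC2
      = ((((k:ℂ)+1/2)^2 - 1/4)/3) * S.bV.repr v (iQ (-k-1)) := by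
  have h : (S.bV.coord iC2) ∘ₗ (S.br (S.Qv k))
      = ((((k:ℂ)+1/2)^2 - 1/4)/3) • (S.bV.coord (iQ (-k-1))) := by
    apply S.bV.ext
    rintro (((m | m) | (⟨⟩ | ⟨⟩)) | q) <;>
      simp only [LinearMap.comp_apply, LinearMap.smul_apply, smul_eq_mul, Basis.coord_apply, Qv]
    · rw [show (S.br (S.bV (iQ k)) (S.bV (Sum.inl (Sum.inl (Sum.inl m)))) : V)
            = S.br (S.Qv k) (S.Lv m) from rfl, S.brQL k m]
      simp [Qv, Basis.repr_self, Finsupp.single_apply, iQ, iC2, iL]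
    · rw [show (S.br (S.bV (iQ k)) (S.bV (Sum.inl (Sum.inl (Sum.inr m)))) : V)
            = S.br (S.Qv k) (S.Wv m) from rfl, S.brQW k m]
      simp [Basis.repr_self, Finsupp.single_apply, iW, iC2, iQ]
    · rw [show (S.br (S.bV (iQ k)) (S.bV (Sum.inl (Sum.inr (Sum.inl ())))) : V)
            = S.br (S.Qv k) S.C1v from rfl, S.brQC1 k]
      simp [Basis.repr_self, Finsupp.single_apply, iC1, iC2, iQ]
    · rw [show (S.br (S.bV (iQ k)) (S.bV (Sum.inl (Sum.inr (Sum.inr ())))) : V)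
            = S.br (S.Qv k) S.C2v from rfl, S.brQC2 k]
      simp [Basis.repr_self, Finsupp.single_apply, iC2, iQ]
    · rw [show (S.br (S.bV (iQ k)) (S.bV (Sum.inr q)) : V)
            = S.br (S.bV (iQ k)) (S.bV (iQ q)) from rfl, S.hQQ k q]
      rcases eq_or_ne q (-k-1) with h1 | h1
      · simp [Basis.repr_self, Finsupp.single_apply, iW, iQ, iC2, h1,
          show k + (-k-1) + 1 = 0 by ring]
      · simp [Basis.repr_self, Finsupp.single_apply, iW, iQ, iC2, h1,
          show ¬ (k + q + 1 = 0) by omega]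
  simpa [Basis.coord_apply] using LinearMap.congr_fun h v


/-! helpers -/

lemma brLL' (m n : ℤ) : S.br (S.Lv m) (S.Lv n) = ((m:ℂ) - n) • S.Lv (m+n)
    + (if m + n = 0 then ((m:ℂ)^3 - m)/12 else 0) • S.C1v := S.hLL m n

lemma brLW' (m n : ℤ) : S.br (S.Lv m) (S.Wv n) = ((m:ℂ) - n) • S.Wv (m+n)
    + (if m + n = 0 then ((m:ℂ)^3 - m)/12 else 0) • S.C2v := S.hLW m n

lemma brQQ' (k l : ℤ) : S.br (S.Qv k) (S.Qv l) = (2:ℂ) • S.Wv (k+l+1)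
    + (if k + l + 1 = 0 then (((k:ℂ)+1/2)^2 - 1/4)/3 else 0) • S.C2v := S.hQQ k l

lemma brLQ' (m k : ℤ) : S.br (S.Lv m) (S.Qv k)
    = ((m:ℂ)/2 - ((k:ℂ)+1/2)) • S.Qv (m+k) := S.hLQ m k

lemma sg_d1 : sg (S.d + 1) = - sg S.d := by
  rcases zmod_cases S.d with h | h <;> rw [h]
  · rw [zero_add, sg_one, sg_zero]; try ring
  · rw [show (1:ZMod 2)+1 = 0 from by decide, sg_zero, sg_one]; try ring

lemma sym00 (x y : V) (hx : x ∈ S.Vsub 0) (hy : y ∈ S.Vsub 0) : S.φ x y = S.φ y x := by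
  have := S.hsym 0 0 x hx y hy; simpa [sg_zero] using this

lemma sym01 (x y : V) (hx : x ∈ S.Vsub 0) (hy : y ∈ S.Vsub 1) : S.φ x y = S.φ y x := by
  have := S.hsym 0 1 x hx y hy; simpa [sg_zero] using this

lemma sym10 (x y : V) (hx : x ∈ S.Vsub 1) (hy : y ∈ S.Vsub 0) : S.φ x y = S.φ y x := by
  have := S.hsym 1 0 x hx y hy; simpa [sg_zero] using this

lemma sym11 (x y : V) (hx : x ∈ S.Vsub 1) (hy : y ∈ S.Vsub 1) : S.φ x y = - S.φ y x := by
  have := S.hsym 1 1 x hx y hy; simpa [sg_one] using this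

lemma brQ_zero (k : ℤ) (v : V) (hL : ∀ i, S.bV.repr v (iL i) = 0)
    (hQ : ∀ j, S.bV.repr v (iQ j) = 0) : S.br (S.Qv k) v = 0 := by
  apply S.eq_zero_of_repr
  rintro (((m | m) | (⟨⟩ | ⟨⟩)) | q)
  · rw [show (Sum.inl (Sum.inl (Sum.inl m)) : Idx) = iL m from rfl, S.reprBrQ_L]
  · rw [show (Sum.inl (Sum.inl (Sum.inr m)) : Idx) = iW m from rfl, S.reprBrQ_W]
    rw [hQ]; ring
  · rw [show (Sum.inl (Sum.inr (Sum.inl ())) : Idx) = iC1 from rfl, S.reprBrQ_C1]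
  · rw [show (Sum.inl (Sum.inr (Sum.inr ())) : Idx) = iC2 from rfl, S.reprBrQ_C2]
    rw [hQ]; ring
  · rw [show (Sum.inr q : Idx) = iQ q from rfl, S.reprBrQ_Q]
    rw [hL]; ring

/-! step 1 : φ(Q k, Q k) = 0 -/

lemma phiQQ_diag (k : ℤ) : S.φ (S.Qv k) (S.Qv k) = 0 := by
  have h := S.sym11 (S.Qv k) (S.Qv k) (S.memQ k) (S.memQ k)
  have h2 : (2:ℂ) • S.φ (S.Qv k) (S.Qv k) = 0 := by
    rw [two_smul]; nth_rewrite 1 [h]; abel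
  simpa using (smul_eq_zero.mp h2).resolve_left (by norm_num)

/-! step 2 -/

lemma brQ_phiL0Q (k : ℤ) : S.br (S.Qv k) (S.φ (S.Lv 0) (S.Qv k)) = 0 := by
  have h := S.hbd1 0 1 1 (S.Lv 0) (S.memL 0) (S.Qv k) (S.memQ k) (S.Qv k) (S.memQ k)
  rw [S.brLQ' 0 k, show (0:ℤ) + k = k from zero_add k] at h
  rw [map_smul, LinearMap.smul_apply, S.phiQQ_diag k] at h
  rw [show S.d * 0 = 0 from mul_zero _, show (1 : ZMod 2) * (S.d + 0) = S.d by ring,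
    sg_zero] at h
  simp only [smul_zero, map_zero, one_smul, zero_sub] at h
  have h2 : sg S.d • S.br (S.Qv k) (S.φ (S.Lv 0) (S.Qv k)) = 0 := by
    linear_combination (norm := module) h
  exact (smul_eq_zero.mp h2).resolve_left (sg_ne S.d)

/-! step 3 : the basic L0-equation for ψ(Q k) -/

lemma eqPsiQ (k : ℤ) :
    S.br (S.Lv 0) (S.φ (S.Qv k) (S.Lv 0)) + ((k:ℂ)+1/2) • S.φ (S.Qv k) (S.Lv 0)
      = sg S.d • S.br (S.Qv k) (S.φ (S.Lv 0) (S.Lv 0)) := by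
  have h := S.hbd1 0 1 0 (S.Lv 0) (S.memL 0) (S.Qv k) (S.memQ k) (S.Lv 0) (S.memL 0)
  rw [S.brLQ' 0 k, show (0:ℤ) + k = k from zero_add k] at h
  rw [map_smul, LinearMap.smul_apply] at h
  rw [show S.d * 0 = 0 from mul_zero _, show (1 : ZMod 2) * (S.d + 0) = S.d by ring,
    sg_zero, one_smul] at h
  push_cast at h
  linear_combination (norm := module) -h

lemma psiQ_L (k i : ℤ) : S.bV.repr (S.φ (S.Qv k) (S.Lv 0)) (iL i) = 0 := by
  have h := congrArg (fun v => S.bV.repr v (iL i)) (S.eqPsiQ k)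
  simp only [map_add, map_smul, Finsupp.add_apply, Finsupp.smul_apply, smul_eq_mul] at h
  rw [S.reprBrL_L 0 i, S.reprBrQ_L] at h
  rw [show i - 0 = i by ring] at h
  have h2 : (((k - i : ℤ):ℂ) + 1/2) * S.bV.repr (S.φ (S.Qv k) (S.Lv 0)) (iL i) = 0 := by
    push_cast
    push_cast at h
    linear_combination h
  exact (mul_eq_zero.mp h2).resolve_left (half_ne (k - i))

lemma psiQ_symm (k : ℤ) : S.φ (S.Lv 0) (S.Qv k) = S.φ (S.Qv k) (S.Lv 0) :=
  S.sym01 _ _ (S.memL 0) (S.memQ k)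

lemma psiQ_d0 (hd : S.d = 0) (k : ℤ) : S.φ (S.Qv k) (S.Lv 0) = 0 := by
  have hQc : ∀ j, S.bV.repr (S.φ (S.Qv k) (S.Lv 0)) (iQ j) = 0 := by
    intro j
    have h := congrArg (fun v => S.bV.repr v (iW (j + k + 1))) (S.brQ_phiL0Q k)
    simp only [map_zero, Finsupp.coe_zero, Pi.zero_apply] at h
    rw [S.reprBrQ_W, show j + k + 1 - k - 1 = j by ring, S.psiQ_symm k] at h
    rcases mul_eq_zero.mp h with hc | hv
    · norm_num at hc
    · exact hv
  have hmem : S.φ (S.Qv k) (S.Lv 0) ∈ S.Vsub 1 := by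
    have := S.hhom 1 0 (S.Qv k) (S.memQ k) (S.Lv 0) (S.memL 0)
    rwa [hd, show (1 : ZMod 2) + 0 + 0 = 1 from by decide] at this
  apply S.eq_zero_of_repr
  rintro (((m | m) | (⟨⟩ | ⟨⟩)) | q)
  · exact S.repr1 _ hmem _
  · exact S.repr1 _ hmem _
  · exact S.repr1 _ hmem _
  · exact S.repr1 _ hmem _
  · exact hQc q

lemma psiQ_Q_d1 (hd : S.d = 1) (k j : ℤ) :
    S.bV.repr (S.φ (S.Qv k) (S.Lv 0)) (iQ j) = 0 := by
  have hmem : S.φ (S.Qv k) (S.Lv 0) ∈ S.Vsub 0 := by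
    have := S.hhom 1 0 (S.Qv k) (S.memQ k) (S.Lv 0) (S.memL 0)
    rwa [hd, show (1 : ZMod 2) + 0 + 1 = 0 from by decide] at this
  exact S.repr0 _ hmem j

lemma brQ_psiQ (k l : ℤ) : S.br (S.Qv k) (S.φ (S.Qv l) (S.Lv 0)) = 0 := by
  rcases zmod_cases S.d with hd | hd
  · rw [S.psiQ_d0 hd l]; simp
  · exact S.brQ_zero k _ (S.psiQ_L l) (S.psiQ_Q_d1 hd l)

/-! step 4 : φ(Q k, Q l) = 0 -/

lemma X0 (k l : ℤ) : S.φ (S.Qv k) (S.Qv l) = 0 := by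
  rcases eq_or_ne k l with rfl | hkl
  · exact S.phiQQ_diag k
  · have hi : ∀ a b : ℤ, S.br (S.Lv 0) (S.φ (S.Qv a) (S.Qv b))
        = (-((a:ℂ)+1/2)) • S.φ (S.Qv a) (S.Qv b) := by
      intro a b
      have h := S.hbd1 0 1 1 (S.Lv 0) (S.memL 0) (S.Qv a) (S.memQ a) (S.Qv b) (S.memQ b)
      rw [S.brLQ' 0 a, show (0:ℤ) + a = a from zero_add a] at h
      rw [map_smul, LinearMap.smul_apply] at h
      rw [show S.d * 0 = 0 from mul_zero _, show (1 : ZMod 2) * (S.d + 0) = S.d by ring,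
        sg_zero, one_smul] at h
      rw [S.psiQ_symm b, S.brQ_psiQ a b] at h
      push_cast at h
      linear_combination (norm := module) -h
    have h1 := hi k l
    have h2 := hi l k
    have hs := S.sym11 (S.Qv l) (S.Qv k) (S.memQ l) (S.memQ k)
    rw [hs] at h2
    have h2' : S.br (S.Lv 0) (S.φ (S.Qv k) (S.Qv l))
        = (-((l:ℂ)+1/2)) • S.φ (S.Qv k) (S.Qv l) := by
      rw [map_neg] at h2
      linear_combination (norm := module) -h2
    have h3 : (((k : ℂ) - l)) • S.φ (S.Qv k) (S.Qv l) = 0 := by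
      linear_combination (norm := module) h1 - h2'
    have hk : ((k : ℂ) - l) ≠ 0 := by
      intro hc
      have hc2 : ((k - l : ℤ) : ℂ) = 0 := by push_cast; linear_combination hc
      have : k - l = 0 := by exact_mod_cast hc2
      exact hkl (by omega)
    simpa using (smul_eq_zero.mp h3).resolve_left hk

/-! step 5 : W-row and C2-row applied to Q -/

lemma WQ0 (s j : ℤ) : S.φ (S.Wv s) (S.Qv j) = 0 := by
  have h := S.hbd1 1 1 1 (S.Qv s) (S.memQ s) (S.Qv (-1)) (S.memQ (-1)) (S.Qv j) (S.memQ j)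
  rw [S.brQQ' s (-1)] at h
  have hcz : (if s + -1 + 1 = 0 then (((s:ℂ)+1/2)^2 - 1/4)/3 else 0) = 0 := by
    split_ifs with hc
    · have : s = 0 := by omega
      subst this; norm_num
    · rfl
  rw [hcz, zero_smul, add_zero, show s + -1 + 1 = s by ring] at h
  rw [S.X0 (-1) j, S.X0 s j] at h
  simp only [map_smul, map_zero, smul_zero, sub_zero, LinearMap.smul_apply] at h
  have h2 : (2:ℂ) • S.φ (S.Wv s) (S.Qv j) = 0 := h
  simpa using (smul_eq_zero.mp h2).resolve_left (by norm_num)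

lemma C2Q0 (j : ℤ) : S.φ S.C2v (S.Qv j) = 0 := by
  have h := S.hbd1 1 1 1 (S.Qv 1) (S.memQ 1) (S.Qv (-2)) (S.memQ (-2)) (S.Qv j) (S.memQ j)
  rw [S.brQQ' 1 (-2)] at h
  rw [S.X0 (-2) j, S.X0 1 j] at h
  simp only [map_smul, map_zero, smul_zero, sub_zero, map_add, LinearMap.add_apply,
    LinearMap.smul_apply] at h
  rw [if_pos (by norm_num : (1:ℤ) + -2 + 1 = 0)] at h
  rw [show (1:ℤ) + -2 + 1 = 0 by norm_num, S.WQ0 0 j] at h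
  have h2 : (((((1:ℤ):ℂ)+1/2)^2 - 1/4)/3) • S.φ S.C2v (S.Qv j) = 0 := by
    linear_combination (norm := module) h
  have hc : (((((1:ℤ):ℂ)+1/2)^2 - 1/4)/3) ≠ 0 := by norm_num
  simpa using (smul_eq_zero.mp h2).resolve_left hc

/-! step 6 : the Q-row on L: first constraints -/

lemma brQ_Y (k m l : ℤ) : S.br (S.Qv l) (S.φ (S.Qv k) (S.Lv m)) = 0 := by
  have h := S.hbd2 1 0 1 (S.Qv k) (S.memQ k) (S.Lv m) (S.memL m) (S.Qv l) (S.memQ l)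
  rw [S.brLQ' m l] at h
  rw [map_smul, S.X0 k (m+l), smul_zero, S.X0 k l] at h
  simp only [map_zero, smul_zero, zero_sub] at h
  rw [show (1 : ZMod 2) * (S.d + 1 + 0) = S.d + 1 by ring] at h
  have h2 : sg (S.d + 1) • S.br (S.Qv l) (S.φ (S.Qv k) (S.Lv m)) = 0 := by
    linear_combination (norm := module) h
  exact (smul_eq_zero.mp h2).resolve_left (sg_ne _)

lemma Y_L (k m i : ℤ) : S.bV.repr (S.φ (S.Qv k) (S.Lv m)) (iL i) = 0 := by
  set l : ℤ := if i = -1 then 0 else i with hl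
  have h := congrArg (fun v => S.bV.repr v (iQ (i + l))) (S.brQ_Y k m l)
  simp only [map_zero, Finsupp.coe_zero, Pi.zero_apply] at h
  rw [S.reprBrQ_Q, show i + l - l = i by ring] at h
  rcases mul_eq_zero.mp h with hc | hv
  · exfalso
    have hc2 : ((i - 2*l - 1 : ℤ) : ℂ) = 0 := by
      push_cast at hc ⊢
      linear_combination (-2 : ℂ) * hc
    have hz : i - 2*l - 1 = 0 := by exact_mod_cast hc2
    rcases eq_or_ne i (-1) with hi | hi
    · rw [hl, if_pos hi] at hz; omega
    · rw [hl, if_neg hi] at hz; omega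
  · exact hv

lemma Y_Q (k m j : ℤ) : S.bV.repr (S.φ (S.Qv k) (S.Lv m)) (iQ j) = 0 := by
  have h := congrArg (fun v => S.bV.repr v (iW (j + 0 + 1))) (S.brQ_Y k m 0)
  simp only [map_zero, Finsupp.coe_zero, Pi.zero_apply] at h
  rw [S.reprBrQ_W, show j + 0 + 1 - 0 - 1 = j by ring] at h
  rcases mul_eq_zero.mp h with hc | hv
  · norm_num at hc
  · exact hv

lemma Y_d0 (hd : S.d = 0) (k m : ℤ) : S.φ (S.Qv k) (S.Lv m) = 0 := by
  have hmem : S.φ (S.Qv k) (S.Lv m) ∈ S.Vsub 1 := by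
    have := S.hhom 1 0 (S.Qv k) (S.memQ k) (S.Lv m) (S.memL m)
    rwa [hd, show (1 : ZMod 2) + 0 + 0 = 1 from by decide] at this
  apply S.eq_zero_of_repr
  rintro (((a | a) | (⟨⟩ | ⟨⟩)) | q)
  · exact S.repr1 _ hmem _
  · exact S.repr1 _ hmem _
  · exact S.repr1 _ hmem _
  · exact S.repr1 _ hmem _
  · exact S.Y_Q k m q


/-! step 7 : the L0-equation for Y(k,n) -/

lemma eqY (k n : ℤ) :
    S.br (S.Lv 0) (S.φ (S.Qv k) (S.Lv n)) + (n:ℂ) • S.φ (S.Qv k) (S.Lv n)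
      = S.br (S.Lv n) (S.φ (S.Qv k) (S.Lv 0)) := by
  have h := S.hbd2 1 0 0 (S.Qv k) (S.memQ k) (S.Lv n) (S.memL n) (S.Lv 0) (S.memL 0)
  rw [S.brLL' n 0] at h
  have hz : (if n + 0 = 0 then ((n:ℂ)^3 - n)/12 else 0) = 0 := by
    split_ifs with hc
    · have : n = 0 := by omega
      subst this; norm_num
    · rfl
  rw [hz, zero_smul, add_zero, show n + 0 = n from add_zero n] at h
  rw [map_smul] at h
  rw [show (S.d + 1) * 0 = 0 from mul_zero _, show (0:ZMod 2) * (S.d + 1 + 0) = 0 by ring,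
    sg_zero, one_smul, one_smul] at h
  push_cast at h
  linear_combination (norm := module) h

/-! step 8 : the master symmetric relation (YD) -/

lemma YD (k m n : ℤ) :
    ((m:ℂ)/2 - ((k:ℂ)+1/2)) • S.φ (S.Qv (m+k)) (S.Lv n)
      - ((n:ℂ)/2 - ((k:ℂ)+1/2)) • S.φ (S.Qv (n+k)) (S.Lv m)
    = ((m:ℂ) - n) • S.φ (S.Qv k) (S.Lv (m+n))
      + (if m + n = 0 then ((m:ℂ)^3 - m)/12 else 0) • S.φ (S.Qv k) S.C1v := by
  have ha := S.hbd2 0 0 1 (S.Lv n) (S.memL n) (S.Lv m) (S.memL m) (S.Qv k) (S.memQ k)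
  rw [S.brLQ' m k, map_smul] at ha
  rw [show (S.d + 0) * 0 = 0 from mul_zero _, show (1:ZMod 2) * (S.d + 0 + 0) = S.d by ring,
    sg_zero, one_smul] at ha
  rw [S.sym01 (S.Lv n) (S.Qv (m+k)) (S.memL n) (S.memQ (m+k)),
      S.sym01 (S.Lv n) (S.Qv k) (S.memL n) (S.memQ k)] at ha
  have hb := S.hbd2 0 0 1 (S.Lv m) (S.memL m) (S.Lv n) (S.memL n) (S.Qv k) (S.memQ k)
  rw [S.brLQ' n k, map_smul] at hb
  rw [show (S.d + 0) * 0 = 0 from mul_zero _, show (1:ZMod 2) * (S.d + 0 + 0) = S.d by ring,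
    sg_zero, one_smul] at hb
  rw [S.sym01 (S.Lv m) (S.Qv (n+k)) (S.memL m) (S.memQ (n+k)),
      S.sym01 (S.Lv m) (S.Qv k) (S.memL m) (S.memQ k)] at hb
  rw [S.sym00 (S.Lv n) (S.Lv m) (S.memL n) (S.memL m)] at ha
  have hc := S.hbd2 1 0 0 (S.Qv k) (S.memQ k) (S.Lv m) (S.memL m) (S.Lv n) (S.memL n)
  rw [S.brLL' m n, map_add, map_smul, map_smul] at hc
  rw [show (S.d + 1) * 0 = 0 from mul_zero _, show (0:ZMod 2) * (S.d + 1 + 0) = 0 by ring,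
    sg_zero, one_smul, one_smul] at hc
  linear_combination (norm := module) ha - hb - hc

/-! step 9 : coordinate forms -/

lemma psiW (k i : ℤ) :
    (((k:ℂ)+1/2) - i) * S.bV.repr (S.φ (S.Qv k) (S.Lv 0)) (iW i)
      = sg S.d * (2 * S.bV.repr (S.φ (S.Lv 0) (S.Lv 0)) (iQ (i - k - 1))) := by
  have h := congrArg (fun v => S.bV.repr v (iW i)) (S.eqPsiQ k)
  simp only [map_add, map_smul, Finsupp.add_apply, Finsupp.smul_apply, smul_eq_mul] at h
  rw [S.reprBrL_W 0 i, S.reprBrQ_W k, show i - (0:ℤ) = i by ring] at h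
  push_cast at h
  linear_combination h

lemma Yoff (k n s : ℤ) :
    ((n:ℂ) - s) * S.bV.repr (S.φ (S.Qv k) (S.Lv n)) (iW s)
      = (2*(n:ℂ) - s) * S.bV.repr (S.φ (S.Qv k) (S.Lv 0)) (iW (s - n)) := by
  have h := congrArg (fun v => S.bV.repr v (iW s)) (S.eqY k n)
  simp only [map_add, map_smul, Finsupp.add_apply, Finsupp.smul_apply, smul_eq_mul] at h
  rw [S.reprBrL_W 0 s, S.reprBrL_W n s, show s - (0:ℤ) = s by ring] at h
  push_cast at h
  linear_combination h

/-! step 10 (d = 1) : N = 0 -/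

lemma nq0_d1 (hd : S.d = 1) (k : ℤ) :
    S.bV.repr (S.φ (S.Lv 0) (S.Lv 0)) (iQ (-k-1)) = 0 := by
  set u := S.bV.repr (S.φ (S.Lv 0) (S.Lv 0)) (iQ (-k-1)) with hu
  set w := S.bV.repr (S.φ (S.Qv k) (S.Lv 3)) (iW 3) with hw
  set A := S.bV.repr (S.φ (S.Qv (1+k)) (S.Lv 2)) (iW 3) with hA
  set B := S.bV.repr (S.φ (S.Qv (2+k)) (S.Lv 1)) (iW 3) with hB
  set C := S.bV.repr (S.φ (S.Qv (4+k)) (S.Lv (-1))) (iW 3) with hC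
  set D := S.bV.repr (S.φ (S.Qv (-1+k)) (S.Lv 4)) (iW 3) with hD
  set p1 := S.bV.repr (S.φ (S.Qv (1+k)) (S.Lv 0)) (iW 1) with hp1
  set p2 := S.bV.repr (S.φ (S.Qv (2+k)) (S.Lv 0)) (iW 2) with hp2
  set p3 := S.bV.repr (S.φ (S.Qv (4+k)) (S.Lv 0)) (iW 4) with hp3
  set p4 := S.bV.repr (S.φ (S.Qv (-1+k)) (S.Lv 0)) (iW (-1)) with hp4
  have E1 : ((k:ℂ)+1/2) * p1 = -2*u := by
    have h := S.psiW (1+k) 1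
    rw [hd, sg_one, show (1:ℤ) - (1+k) - 1 = -k-1 by ring] at h
    push_cast at h; linear_combination h
  have E4 : ((k:ℂ)+1/2) * p2 = -2*u := by
    have h := S.psiW (2+k) 2
    rw [hd, sg_one, show (2:ℤ) - (2+k) - 1 = -k-1 by ring] at h
    push_cast at h; linear_combination h
  have E6 : ((k:ℂ)+1/2) * p3 = -2*u := by
    have h := S.psiW (4+k) 4
    rw [hd, sg_one, show (4:ℤ) - (4+k) - 1 = -k-1 by ring] at h
    push_cast at h; linear_combination h
  have E8 : ((k:ℂ)+1/2) * p4 = -2*u := by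
    have h := S.psiW (-1+k) (-1)
    rw [hd, sg_one, show (-1:ℤ) - (-1+k) - 1 = -k-1 by ring] at h
    push_cast at h; linear_combination h
  have E2 : -A = p1 := by
    have h := S.Yoff (1+k) 2 3
    rw [show (3:ℤ) - 2 = 1 by ring] at h
    push_cast at h; linear_combination h
  have E3 : -2*B = -p2 := by
    have h := S.Yoff (2+k) 1 3
    rw [show (3:ℤ) - 1 = 2 by ring] at h
    push_cast at h; linear_combination h
  have E5 : -4*C = -5*p3 := by
    have h := S.Yoff (4+k) (-1) 3
    rw [show (3:ℤ) - -1 = 4 by ring] at h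
    push_cast at h; linear_combination h
  have E7 : D = 5*p4 := by
    have h := S.Yoff (-1+k) 4 3
    rw [show (3:ℤ) - 4 = -1 by ring] at h
    push_cast at h; linear_combination h
  have F1 : ((1:ℂ)/2 - ((k:ℂ)+1/2)) * A - ((1:ℂ) - ((k:ℂ)+1/2)) * B = -w := by
    have h := congrArg (fun v => S.bV.repr v (iW 3)) (S.YD k 1 2)
    simp only [map_add, map_sub, map_smul, Finsupp.add_apply, Finsupp.sub_apply,
      Finsupp.smul_apply, smul_eq_mul] at h
    rw [show (1:ℤ) + 2 = 3 by ring] at h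
    rw [if_neg (by norm_num : ¬ ((3:ℤ) = 0))] at h
    push_cast at h; linear_combination h
  have F2 : ((2:ℂ) - ((k:ℂ)+1/2)) * C - (-(1:ℂ)/2 - ((k:ℂ)+1/2)) * D = 5*w := by
    have h := congrArg (fun v => S.bV.repr v (iW 3)) (S.YD k 4 (-1))
    simp only [map_add, map_sub, map_smul, Finsupp.add_apply, Finsupp.sub_apply,
      Finsupp.smul_apply, smul_eq_mul] at h
    rw [show (4:ℤ) + -1 = 3 by ring] at h
    rw [if_neg (by norm_num : ¬ ((3:ℤ) = 0))] at h
    push_cast at h; linear_combination h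
  have H1 : ((k:ℂ)+1/2) * A = 2*u := by
    linear_combination -E1 - (((k:ℂ)+1/2))*E2
  have H2 : ((k:ℂ)+1/2) * B = -u := by
    linear_combination (1/2 : ℂ)*E4 - (((k:ℂ)+1/2)/2)*E3
  have H3 : ((k:ℂ)+1/2) * C = -(5/2)*u := by
    linear_combination (5/4 : ℂ)*E6 - (((k:ℂ)+1/2)/4)*E5
  have H4 : ((k:ℂ)+1/2) * D = -10*u := by
    linear_combination (5 : ℂ)*E8 + (((k:ℂ)+1/2))*E7
  have K1 : ((k:ℂ)+1/2) * w = (3*((k:ℂ)+1/2) - 2) * u := by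
    linear_combination (((k:ℂ)+1/2))*F1 - ((1:ℂ)/2 - ((k:ℂ)+1/2))*H1
      + ((1:ℂ) - ((k:ℂ)+1/2))*H2
  have K2 : ((k:ℂ)+1/2) * w = (-2 - (3/2)*((k:ℂ)+1/2)) * u := by
    linear_combination -(((k:ℂ)+1/2)/5)*F2 + (((2:ℂ) - ((k:ℂ)+1/2))/5)*H3
      + (((1:ℂ)/2 + ((k:ℂ)+1/2))/5)*H4
  have key : ((9:ℂ)/2) * (((k:ℂ)+1/2) * u) = 0 := by
    linear_combination K2 - K1
  have hne : ((k:ℂ)+1/2) ≠ 0 := half_ne k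
  have := (mul_eq_zero.mp key).resolve_left (by norm_num)
  exact (mul_eq_zero.mp this).resolve_left hne

lemma Nzero_d1 (hd : S.d = 1) : S.φ (S.Lv 0) (S.Lv 0) = 0 := by
  have hmem : S.φ (S.Lv 0) (S.Lv 0) ∈ S.Vsub 1 := by
    have := S.hhom 0 0 (S.Lv 0) (S.memL 0) (S.Lv 0) (S.memL 0)
    rwa [hd, show (0 : ZMod 2) + 0 + 1 = 1 from by decide] at this
  apply S.eq_zero_of_repr
  rintro (((m | m) | (⟨⟩ | ⟨⟩)) | q)
  · exact S.repr1 _ hmem _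
  · exact S.repr1 _ hmem _
  · exact S.repr1 _ hmem _
  · exact S.repr1 _ hmem _
  · have h := S.nq0_d1 hd (-q-1)
    rwa [show -(-q-1)-1 = q by ring] at h

lemma psiQ_d1 (hd : S.d = 1) (k : ℤ) : S.φ (S.Qv k) (S.Lv 0) = 0 := by
  have hvec : S.br (S.Lv 0) (S.φ (S.Qv k) (S.Lv 0))
      + ((k:ℂ)+1/2) • S.φ (S.Qv k) (S.Lv 0) = 0 := by
    have h := S.eqPsiQ k
    rw [S.Nzero_d1 hd] at h
    simpa using h
  apply S.eq_zero_of_repr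
  rintro (((m | m) | (⟨⟩ | ⟨⟩)) | q)
  · exact S.psiQ_L k m
  · -- W component
    have h := congrArg (fun v => S.bV.repr v (iW m)) hvec
    simp only [map_add, map_smul, Finsupp.add_apply, Finsupp.smul_apply, smul_eq_mul,
      Finsupp.coe_zero, Pi.zero_apply, map_zero] at h
    rw [S.reprBrL_W 0 m, show m - (0:ℤ) = m by ring] at h
    have h2 : (((k - m : ℤ):ℂ) + 1/2)
        * S.bV.repr (S.φ (S.Qv k) (S.Lv 0)) (iW m) = 0 := by
      push_cast; push_cast at h; linear_combination h
    exact (mul_eq_zero.mp h2).resolve_left (half_ne (k-m))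
  · have h := congrArg (fun v => S.bV.repr v iC1) hvec
    simp only [map_add, map_smul, Finsupp.add_apply, Finsupp.smul_apply, smul_eq_mul,
      Finsupp.coe_zero, Pi.zero_apply, map_zero] at h
    rw [S.reprBrL_C1 0] at h
    have h2 : (((k : ℤ):ℂ) + 1/2)
        * S.bV.repr (S.φ (S.Qv k) (S.Lv 0)) iC1 = 0 := by
      push_cast; push_cast at h; linear_combination h
    exact (mul_eq_zero.mp h2).resolve_left (half_ne k)
  · have h := congrArg (fun v => S.bV.repr v iC2) hvec
    simp only [map_add, map_smul, Finsupp.add_apply, Finsupp.smul_apply, smul_eq_mul,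
      Finsupp.coe_zero, Pi.zero_apply, map_zero] at h
    rw [S.reprBrL_C2 0] at h
    have h2 : (((k : ℤ):ℂ) + 1/2)
        * S.bV.repr (S.φ (S.Qv k) (S.Lv 0)) iC2 = 0 := by
      push_cast; push_cast at h; linear_combination h
    exact (mul_eq_zero.mp h2).resolve_left (half_ne k)
  · exact S.psiQ_Q_d1 hd k q

lemma Yoff0_d1 (hd : S.d = 1) (k n s : ℤ) (hs : s ≠ n) :
    S.bV.repr (S.φ (S.Qv k) (S.Lv n)) (iW s) = 0 := by
  have h := S.Yoff k n s
  rw [S.psiQ_d1 hd k] at h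
  simp only [map_zero, Finsupp.coe_zero, Pi.zero_apply, mul_zero] at h
  rcases mul_eq_zero.mp h with hc | hv
  · exfalso
    have : ((n - s : ℤ):ℂ) = 0 := by push_cast; linear_combination hc
    have : n - s = 0 := by exact_mod_cast this
    omega
  · exact hv

lemma Ydiag_zero_d1 (hd : S.d = 1) (k n m' n' : ℤ) (h1 : m' + n' = n) (h2 : n' ≠ n)
    (h3 : m' ≠ n) (h4 : n ≠ 0) (h5 : m' ≠ n') :
    S.bV.repr (S.φ (S.Qv k) (S.Lv n)) (iW n) = 0 := by
  have h := congrArg (fun v => S.bV.repr v (iW n)) (S.YD k m' n')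
  simp only [map_add, map_sub, map_smul, Finsupp.add_apply, Finsupp.sub_apply,
    Finsupp.smul_apply, smul_eq_mul] at h
  rw [h1] at h
  rw [if_neg h4] at h
  rw [S.Yoff0_d1 hd (m'+k) n' n (Ne.symm h2), S.Yoff0_d1 hd (n'+k) m' n (Ne.symm h3)] at h
  simp only [mul_zero, sub_zero, zero_mul, zero_sub, zero_smul, zero_add, mul_zero,
    neg_eq_zero] at h
  have h6 : ((m' - n' : ℤ):ℂ) ≠ 0 := by
    apply int_ne; omega
  have h7 : ((m':ℂ) - n') * S.bV.repr (S.φ (S.Qv k) (S.Lv n)) (iW n) = 0 := by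
    push_cast at h ⊢
    linear_combination -h
  rcases mul_eq_zero.mp h7 with hc | hv
  · exfalso; apply h6; push_cast; linear_combination hc
  · exact hv

lemma Y_d1 (hd : S.d = 1) (k n : ℤ) : S.φ (S.Qv k) (S.Lv n) = 0 := by
  rcases eq_or_ne n 0 with rfl | hn
  · exact S.psiQ_d1 hd k
  have hvec : S.br (S.Lv 0) (S.φ (S.Qv k) (S.Lv n))
      + (n:ℂ) • S.φ (S.Qv k) (S.Lv n) = 0 := by
    have h := S.eqY k n
    rw [S.psiQ_d1 hd k] at h
    simpa using h
  apply S.eq_zero_of_repr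
  rintro (((m | m) | (⟨⟩ | ⟨⟩)) | q)
  · exact S.Y_L k n m
  · rcases eq_or_ne m n with hm | hm
    · rw [hm]
      rcases eq_or_ne n (-1) with hn1 | hn1
      · rw [hn1]
        exact S.Ydiag_zero_d1 hd k (-1) 1 (-2) (by norm_num) (by norm_num) (by norm_num)
          (by norm_num) (by norm_num)
      · exact S.Ydiag_zero_d1 hd k n (2*n+1) (-n-1) (by ring) (by omega) (by omega) hn
          (by omega)
    · exact S.Yoff0_d1 hd k n m hm
  · have h := congrArg (fun v => S.bV.repr v iC1) hvec
    simp only [map_add, map_smul, Finsupp.add_apply, Finsupp.smul_apply, smul_eq_mul,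
      Finsupp.coe_zero, Pi.zero_apply, map_zero] at h
    rw [S.reprBrL_C1 0] at h
    have h2 : ((n : ℂ)) * S.bV.repr (S.φ (S.Qv k) (S.Lv n)) iC1 = 0 := by
      push_cast at h ⊢; linear_combination h
    exact (mul_eq_zero.mp h2).resolve_left (int_ne n hn)
  · have h := congrArg (fun v => S.bV.repr v iC2) hvec
    simp only [map_add, map_smul, Finsupp.add_apply, Finsupp.smul_apply, smul_eq_mul,
      Finsupp.coe_zero, Pi.zero_apply, map_zero] at h
    rw [S.reprBrL_C2 0] at h
    have h2 : ((n : ℂ)) * S.bV.repr (S.φ (S.Qv k) (S.Lv n)) iC2 = 0 := by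
      push_cast at h ⊢; linear_combination h
    exact (mul_eq_zero.mp h2).resolve_left (int_ne n hn)
  · exact S.Y_Q k n q

lemma Yzero (k n : ℤ) : S.φ (S.Qv k) (S.Lv n) = 0 := by
  rcases zmod_cases S.d with hd | hd
  · exact S.Y_d0 hd k n
  · exact S.Y_d1 hd k n


/-! step 11 : the L-L values -/

lemma brQ_T (k n m : ℤ) : S.br (S.Qv k) (S.φ (S.Lv n) (S.Lv m)) = 0 := by
  have ha := S.hbd2 0 0 1 (S.Lv n) (S.memL n) (S.Lv m) (S.memL m) (S.Qv k) (S.memQ k)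
  rw [S.brLQ' m k, map_smul] at ha
  rw [show (S.d + 0) * 0 = 0 from mul_zero _, show (1:ZMod 2) * (S.d + 0 + 0) = S.d by ring,
    sg_zero, one_smul] at ha
  rw [S.sym01 (S.Lv n) (S.Qv (m+k)) (S.memL n) (S.memQ (m+k)),
      S.sym01 (S.Lv n) (S.Qv k) (S.memL n) (S.memQ k)] at ha
  rw [S.Yzero (m+k) n, S.Yzero k n] at ha
  simp only [smul_zero, map_zero, zero_sub] at ha
  have h2 : sg S.d • S.br (S.Qv k) (S.φ (S.Lv n) (S.Lv m)) = 0 := by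
    linear_combination (norm := module) ha
  exact (smul_eq_zero.mp h2).resolve_left (sg_ne _)

lemma T_L (n m i : ℤ) : S.bV.repr (S.φ (S.Lv n) (S.Lv m)) (iL i) = 0 := by
  set l : ℤ := if i = -1 then 0 else i with hl
  have h := congrArg (fun v => S.bV.repr v (iQ (i + l))) (S.brQ_T l n m)
  simp only [map_zero, Finsupp.coe_zero, Pi.zero_apply] at h
  rw [S.reprBrQ_Q, show i + l - l = i by ring] at h
  rcases mul_eq_zero.mp h with hc | hv
  · exfalso
    have hc2 : ((i - 2*l - 1 : ℤ) : ℂ) = 0 := by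
      push_cast at hc ⊢
      linear_combination (-2 : ℂ) * hc
    have hz : i - 2*l - 1 = 0 := by exact_mod_cast hc2
    rcases eq_or_ne i (-1) with hi | hi
    · rw [hl, if_pos hi] at hz; omega
    · rw [hl, if_neg hi] at hz; omega
  · exact hv

lemma T_Q (n m j : ℤ) : S.bV.repr (S.φ (S.Lv n) (S.Lv m)) (iQ j) = 0 := by
  have h := congrArg (fun v => S.bV.repr v (iW (j + 0 + 1))) (S.brQ_T 0 n m)
  simp only [map_zero, Finsupp.coe_zero, Pi.zero_apply] at h
  rw [S.reprBrQ_W, show j + 0 + 1 - 0 - 1 = j by ring] at h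
  rcases mul_eq_zero.mp h with hc | hv
  · norm_num at hc
  · exact hv

lemma eqT (m n : ℤ) :
    S.br (S.Lv 0) (S.φ (S.Lv m) (S.Lv n)) + (n:ℂ) • S.φ (S.Lv m) (S.Lv n)
      = S.br (S.Lv n) (S.φ (S.Lv m) (S.Lv 0)) := by
  have h := S.hbd2 0 0 0 (S.Lv m) (S.memL m) (S.Lv n) (S.memL n) (S.Lv 0) (S.memL 0)
  rw [S.brLL' n 0] at h
  have hz : (if n + 0 = 0 then ((n:ℂ)^3 - n)/12 else 0) = 0 := by
    split_ifs with hc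
    · have : n = 0 := by omega
      subst this; norm_num
    · rfl
  rw [hz, zero_smul, add_zero, show n + 0 = n from add_zero n] at h
  rw [map_smul] at h
  rw [show (S.d + 0) * 0 = 0 from mul_zero _, show (0:ZMod 2) * (S.d + 0 + 0) = 0 by ring,
    sg_zero, one_smul, one_smul] at h
  push_cast at h
  linear_combination (norm := module) h

lemma EW (m n j : ℤ) :
    ((n:ℂ) - j) * S.bV.repr (S.φ (S.Lv m) (S.Lv n)) (iW j)
      = (2*(n:ℂ) - j) * S.bV.repr (S.φ (S.Lv m) (S.Lv 0)) (iW (j - n)) := by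
  have h := congrArg (fun v => S.bV.repr v (iW j)) (S.eqT m n)
  simp only [map_add, map_smul, Finsupp.add_apply, Finsupp.smul_apply, smul_eq_mul] at h
  rw [S.reprBrL_W 0 j, S.reprBrL_W n j, show j - (0:ℤ) = j by ring] at h
  push_cast at h
  linear_combination h

lemma symLL (m n : ℤ) : S.φ (S.Lv m) (S.Lv n) = S.φ (S.Lv n) (S.Lv m) :=
  S.sym00 _ _ (S.memL m) (S.memL n)

lemma rho0 (x : ℤ) : S.bV.repr (S.φ (S.Lv 0) (S.Lv 0)) (iW x) = 0 := by
  have e1 := S.EW 1 2 (x+3)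
  rw [show x + 3 - 2 = x + 1 by ring, S.symLL 1 0] at e1
  have e1' := S.EW 0 1 (x+1)
  rw [show x + 1 - 1 = x by ring] at e1'
  have e2 := S.EW 2 1 (x+3)
  rw [show x + 3 - 1 = x + 2 by ring, S.symLL 2 1, S.symLL 2 0] at e2
  have e2' := S.EW 0 2 (x+2)
  rw [show x + 2 - 2 = x by ring] at e2'
  push_cast at e1 e1' e2 e2'
  have key : (-4 : ℂ) * S.bV.repr (S.φ (S.Lv 0) (S.Lv 0)) (iW x) = 0 := by
    linear_combination (-(x:ℂ)*(2+(x:ℂ)))*e1 + ((2+(x:ℂ))*(1-(x:ℂ)))*e1'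
      + ((x:ℂ)*(1+(x:ℂ)))*e2 + ((1+(x:ℂ))^2)*e2'
  have := (mul_eq_zero.mp key).resolve_left (by norm_num)
  exact this

lemma Dg (m n : ℤ) :
    (-(m:ℂ)) * S.bV.repr (S.φ (S.Lv m) (S.Lv n)) (iW (m+n))
      = ((n:ℂ) - m) * S.bV.repr (S.φ (S.Lv 0) (S.Lv m)) (iW m) := by
  have h := S.EW m n (m+n)
  rw [show m + n - n = m by ring, S.symLL m 0] at h
  push_cast at h ⊢
  linear_combination h

lemma s_one : S.bV.repr (S.φ (S.Lv 0) (S.Lv 1)) (iW 1) = 0 := by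
  have d12 := S.Dg 1 2
  have d21 := S.Dg 2 1
  rw [show (2:ℤ) + 1 = 1 + 2 by ring, S.symLL 2 1] at d21
  have d13 := S.Dg 1 3
  have d31 := S.Dg 3 1
  rw [show (3:ℤ) + 1 = 1 + 3 by ring, S.symLL 3 1] at d31
  have d23 := S.Dg 2 3
  have d32 := S.Dg 3 2
  rw [show (3:ℤ) + 2 = 2 + 3 by ring, S.symLL 3 2] at d32
  push_cast at d12 d21 d13 d31 d23 d32
  have key : (6:ℂ) * S.bV.repr (S.φ (S.Lv 0) (S.Lv 1)) (iW 1) = 0 := by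
    linear_combination (-3 : ℂ)*d12 + (3/2 : ℂ)*d21 - (3/2 : ℂ)*d13 + (1/2 : ℂ)*d31 + (3/2 : ℂ)*d23 - d32
  have := (mul_eq_zero.mp key).resolve_left (by norm_num)
  exact this

lemma s_zero (n : ℤ) : S.bV.repr (S.φ (S.Lv 0) (S.Lv n)) (iW n) = 0 := by
  rcases eq_or_ne n 0 with rfl | h0
  · exact S.rho0 0
  rcases eq_or_ne n 1 with rfl | h1
  · exact S.s_one
  have d1n := S.Dg 1 n
  rw [S.s_one] at d1n
  have dn1 := S.Dg n 1
  rw [show n + 1 = 1 + n by ring, S.symLL n 1] at dn1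
  push_cast at d1n dn1
  have hX : S.bV.repr (S.φ (S.Lv 1) (S.Lv n)) (iW (1+n)) = 0 := by
    have h2 := mul_eq_zero.mp (by linear_combination d1n :
      (-1 : ℂ) * S.bV.repr (S.φ (S.Lv 1) (S.Lv n)) (iW (1+n)) = 0)
    rcases h2 with hc | hv
    · norm_num at hc
    · exact hv
  rw [hX, mul_zero] at dn1
  have h3 := mul_eq_zero.mp dn1.symm
  rcases h3 with hc | hv
  · exfalso
    have : ((1 - n : ℤ):ℂ) = 0 := by push_cast; linear_combination hc
    have : 1 - n = 0 := by exact_mod_cast this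
    omega
  · exact hv

lemma T0n (n : ℤ) (hn : n ≠ 0) : S.φ (S.Lv 0) (S.Lv n) = 0 := by
  have hvec := S.eqT 0 n
  apply S.eq_zero_of_repr
  rintro (((a | a) | (⟨⟩ | ⟨⟩)) | q)
  · exact S.T_L 0 n a
  · rcases eq_or_ne a n with ha | ha
    · rw [ha]; exact S.s_zero n
    · have h := S.EW 0 n a
      rw [S.rho0 (a - n), mul_zero] at h
      rcases mul_eq_zero.mp h with hc | hv
      · exfalso
        have : ((n - a : ℤ):ℂ) = 0 := by push_cast; linear_combination hc
        have : n - a = 0 := by exact_mod_cast this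
        omega
      · exact hv
  · have h := congrArg (fun v => S.bV.repr v iC1) hvec
    simp only [map_add, map_smul, Finsupp.add_apply, Finsupp.smul_apply, smul_eq_mul] at h
    rw [S.reprBrL_C1 0, S.reprBrL_C1 n, S.T_L 0 0 (-n)] at h
    have h2 : ((n : ℂ)) * S.bV.repr (S.φ (S.Lv 0) (S.Lv n)) iC1 = 0 := by
      push_cast at h ⊢; linear_combination h
    exact (mul_eq_zero.mp h2).resolve_left (int_ne n hn)
  · have h := congrArg (fun v => S.bV.repr v iC2) hvec
    simp only [map_add, map_smul, Finsupp.add_apply, Finsupp.smul_apply, smul_eq_mul] at h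
    rw [S.reprBrL_C2 0, S.reprBrL_C2 n, S.rho0 (-n)] at h
    have h2 : ((n : ℂ)) * S.bV.repr (S.φ (S.Lv 0) (S.Lv n)) iC2 = 0 := by
      push_cast at h ⊢; linear_combination h
    exact (mul_eq_zero.mp h2).resolve_left (int_ne n hn)
  · exact S.T_Q 0 n q

lemma N0 : S.φ (S.Lv 0) (S.Lv 0) = 0 := by
  have h := S.hbd1 0 0 0 (S.Lv 1) (S.memL 1) (S.Lv (-1)) (S.memL (-1)) (S.Lv 0) (S.memL 0)
  rw [S.brLL' 1 (-1)] at h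
  rw [show (1:ℤ) + -1 = 0 by ring] at h
  rw [if_pos rfl] at h
  rw [show ((((1:ℤ):ℂ))^3 - ((1:ℤ):ℂ))/12 = 0 by push_cast; ring, zero_smul, add_zero] at h
  rw [S.symLL (-1) 0, S.symLL 1 0, S.T0n (-1) (by norm_num), S.T0n 1 (by norm_num)] at h
  simp only [map_zero, smul_zero, sub_zero, map_add, map_smul, LinearMap.add_apply,
    LinearMap.smul_apply, zero_sub, neg_zero] at h
  have h2 : (((1:ℤ):ℂ) - ((-1:ℤ):ℂ)) • S.φ (S.Lv 0) (S.Lv 0) = 0 := h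
  have hc : (((1:ℤ):ℂ) - ((-1:ℤ):ℂ)) ≠ 0 := by push_cast; norm_num
  simpa using (smul_eq_zero.mp h2).resolve_left hc

lemma rowL0 (n : ℤ) : S.φ (S.Lv 0) (S.Lv n) = 0 := by
  rcases eq_or_ne n 0 with rfl | hn
  · exact S.N0
  · exact S.T0n n hn

lemma Toffdiag (m n : ℤ) (hn : n ≠ 0) (hmn : m ≠ n) : S.φ (S.Lv m) (S.Lv n) = 0 := by
  have hm0 : S.φ (S.Lv m) (S.Lv 0) = 0 := by rw [S.symLL m 0]; exact S.rowL0 m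
  have hvec : S.br (S.Lv 0) (S.φ (S.Lv m) (S.Lv n)) + (n:ℂ) • S.φ (S.Lv m) (S.Lv n) = 0 := by
    have h := S.eqT m n
    rw [hm0] at h
    simpa using h
  apply S.eq_zero_of_repr
  rintro (((a | a) | (⟨⟩ | ⟨⟩)) | q)
  · exact S.T_L m n a
  · rcases eq_or_ne a n with ha | ha
    · rw [ha]
      have h := S.EW n m n
      rw [S.symLL n 0, S.rowL0 n, S.symLL n m] at h
      simp only [map_zero, Finsupp.coe_zero, Pi.zero_apply, mul_zero] at h
      rcases mul_eq_zero.mp h with hc | hv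
      · exfalso
        have : ((m - n : ℤ):ℂ) = 0 := by push_cast; linear_combination hc
        have : m - n = 0 := by exact_mod_cast this
        omega
      · exact hv
    · have h := congrArg (fun v => S.bV.repr v (iW a)) hvec
      simp only [map_add, map_smul, Finsupp.add_apply, Finsupp.smul_apply, smul_eq_mul,
        Finsupp.coe_zero, Pi.zero_apply, map_zero] at h
      rw [S.reprBrL_W 0 a, show a - (0:ℤ) = a by ring] at h
      have h2 : (((n - a : ℤ)):ℂ) * S.bV.repr (S.φ (S.Lv m) (S.Lv n)) (iW a) = 0 := by
        push_cast at h ⊢; linear_combination h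
      exact (mul_eq_zero.mp h2).resolve_left (int_ne _ (by omega))
  · have h := congrArg (fun v => S.bV.repr v iC1) hvec
    simp only [map_add, map_smul, Finsupp.add_apply, Finsupp.smul_apply, smul_eq_mul,
      Finsupp.coe_zero, Pi.zero_apply, map_zero] at h
    rw [S.reprBrL_C1 0] at h
    have h2 : ((n:ℂ)) * S.bV.repr (S.φ (S.Lv m) (S.Lv n)) iC1 = 0 := by
      push_cast at h ⊢; linear_combination h
    exact (mul_eq_zero.mp h2).resolve_left (int_ne n hn)
  · have h := congrArg (fun v => S.bV.repr v iC2) hvec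
    simp only [map_add, map_smul, Finsupp.add_apply, Finsupp.smul_apply, smul_eq_mul,
      Finsupp.coe_zero, Pi.zero_apply, map_zero] at h
    rw [S.reprBrL_C2 0] at h
    have h2 : ((n:ℂ)) * S.bV.repr (S.φ (S.Lv m) (S.Lv n)) iC2 = 0 := by
      push_cast at h ⊢; linear_combination h
    exact (mul_eq_zero.mp h2).resolve_left (int_ne n hn)
  · exact S.T_Q m n q

lemma Tzero (m n : ℤ) : S.φ (S.Lv m) (S.Lv n) = 0 := by
  rcases eq_or_ne n 0 with rfl | hn
  · rw [S.symLL m 0]; exact S.rowL0 m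
  rcases eq_or_ne m n with rfl | hmn
  case inr.inl =>
    -- diagonal case, m = n ≠ 0
    have hbig := S.hbd1 0 0 0 (S.Lv (3*m)) (S.memL (3*m)) (S.Lv m) (S.memL m)
      (S.Lv m) (S.memL m)
    rw [S.brLL' (3*m) m] at hbig
    rw [if_neg (by omega : ¬ (3*m + m = 0))] at hbig
    rw [zero_smul, add_zero, map_smul, LinearMap.smul_apply] at hbig
    rw [S.Toffdiag (3*m+m) m hn (by omega), S.Toffdiag (3*m) m hn (by omega)] at hbig
    rw [show S.d * 0 = 0 from mul_zero _, show (0:ZMod 2) * (S.d + 0) = 0 by ring,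
      sg_zero, one_smul, one_smul] at hbig
    simp only [smul_zero, map_zero, sub_zero] at hbig
    -- hbig : 0 = br (L (3m)) (φ Lm Lm)
    have hWm : S.bV.repr (S.φ (S.Lv m) (S.Lv m)) (iW m) = 0 := by
      have h := congrArg (fun v => S.bV.repr v (iW (4*m))) hbig
      simp only [Finsupp.coe_zero, Pi.zero_apply, map_zero] at h
      rw [S.reprBrL_W (3*m) (4*m), show 4*m - 3*m = m by ring] at h
      have h2 : ((2*m:ℤ):ℂ) * S.bV.repr (S.φ (S.Lv m) (S.Lv m)) (iW m) = 0 := by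
        push_cast at h ⊢; linear_combination -h
      exact (mul_eq_zero.mp h2).resolve_left (int_ne _ (by omega))
    have hm0 : S.φ (S.Lv m) (S.Lv 0) = 0 := by rw [S.symLL m 0]; exact S.rowL0 m
    have hvec : S.br (S.Lv 0) (S.φ (S.Lv m) (S.Lv m)) + (m:ℂ) • S.φ (S.Lv m) (S.Lv m) = 0 := by
      have h := S.eqT m m
      rw [hm0] at h
      simpa using h
    apply S.eq_zero_of_repr
    rintro (((a | a) | (⟨⟩ | ⟨⟩)) | q)
    · exact S.T_L m m a
    · rcases eq_or_ne a m with ha | ha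
      · rw [ha]; exact hWm
      · have h := congrArg (fun v => S.bV.repr v (iW a)) hvec
        simp only [map_add, map_smul, Finsupp.add_apply, Finsupp.smul_apply, smul_eq_mul,
          Finsupp.coe_zero, Pi.zero_apply, map_zero] at h
        rw [S.reprBrL_W 0 a, show a - (0:ℤ) = a by ring] at h
        have h2 : (((m - a : ℤ)):ℂ) * S.bV.repr (S.φ (S.Lv m) (S.Lv m)) (iW a) = 0 := by
          push_cast at h ⊢; linear_combination h
        exact (mul_eq_zero.mp h2).resolve_left (int_ne _ (by omega))
    · have h := congrArg (fun v => S.bV.repr v iC1) hvec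
      simp only [map_add, map_smul, Finsupp.add_apply, Finsupp.smul_apply, smul_eq_mul,
        Finsupp.coe_zero, Pi.zero_apply, map_zero] at h
      rw [S.reprBrL_C1 0] at h
      have h2 : ((m:ℂ)) * S.bV.repr (S.φ (S.Lv m) (S.Lv m)) iC1 = 0 := by
        push_cast at h ⊢; linear_combination h
      exact (mul_eq_zero.mp h2).resolve_left (int_ne m hn)
    · have h := congrArg (fun v => S.bV.repr v iC2) hvec
      simp only [map_add, map_smul, Finsupp.add_apply, Finsupp.smul_apply, smul_eq_mul,
        Finsupp.coe_zero, Pi.zero_apply, map_zero] at h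
      rw [S.reprBrL_C2 0] at h
      have h2 : ((m:ℂ)) * S.bV.repr (S.φ (S.Lv m) (S.Lv m)) iC2 = 0 := by
        push_cast at h ⊢; linear_combination h
      exact (mul_eq_zero.mp h2).resolve_left (int_ne m hn)
    · exact S.T_Q m m q
  case inr.inr =>
    exact S.Toffdiag m n hn hmn

/-! step 12 : rows with C1 and assembly -/

lemma QC1 (k : ℤ) : S.φ (S.Qv k) S.C1v = 0 := by
  have h := S.hbd2 1 0 0 (S.Qv k) (S.memQ k) (S.Lv 2) (S.memL 2) (S.Lv (-2)) (S.memL (-2))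
  rw [S.brLL' 2 (-2)] at h
  rw [S.Yzero k 2, S.Yzero k (-2)] at h
  simp only [map_zero, smul_zero, sub_zero, map_add, map_smul] at h
  rw [show (2:ℤ) + -2 = 0 by ring, if_pos rfl, S.Yzero k 0] at h
  have h2 : (((((2:ℤ):ℂ))^3 - ((2:ℤ):ℂ))/12) • S.φ (S.Qv k) S.C1v = 0 := by
    linear_combination (norm := module) h
  have hc : (((((2:ℤ):ℂ))^3 - ((2:ℤ):ℂ))/12) ≠ 0 := by push_cast; norm_num
  simpa using (smul_eq_zero.mp h2).resolve_left hc

lemma LC1 (m : ℤ) : S.φ (S.Lv m) S.C1v = 0 := by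
  have h := S.hbd2 0 0 0 (S.Lv m) (S.memL m) (S.Lv 2) (S.memL 2) (S.Lv (-2)) (S.memL (-2))
  rw [S.brLL' 2 (-2)] at h
  rw [S.Tzero m 2, S.Tzero m (-2)] at h
  simp only [map_zero, smul_zero, sub_zero, map_add, map_smul] at h
  rw [show (2:ℤ) + -2 = 0 by ring, if_pos rfl, S.Tzero m 0] at h
  have h2 : (((((2:ℤ):ℂ))^3 - ((2:ℤ):ℂ))/12) • S.φ (S.Lv m) S.C1v = 0 := by
    linear_combination (norm := module) h
  have hc : (((((2:ℤ):ℂ))^3 - ((2:ℤ):ℂ))/12) ≠ 0 := by push_cast; norm_num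
  simpa using (smul_eq_zero.mp h2).resolve_left hc

lemma C1C1 : S.φ S.C1v S.C1v = 0 := by
  have h := S.hbd2 0 0 0 S.C1v S.memC1 (S.Lv 2) (S.memL 2) (S.Lv (-2)) (S.memL (-2))
  rw [S.brLL' 2 (-2)] at h
  rw [S.sym00 S.C1v (S.Lv (-2)) S.memC1 (S.memL (-2)), S.LC1 (-2)] at h
  rw [S.sym00 S.C1v (S.Lv 2) S.memC1 (S.memL 2), S.LC1 2] at h
  simp only [map_zero, smul_zero, sub_zero, map_add, map_smul] at h
  rw [show (2:ℤ) + -2 = 0 by ring, if_pos rfl] at h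
  rw [S.sym00 S.C1v (S.Lv 0) S.memC1 (S.memL 0), S.LC1 0] at h
  have h2 : (((((2:ℤ):ℂ))^3 - ((2:ℤ):ℂ))/12) • S.φ S.C1v S.C1v = 0 := by
    linear_combination (norm := module) h
  have hc : (((((2:ℤ):ℂ))^3 - ((2:ℤ):ℂ))/12) ≠ 0 := by push_cast; norm_num
  simpa using (smul_eq_zero.mp h2).resolve_left hc

lemma rowQ (k : ℤ) : S.φ (S.Qv k) = 0 := by
  apply S.bV.ext
  rintro (((m | m) | (⟨⟩ | ⟨⟩)) | q) <;> rw [LinearMap.zero_apply]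
  · exact S.Yzero k m
  · rw [show (S.bV (Sum.inl (Sum.inl (Sum.inr m))) : V) = S.Wv m from rfl]
    rw [S.sym10 (S.Qv k) (S.Wv m) (S.memQ k) (S.memW m)]
    exact S.WQ0 m k
  · exact S.QC1 k
  · rw [show (S.bV (Sum.inl (Sum.inr (Sum.inr ()))) : V) = S.C2v from rfl]
    rw [S.sym10 (S.Qv k) S.C2v (S.memQ k) S.memC2]
    exact S.C2Q0 k
  · exact S.X0 k q

lemma rowW_basis (s : ℤ) (idx : Idx) : S.φ (S.Wv s) (S.bV idx) = 0 := by
  have h := S.hbd1 1 1 (par idx) (S.Qv s) (S.memQ s) (S.Qv (-1)) (S.memQ (-1))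
    (S.bV idx) (S.membas idx)
  rw [S.brQQ' s (-1)] at h
  have hcz : (if s + -1 + 1 = 0 then (((s:ℂ)+1/2)^2 - 1/4)/3 else 0) = 0 := by
    split_ifs with hc
    · have : s = 0 := by omega
      subst this; norm_num
    · rfl
  rw [hcz, zero_smul, add_zero, show s + -1 + 1 = s by ring] at h
  rw [show S.φ (S.Qv (-1)) (S.bV idx) = 0 from by rw [S.rowQ]; rfl] at h
  rw [show S.φ (S.Qv s) (S.bV idx) = 0 from by rw [S.rowQ]; rfl] at h
  simp only [map_smul, map_zero, smul_zero, sub_zero, LinearMap.smul_apply] at h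
  have h2 : (2:ℂ) • S.φ (S.Wv s) (S.bV idx) = 0 := h
  simpa using (smul_eq_zero.mp h2).resolve_left (by norm_num)

lemma rowW (s : ℤ) : S.φ (S.Wv s) = 0 := by
  apply S.bV.ext
  intro idx
  rw [LinearMap.zero_apply]
  exact S.rowW_basis s idx

lemma rowC2_basis (idx : Idx) : S.φ S.C2v (S.bV idx) = 0 := by
  have h := S.hbd1 1 1 (par idx) (S.Qv 1) (S.memQ 1) (S.Qv (-2)) (S.memQ (-2))
    (S.bV idx) (S.membas idx)
  rw [S.brQQ' 1 (-2)] at h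
  rw [show S.φ (S.Qv (-2)) (S.bV idx) = 0 from by rw [S.rowQ]; rfl] at h
  rw [show S.φ (S.Qv 1) (S.bV idx) = 0 from by rw [S.rowQ]; rfl] at h
  simp only [map_smul, map_zero, smul_zero, sub_zero, map_add, LinearMap.add_apply,
    LinearMap.smul_apply] at h
  rw [if_pos (by norm_num : (1:ℤ) + -2 + 1 = 0)] at h
  rw [show ((1:ℤ) + -2 + 1) = 0 by norm_num] at h
  rw [show (S.φ (S.Wv 0)) (S.bV idx) = 0 from S.rowW_basis 0 idx] at h
  have h2 : (((((1:ℤ):ℂ)+1/2)^2 - 1/4)/3) • S.φ S.C2v (S.bV idx) = 0 := by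
    linear_combination (norm := module) h
  have hc : (((((1:ℤ):ℂ)+1/2)^2 - 1/4)/3) ≠ 0 := by push_cast; norm_num
  simpa using (smul_eq_zero.mp h2).resolve_left hc

lemma rowC2 : S.φ S.C2v = 0 := by
  apply S.bV.ext
  intro idx
  rw [LinearMap.zero_apply]
  exact S.rowC2_basis idx

lemma all_zero : ∀ x y : V, S.φ x y = 0 := by
  have hrows : ∀ idx, S.φ (S.bV idx) = 0 := by
    rintro (((m | m) | (⟨⟩ | ⟨⟩)) | k)
    · -- L row
      apply S.bV.ext
      rintro (((n | n) | (⟨⟩ | ⟨⟩)) | q) <;> rw [LinearMap.zero_apply]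
      · exact S.Tzero m n
      · show S.φ (S.Lv m) (S.Wv n) = 0
        rw [S.sym00 (S.Lv m) (S.Wv n) (S.memL m) (S.memW n)]
        exact S.rowW_basis n (iL m)
      · exact S.LC1 m
      · show S.φ (S.Lv m) S.C2v = 0
        rw [S.sym00 (S.Lv m) S.C2v (S.memL m) S.memC2]
        exact S.rowC2_basis (iL m)
      · show S.φ (S.Lv m) (S.Qv q) = 0
        rw [S.sym01 (S.Lv m) (S.Qv q) (S.memL m) (S.memQ q)]
        exact S.Yzero q m
    · exact S.rowW m
    · -- C1 row
      apply S.bV.ext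
      rintro (((n | n) | (⟨⟩ | ⟨⟩)) | q) <;> rw [LinearMap.zero_apply]
      · show S.φ S.C1v (S.Lv n) = 0
        rw [S.sym00 S.C1v (S.Lv n) S.memC1 (S.memL n)]
        exact S.LC1 n
      · show S.φ S.C1v (S.Wv n) = 0
        rw [S.sym00 S.C1v (S.Wv n) S.memC1 (S.memW n)]
        exact S.rowW_basis n iC1
      · exact S.C1C1
      · show S.φ S.C1v S.C2v = 0
        rw [S.sym00 S.C1v S.C2v S.memC1 S.memC2]
        exact S.rowC2_basis iC1
      · show S.φ S.C1v (S.Qv q) = 0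
        rw [S.sym01 S.C1v (S.Qv q) S.memC1 (S.memQ q)]
        exact S.QC1 q
    · exact S.rowC2
    · exact S.rowQ k
  have hφ : S.φ = 0 := by
    apply S.bV.ext
    intro idx
    rw [LinearMap.zero_apply]
    exact hrows idx
  intro x y
  rw [hφ]
  rfl

end Setup
end SBMS

theorem symmetric_superbiderivation_BMS3_trivial
    (V : Type) [AddCommGroup V] [Module ℂ V]
    (bV : Module.Basis (((ℤ ⊕ ℤ) ⊕ (Unit ⊕ Unit)) ⊕ ℤ) ℂ V)
    (br : V →ₗ[ℂ] V →ₗ[ℂ] V)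
    (L : ℤ → V) (W : ℤ → V) (C1 : V) (C2 : V) (Q : ℤ → V)
    (hLdef : ∀ m : ℤ, L m = bV (Sum.inl (Sum.inl (Sum.inl m))))
    (hWdef : ∀ m : ℤ, W m = bV (Sum.inl (Sum.inl (Sum.inr m))))
    (hC1def : C1 = bV (Sum.inl (Sum.inr (Sum.inl ()))))
    (hC2def : C2 = bV (Sum.inl (Sum.inr (Sum.inr ()))))
    (hQdef : ∀ k : ℤ, Q k = bV (Sum.inr k))
    (Vsub : ZMod 2 → Submodule ℂ V)
    (hV0 : Vsub 0 = Submodule.span ℂ (Set.range (fun i : (ℤ ⊕ ℤ) ⊕ (Unit ⊕ Unit) => bV (Sum.inl i))))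
    (hV1 : Vsub 1 = Submodule.span ℂ (Set.range (fun j : ℤ => bV (Sum.inr j))))
    (sgn : ZMod 2 → ℂ) (hsgn : ∀ p : ZMod 2, sgn p = if p = 1 then -1 else 1)
    (hLL : ∀ m n : ℤ, br (L m) (L n) = ((m : ℂ) - n) • L (m + n) +
      (if m + n = 0 then ((m : ℂ) ^ 3 - m) / 12 else 0) • C1)
    (hLW : ∀ m n : ℤ, br (L m) (W n) = ((m : ℂ) - n) • W (m + n) +
      (if m + n = 0 then ((m : ℂ) ^ 3 - m) / 12 else 0) • C2)
    (hQQ : ∀ k l : ℤ, br (Q k) (Q l) = (2 : ℂ) • W (k + l + 1) +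
      (if k + l + 1 = 0 then (((k : ℂ) + 1 / 2) ^ 2 - 1 / 4) / 3 else 0) • C2)
    (hLQ : ∀ m k : ℤ, br (L m) (Q k) = ((m : ℂ) / 2 - ((k : ℂ) + 1 / 2)) • Q (m + k))
    (hWW : ∀ m n : ℤ, br (W m) (W n) = 0)
    (hWQ : ∀ m k : ℤ, br (W m) (Q k) = 0)
    (hC1x : ∀ x : V, br C1 x = 0)
    (hC2x : ∀ x : V, br C2 x = 0)
    (hskew : ∀ p q : ZMod 2, ∀ x ∈ Vsub p, ∀ y ∈ Vsub q,
      br x y = (-(sgn (p * q))) • br y x)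
    (φ : V →ₗ[ℂ] V →ₗ[ℂ] V) (d : ZMod 2)
    (hhom : ∀ p q : ZMod 2, ∀ x ∈ Vsub p, ∀ y ∈ Vsub q, φ x y ∈ Vsub (p + q + d))
    (hbd1 : ∀ p q t : ZMod 2, ∀ x ∈ Vsub p, ∀ y ∈ Vsub q, ∀ z ∈ Vsub t,
      φ (br x y) z = sgn (d * p) • br x (φ y z) - sgn (q * (d + p)) • br y (φ x z))
    (hbd2 : ∀ p q t : ZMod 2, ∀ x ∈ Vsub p, ∀ y ∈ Vsub q, ∀ z ∈ Vsub t,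
      φ x (br y z) = sgn ((d + p) * q) • br y (φ x z) - sgn (t * (d + p + q)) • br z (φ x y))
    (hsym : ∀ p q : ZMod 2, ∀ x ∈ Vsub p, ∀ y ∈ Vsub q, φ x y = sgn (p * q) • φ y x) :
    ∀ x y : V, φ x y = 0 := by
  have hsg : sgn = SBMS.sg := funext fun p => hsgn p
  exact SBMS.Setup.all_zero
    { bV := bV, br := br, Vsub := Vsub, φ := φ, d := d,
      hV0 := hV0, hV1 := hV1,
      hLL := fun m n => by
        simpa only [SBMS.iL, SBMS.iC1, hLdef, hC1def] using hLL m n,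
      hLW := fun m n => by
        simpa only [SBMS.iL, SBMS.iW, SBMS.iC2, hLdef, hWdef, hC2def] using hLW m n,
      hQQ := fun k l => by
        simpa only [SBMS.iQ, SBMS.iW, SBMS.iC2, hQdef, hWdef, hC2def] using hQQ k l,
      hLQ := fun m k => by
        simpa only [SBMS.iL, SBMS.iQ, hLdef, hQdef] using hLQ m k,
      hWW := fun m n => by
        simpa only [SBMS.iW, hWdef] using hWW m n,
      hWQ := fun m k => by
        simpa only [SBMS.iW, SBMS.iQ, hWdef, hQdef] using hWQ m k,
      hC1x := fun x => by
        simpa only [SBMS.iC1, hC1def] using hC1x x,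
      hC2x := fun x => by
        simpa only [SBMS.iC2, hC2def] using hC2x x,
      hskew := by rw [← hsg]; exact hskew,
      hhom := hhom,
      hbd1 := by rw [← hsg]; exact hbd1,
      hbd2 := by rw [← hsg]; exact hbd2,
      hsym := by rw [← hsg]; exact hsym }
end

section
/- Every symmetric super-biderivation φ of the N=2 Ramond algebra 𝔑 (homogeneous of either ℤ/2-degree, with 𝔑 acting on itself by the adjoint action) is trivial, i.e. φ(x, y) = 0 for all x, y ∈ 𝔑. -/
namespace N2R

abbrev Idx : Type := ((ℤ ⊕ ℤ) ⊕ Unit) ⊕ (ℤ ⊕ ℤ)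

abbrev iL (m : ℤ) : Idx := Sum.inl (Sum.inl (Sum.inl m))
abbrev iH (m : ℤ) : Idx := Sum.inl (Sum.inl (Sum.inr m))
abbrev iC : Idx := Sum.inl (Sum.inr ())
abbrev iP (p : ℤ) : Idx := Sum.inr (Sum.inl p)
abbrev iM (p : ℤ) : Idx := Sum.inr (Sum.inr p)

/-- weight (ad L0 eigenvalue) of a basis vector -/
def wt : Idx → ℂ
  | Sum.inl (Sum.inl (Sum.inl m)) => -(m : ℂ)
  | Sum.inl (Sum.inl (Sum.inr m)) => -(m : ℂ)
  | Sum.inl (Sum.inr _) => 0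
  | Sum.inr (Sum.inl p) => -(p : ℂ)
  | Sum.inr (Sum.inr p) => -(p : ℂ)

/-- charge (ad H0 eigenvalue) of a basis vector -/
def ch : Idx → ℂ
  | Sum.inl _ => 0
  | Sum.inr (Sum.inl _) => 1
  | Sum.inr (Sum.inr _) => -1

@[simp] lemma wt_iL (m : ℤ) : wt (iL m) = -(m:ℂ) := rfl
@[simp] lemma wt_iH (m : ℤ) : wt (iH m) = -(m:ℂ) := rfl
@[simp] lemma wt_iC : wt iC = 0 := rfl
@[simp] lemma wt_iP (p : ℤ) : wt (iP p) = -(p:ℂ) := rfl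
@[simp] lemma wt_iM (p : ℤ) : wt (iM p) = -(p:ℂ) := rfl
@[simp] lemma ch_iL (m : ℤ) : ch (iL m) = 0 := rfl
@[simp] lemma ch_iH (m : ℤ) : ch (iH m) = 0 := rfl
@[simp] lemma ch_iC : ch iC = 0 := rfl
@[simp] lemma ch_iP (p : ℤ) : ch (iP p) = 1 := rfl
@[simp] lemma ch_iM (p : ℤ) : ch (iM p) = -1 := rfl

lemma zmod2_cases : ∀ p : ZMod 2, p = 0 ∨ p = 1 := by decide

structure Ctx (V : Type) [AddCommGroup V] [Module ℂ V] where
  bV : Module.Basis Idx ℂ V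
  br : V →ₗ[ℂ] V →ₗ[ℂ] V
  Vsub : ZMod 2 → Submodule ℂ V
  sgn : ZMod 2 → ℂ
  φ : V →ₗ[ℂ] V →ₗ[ℂ] V
  d : ZMod 2
  hV0 : Vsub 0 = Submodule.span ℂ (Set.range (fun i : (ℤ ⊕ ℤ) ⊕ Unit => bV (Sum.inl i)))
  hV1 : Vsub 1 = Submodule.span ℂ (Set.range (fun j : ℤ ⊕ ℤ => bV (Sum.inr j)))
  hsgn : ∀ p : ZMod 2, sgn p = if p = 1 then -1 else 1
  hLL : ∀ m n : ℤ, br (bV (iL m)) (bV (iL n)) = ((m : ℂ) - n) • bV (iL (m + n)) +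
      (if m + n = 0 then ((m : ℂ) ^ 3 - m) / 12 else 0) • bV iC
  hHH : ∀ m n : ℤ, br (bV (iH m)) (bV (iH n)) = (if m + n = 0 then (m : ℂ) / 3 else 0) • bV iC
  hLH : ∀ m n : ℤ, br (bV (iL m)) (bV (iH n)) = (-(n : ℂ)) • bV (iH (m + n))
  hLGp : ∀ m p : ℤ, br (bV (iL m)) (bV (iP p)) = ((m : ℂ) / 2 - p) • bV (iP (p + m))
  hLGm : ∀ m p : ℤ, br (bV (iL m)) (bV (iM p)) = ((m : ℂ) / 2 - p) • bV (iM (p + m))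
  hHGp : ∀ m p : ℤ, br (bV (iH m)) (bV (iP p)) = bV (iP (m + p))
  hHGm : ∀ m p : ℤ, br (bV (iH m)) (bV (iM p)) = -bV (iM (m + p))
  hGpGm : ∀ p q : ℤ, br (bV (iP p)) (bV (iM q)) = (2 : ℂ) • bV (iL (p + q)) +
      ((p : ℂ) - q) • bV (iH (p + q)) +
      (if p + q = 0 then ((p : ℂ) ^ 2 - 1 / 4) / 3 else 0) • bV iC
  hGpGp : ∀ p q : ℤ, br (bV (iP p)) (bV (iP q)) = 0
  hGmGm : ∀ p q : ℤ, br (bV (iM p)) (bV (iM q)) = 0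
  hxC : ∀ x : V, br x (bV iC) = 0
  hskew : ∀ p q : ZMod 2, ∀ x ∈ Vsub p, ∀ y ∈ Vsub q,
      br x y = (-(sgn (p * q))) • br y x
  hhom : ∀ p q : ZMod 2, ∀ x ∈ Vsub p, ∀ y ∈ Vsub q, φ x y ∈ Vsub (p + q + d)
  hbd1 : ∀ p q t : ZMod 2, ∀ x ∈ Vsub p, ∀ y ∈ Vsub q, ∀ z ∈ Vsub t,
      φ (br x y) z = sgn (d * p) • br x (φ y z) - sgn (q * (d + p)) • br y (φ x z)
  hbd2 : ∀ p q t : ZMod 2, ∀ x ∈ Vsub p, ∀ y ∈ Vsub q, ∀ z ∈ Vsub t,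
      φ x (br y z) = sgn ((d + p) * q) • br y (φ x z) - sgn (t * (d + p + q)) • br z (φ x y)
  hsym : ∀ p q : ZMod 2, ∀ x ∈ Vsub p, ∀ y ∈ Vsub q, φ x y = sgn (p * q) • φ y x

variable {V : Type} [AddCommGroup V] [Module ℂ V] (c : Ctx V)

namespace Ctx

/-- coordinates -/
noncomputable def co (v : V) (i : Idx) : ℂ := c.bV.repr v i

@[simp] lemma co_add (v w : V) (i : Idx) : c.co (v + w) i = c.co v i + c.co w i := by
  simp [co]
@[simp] lemma co_sub (v w : V) (i : Idx) : c.co (v - w) i = c.co v i - c.co w i := by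
  simp [co]
@[simp] lemma co_neg (v : V) (i : Idx) : c.co (-v) i = -c.co v i := by simp [co]
@[simp] lemma co_zero (i : Idx) : c.co 0 i = 0 := by simp [co]
@[simp] lemma co_smul (a : ℂ) (v : V) (i : Idx) : c.co (a • v) i = a * c.co v i := by
  simp [co]
@[simp] lemma co_basis (j i : Idx) : c.co (c.bV j) i = if j = i then 1 else 0 := by
  simp [co, Module.Basis.repr_self, Finsupp.single_apply]

lemma ext_co {v w : V} (h : ∀ i, c.co v i = c.co w i) : v = w := by
  apply c.bV.repr.injective
  ext i
  exact h i

lemma eq_zero_of_co {v : V} (h : ∀ i, c.co v i = 0) : v = 0 := by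
  apply c.ext_co
  simpa using h

lemma sgn_zero : c.sgn 0 = 1 := by rw [c.hsgn]; norm_num
lemma sgn_one : c.sgn 1 = -1 := by rw [c.hsgn]; norm_num
lemma sgn_ne_zero (p : ZMod 2) : c.sgn p ≠ 0 := by
  rcases zmod2_cases p with h | h <;> rw [h]
  · rw [c.sgn_zero]; norm_num
  · rw [c.sgn_one]; norm_num

-- memberships
lemma memL (m : ℤ) : c.bV (iL m) ∈ c.Vsub 0 := by
  rw [c.hV0]; exact Submodule.subset_span ⟨Sum.inl (Sum.inl m), rfl⟩
lemma memH (m : ℤ) : c.bV (iH m) ∈ c.Vsub 0 := by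
  rw [c.hV0]; exact Submodule.subset_span ⟨Sum.inl (Sum.inr m), rfl⟩
lemma memC : c.bV iC ∈ c.Vsub 0 := by
  rw [c.hV0]; exact Submodule.subset_span ⟨Sum.inr (), rfl⟩
lemma memP (p : ℤ) : c.bV (iP p) ∈ c.Vsub 1 := by
  rw [c.hV1]; exact Submodule.subset_span ⟨Sum.inl p, rfl⟩
lemma memM (p : ℤ) : c.bV (iM p) ∈ c.Vsub 1 := by
  rw [c.hV1]; exact Submodule.subset_span ⟨Sum.inr p, rfl⟩

/-- coordinates of an even element at odd indices vanish -/
lemma even_co {v : V} (hv : v ∈ c.Vsub 0) (j : ℤ ⊕ ℤ) : c.co v (Sum.inr j) = 0 := by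
  rw [c.hV0] at hv
  have : Submodule.span ℂ (Set.range (fun i : (ℤ ⊕ ℤ) ⊕ Unit => c.bV (Sum.inl i))) ≤
      LinearMap.ker (c.bV.coord (Sum.inr j)) := by
    rw [Submodule.span_le]
    rintro x ⟨i, rfl⟩
    simp [LinearMap.mem_ker, Module.Basis.coord_apply, Module.Basis.repr_self, Finsupp.single_apply]
  have := this hv
  simpa [LinearMap.mem_ker, Module.Basis.coord_apply, co] using this

lemma odd_co {v : V} (hv : v ∈ c.Vsub 1) (j : (ℤ ⊕ ℤ) ⊕ Unit) : c.co v (Sum.inl j) = 0 := by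
  rw [c.hV1] at hv
  have : Submodule.span ℂ (Set.range (fun i : ℤ ⊕ ℤ => c.bV (Sum.inr i))) ≤
      LinearMap.ker (c.bV.coord (Sum.inl j)) := by
    rw [Submodule.span_le]
    rintro x ⟨i, rfl⟩
    simp [LinearMap.mem_ker, Module.Basis.coord_apply, Module.Basis.repr_self, Finsupp.single_apply]
  have := this hv
  simpa [LinearMap.mem_ker, Module.Basis.coord_apply, co] using this

end Ctx

end N2R
namespace N2R
namespace Ctx
variable {V : Type} [AddCommGroup V] [Module ℂ V] (c : Ctx V)

-- skew-derived brackets (basis on the left)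
lemma br_Gp_L (q k : ℤ) :
    c.br (c.bV (iP q)) (c.bV (iL k)) = ((q:ℂ) - (k:ℂ)/2) • c.bV (iP (q + k)) := by
  rw [c.hskew 1 0 _ (c.memP q) _ (c.memL k)]
  rw [c.hLGp, mul_zero, c.sgn_zero, smul_smul]
  rw [show q + k = k + q from by ring, show (-1 : ℂ) * ((k:ℂ)/2 - q) = (q:ℂ) - (k:ℂ)/2 from by ring]

lemma br_Gp_H (q k : ℤ) :
    c.br (c.bV (iP q)) (c.bV (iH k)) = -c.bV (iP (q + k)) := by
  rw [c.hskew 1 0 _ (c.memP q) _ (c.memH k)]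
  rw [c.hHGp, mul_zero, c.sgn_zero]
  rw [show q + k = k + q from by ring]
  simp

lemma br_Gm_L (q k : ℤ) :
    c.br (c.bV (iM q)) (c.bV (iL k)) = ((q:ℂ) - (k:ℂ)/2) • c.bV (iM (q + k)) := by
  rw [c.hskew 1 0 _ (c.memM q) _ (c.memL k)]
  rw [c.hLGm, mul_zero, c.sgn_zero, smul_smul]
  rw [show q + k = k + q from by ring, show (-1 : ℂ) * ((k:ℂ)/2 - q) = (q:ℂ) - (k:ℂ)/2 from by ring]

lemma br_Gm_H (q k : ℤ) :
    c.br (c.bV (iM q)) (c.bV (iH k)) = c.bV (iM (q + k)) := by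
  rw [c.hskew 1 0 _ (c.memM q) _ (c.memH k)]
  rw [c.hHGm, mul_zero, c.sgn_zero]
  rw [show q + k = k + q from by ring]
  simp

lemma br_Gm_Gp (q s : ℤ) :
    c.br (c.bV (iM q)) (c.bV (iP s)) = c.br (c.bV (iP s)) (c.bV (iM q)) := by
  rw [c.hskew 1 1 _ (c.memM q) _ (c.memP s), mul_one, c.sgn_one]
  simp

lemma br_H_L (m k : ℤ) :
    c.br (c.bV (iH m)) (c.bV (iL k)) = (m:ℂ) • c.bV (iH (m + k)) := by
  rw [c.hskew 0 0 _ (c.memH m) _ (c.memL k)]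
  rw [c.hLH, mul_zero, c.sgn_zero, smul_smul]
  rw [show m + k = k + m from by ring, show (-1 : ℂ) * (-(m:ℂ)) = (m:ℂ) from by ring]

lemma br_Cc (v : V) : c.br (c.bV iC) v = 0 := by
  have h : (c.br (c.bV iC)) = (0 : V →ₗ[ℂ] V) := by
    apply c.bV.ext
    intro j
    rcases j with (j | j)
    · rw [c.hskew 0 0 _ c.memC _ (by rw [c.hV0]; exact Submodule.subset_span ⟨j, rfl⟩)]
      simp [c.hxC]
    · rw [c.hskew 0 1 _ c.memC _ (by rw [c.hV1]; exact Submodule.subset_span ⟨j, rfl⟩)]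
      simp [c.hxC]
  rw [h]; rfl

end Ctx
end N2R
namespace N2R
namespace Ctx
variable {V : Type} [AddCommGroup V] [Module ℂ V] (c : Ctx V)

lemma co_br_L_iL (m n : ℤ) (v : V) :
    c.co (c.br (c.bV (iL m)) v) (iL n) = (2*(m:ℂ) - n) * c.co v (iL (n - m)) := by
  have h : (c.bV.coord (iL n)).comp (c.br (c.bV (iL m)))
      = (2*(m:ℂ) - n) • c.bV.coord (iL (n - m)) := by
    apply c.bV.ext
    rintro (((k|k)|u)|(k|k)) <;>
      simp only [LinearMap.comp_apply, LinearMap.smul_apply, Module.Basis.coord_apply,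
        c.hLL, c.hLH, c.hLGp, c.hLGm, map_add, map_smul, map_neg, map_zero,
        Module.Basis.repr_self, Finsupp.smul_apply, Finsupp.add_apply, Finsupp.neg_apply,
        Finsupp.single_apply, smul_eq_mul]
    · by_cases h1 : m + k = n
      · have h2 : k = n - m := by omega
        simp [h1, h2]; ring
      · have h2 : ¬ (k = n - m) := by omega
        simp [h1, h2]
    · simp
    · simp [c.hxC]
    · simp
    · simp
  have := LinearMap.congr_fun h v
  simpa [co, Module.Basis.coord_apply] using this

lemma co_br_L_iH (m n : ℤ) (v : V) :
    c.co (c.br (c.bV (iL m)) v) (iH n) = ((m:ℂ) - n) * c.co v (iH (n - m)) := by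
  have h : (c.bV.coord (iH n)).comp (c.br (c.bV (iL m)))
      = ((m:ℂ) - n) • c.bV.coord (iH (n - m)) := by
    apply c.bV.ext
    rintro (((k|k)|u)|(k|k)) <;>
      simp only [LinearMap.comp_apply, LinearMap.smul_apply, Module.Basis.coord_apply,
        c.hLL, c.hLH, c.hLGp, c.hLGm, map_add, map_smul, map_neg, map_zero,
        Module.Basis.repr_self, Finsupp.smul_apply, Finsupp.add_apply, Finsupp.neg_apply,
        Finsupp.single_apply, smul_eq_mul]
    · simp
    · by_cases h1 : m + k = n
      · have h2 : k = n - m := by omega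
        have h3 : (-(k:ℂ)) = (m:ℂ) - n := by
          have : (n:ℂ) = (m:ℂ) + k := by rw [← h1]; push_cast; ring
          rw [this]; ring
        simp [h1, h2, h3]
      · have h2 : ¬ (k = n - m) := by omega
        simp [h1, h2]
    · simp [c.hxC]
    · simp
    · simp
  have := LinearMap.congr_fun h v
  simpa [co, Module.Basis.coord_apply] using this

lemma co_br_L_iP (m t : ℤ) (v : V) :
    c.co (c.br (c.bV (iL m)) v) (iP t) = (3*(m:ℂ)/2 - t) * c.co v (iP (t - m)) := by
  have h : (c.bV.coord (iP t)).comp (c.br (c.bV (iL m)))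
      = (3*(m:ℂ)/2 - t) • c.bV.coord (iP (t - m)) := by
    apply c.bV.ext
    rintro (((k|k)|u)|(k|k)) <;>
      simp only [LinearMap.comp_apply, LinearMap.smul_apply, Module.Basis.coord_apply,
        c.hLL, c.hLH, c.hLGp, c.hLGm, map_add, map_smul, map_neg, map_zero,
        Module.Basis.repr_self, Finsupp.smul_apply, Finsupp.add_apply, Finsupp.neg_apply,
        Finsupp.single_apply, smul_eq_mul]
    · simp
    · simp
    · simp [c.hxC]
    · by_cases h1 : k + m = t
      · have h2 : k = t - m := by omega
        simp [h1, h2]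
        push_cast
        ring
      · have h2 : ¬ (k = t - m) := by omega
        simp [h1, h2]
    · simp
  have := LinearMap.congr_fun h v
  simpa [co, Module.Basis.coord_apply] using this

lemma co_br_L_iM (m t : ℤ) (v : V) :
    c.co (c.br (c.bV (iL m)) v) (iM t) = (3*(m:ℂ)/2 - t) * c.co v (iM (t - m)) := by
  have h : (c.bV.coord (iM t)).comp (c.br (c.bV (iL m)))
      = (3*(m:ℂ)/2 - t) • c.bV.coord (iM (t - m)) := by
    apply c.bV.ext
    rintro (((k|k)|u)|(k|k)) <;>
      simp only [LinearMap.comp_apply, LinearMap.smul_apply, Module.Basis.coord_apply,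
        c.hLL, c.hLH, c.hLGp, c.hLGm, map_add, map_smul, map_neg, map_zero,
        Module.Basis.repr_self, Finsupp.smul_apply, Finsupp.add_apply, Finsupp.neg_apply,
        Finsupp.single_apply, smul_eq_mul]
    · simp
    · simp
    · simp [c.hxC]
    · simp
    · by_cases h1 : k + m = t
      · have h2 : k = t - m := by omega
        simp [h1, h2]
        push_cast
        ring
      · have h2 : ¬ (k = t - m) := by omega
        simp [h1, h2]
  have := LinearMap.congr_fun h v
  simpa [co, Module.Basis.coord_apply] using this

lemma co_br_L_iC (m : ℤ) (v : V) :
    c.co (c.br (c.bV (iL m)) v) iC = (((m:ℂ)^3 - m)/12) * c.co v (iL (-m)) := by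
  have h : (c.bV.coord iC).comp (c.br (c.bV (iL m)))
      = (((m:ℂ)^3 - m)/12) • c.bV.coord (iL (-m)) := by
    apply c.bV.ext
    rintro (((k|k)|u)|(k|k)) <;>
      simp only [LinearMap.comp_apply, LinearMap.smul_apply, Module.Basis.coord_apply,
        c.hLL, c.hLH, c.hLGp, c.hLGm, map_add, map_smul, map_neg, map_zero,
        Module.Basis.repr_self, Finsupp.smul_apply, Finsupp.add_apply, Finsupp.neg_apply,
        Finsupp.single_apply, smul_eq_mul]
    · by_cases h1 : m + k = 0
      · have h2 : k = -m := by omega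
        simp [h1, h2]
      · have h2 : ¬ (k = -m) := by omega
        simp [h1, h2]
    · simp
    · simp [c.hxC]
    · simp
    · simp
  have := LinearMap.congr_fun h v
  simpa [co, Module.Basis.coord_apply] using this

end Ctx
end N2R
namespace N2R
namespace Ctx
variable {V : Type} [AddCommGroup V] [Module ℂ V] (c : Ctx V)

lemma co_br_H_iL (m n : ℤ) (v : V) : c.co (c.br (c.bV (iH m)) v) (iL n) = 0 := by
  have h : (c.bV.coord (iL n)).comp (c.br (c.bV (iH m))) = 0 := by
    apply c.bV.ext
    rintro (((k|k)|u)|(k|k)) <;>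
      simp only [LinearMap.comp_apply, LinearMap.zero_apply, Module.Basis.coord_apply,
        c.hHH, c.hHGp, c.hHGm, c.br_H_L, map_add, map_smul, map_neg, map_zero,
        Module.Basis.repr_self, Finsupp.smul_apply, Finsupp.add_apply, Finsupp.neg_apply,
        Finsupp.single_apply, smul_eq_mul] <;>
      simp [c.hxC]
  have := LinearMap.congr_fun h v
  simpa [co, Module.Basis.coord_apply] using this

lemma co_br_H_iH (m n : ℤ) (v : V) :
    c.co (c.br (c.bV (iH m)) v) (iH n) = (m:ℂ) * c.co v (iL (n - m)) := by
  have h : (c.bV.coord (iH n)).comp (c.br (c.bV (iH m))) = (m:ℂ) • c.bV.coord (iL (n - m)) := by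
    apply c.bV.ext
    rintro (((k|k)|u)|(k|k)) <;>
      simp only [LinearMap.comp_apply, LinearMap.smul_apply, Module.Basis.coord_apply,
        c.hHH, c.hHGp, c.hHGm, c.br_H_L, map_add, map_smul, map_neg, map_zero,
        Module.Basis.repr_self, Finsupp.smul_apply, Finsupp.add_apply, Finsupp.neg_apply,
        Finsupp.single_apply, smul_eq_mul]
    · by_cases h1 : m + k = n
      · have h2 : k = n - m := by omega
        simp [h1, h2]
      · have h2 : ¬ (k = n - m) := by omega
        simp [h1, h2]
    · simp
    · simp [c.hxC]
    · simp
    · simp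
  have := LinearMap.congr_fun h v
  simpa [co, Module.Basis.coord_apply] using this

lemma co_br_H_iC (m : ℤ) (v : V) :
    c.co (c.br (c.bV (iH m)) v) iC = ((m:ℂ)/3) * c.co v (iH (-m)) := by
  have h : (c.bV.coord iC).comp (c.br (c.bV (iH m))) = ((m:ℂ)/3) • c.bV.coord (iH (-m)) := by
    apply c.bV.ext
    rintro (((k|k)|u)|(k|k)) <;>
      simp only [LinearMap.comp_apply, LinearMap.smul_apply, Module.Basis.coord_apply,
        c.hHH, c.hHGp, c.hHGm, c.br_H_L, map_add, map_smul, map_neg, map_zero,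
        Module.Basis.repr_self, Finsupp.smul_apply, Finsupp.add_apply, Finsupp.neg_apply,
        Finsupp.single_apply, smul_eq_mul]
    · simp
    · by_cases h1 : m + k = 0
      · have h2 : k = -m := by omega
        simp [h1, h2]
      · have h2 : ¬ (k = -m) := by omega
        simp [h1, h2]
    · simp [c.hxC]
    · simp
    · simp
  have := LinearMap.congr_fun h v
  simpa [co, Module.Basis.coord_apply] using this

lemma co_br_H_iP (m t : ℤ) (v : V) :
    c.co (c.br (c.bV (iH m)) v) (iP t) = c.co v (iP (t - m)) := by
  have h : (c.bV.coord (iP t)).comp (c.br (c.bV (iH m))) = c.bV.coord (iP (t - m)) := by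
    apply c.bV.ext
    rintro (((k|k)|u)|(k|k)) <;>
      simp only [LinearMap.comp_apply, Module.Basis.coord_apply,
        c.hHH, c.hHGp, c.hHGm, c.br_H_L, map_add, map_smul, map_neg, map_zero,
        Module.Basis.repr_self, Finsupp.smul_apply, Finsupp.add_apply, Finsupp.neg_apply,
        Finsupp.single_apply, smul_eq_mul]
    · simp
    · simp
    · simp [c.hxC]
    · by_cases h1 : m + k = t
      · have h2 : k = t - m := by omega
        simp [h1, h2]
      · have h2 : ¬ (k = t - m) := by omega
        simp [h1, h2]
    · simp
  have := LinearMap.congr_fun h v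
  simpa [co, Module.Basis.coord_apply] using this

lemma co_br_H_iM (m t : ℤ) (v : V) :
    c.co (c.br (c.bV (iH m)) v) (iM t) = -c.co v (iM (t - m)) := by
  have h : (c.bV.coord (iM t)).comp (c.br (c.bV (iH m))) = -c.bV.coord (iM (t - m)) := by
    apply c.bV.ext
    rintro (((k|k)|u)|(k|k)) <;>
      simp only [LinearMap.comp_apply, LinearMap.neg_apply, Module.Basis.coord_apply,
        c.hHH, c.hHGp, c.hHGm, c.br_H_L, map_add, map_smul, map_neg, map_zero,
        Module.Basis.repr_self, Finsupp.smul_apply, Finsupp.add_apply, Finsupp.neg_apply,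
        Finsupp.single_apply, smul_eq_mul]
    · simp
    · simp
    · simp [c.hxC]
    · simp
    · by_cases h1 : m + k = t
      · have h2 : k = t - m := by omega
        simp [h1, h2]
      · have h2 : ¬ (k = t - m) := by omega
        simp [h1, h2]
  have := LinearMap.congr_fun h v
  simpa [co, Module.Basis.coord_apply] using this

end Ctx
end N2R
namespace N2R
namespace Ctx
variable {V : Type} [AddCommGroup V] [Module ℂ V] (c : Ctx V)

lemma co_br_Gp_iL (q n : ℤ) (v : V) :
    c.co (c.br (c.bV (iP q)) v) (iL n) = 2 * c.co v (iM (n - q)) := by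
  have h : (c.bV.coord (iL n)).comp (c.br (c.bV (iP q))) = (2:ℂ) • c.bV.coord (iM (n - q)) := by
    apply c.bV.ext
    rintro (((k|k)|u)|(k|k)) <;>
      simp only [LinearMap.comp_apply, LinearMap.smul_apply, Module.Basis.coord_apply,
        c.br_Gp_L, c.br_Gp_H, c.hGpGp, c.hGpGm, map_add, map_smul, map_neg, map_zero,
        Module.Basis.repr_self, Finsupp.smul_apply, Finsupp.add_apply, Finsupp.neg_apply,
        Finsupp.single_apply, smul_eq_mul]
    · simp
    · simp
    · simp [c.hxC]
    · simp
    · by_cases h1 : q + k = n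
      · have h2 : k = n - q := by omega
        simp [h1, h2]
      · have h2 : ¬ (k = n - q) := by omega
        simp [h1, h2]
  have := LinearMap.congr_fun h v
  simpa [co, Module.Basis.coord_apply] using this

lemma co_br_Gp_iH (q n : ℤ) (v : V) :
    c.co (c.br (c.bV (iP q)) v) (iH n) = (2*(q:ℂ) - n) * c.co v (iM (n - q)) := by
  have h : (c.bV.coord (iH n)).comp (c.br (c.bV (iP q)))
      = (2*(q:ℂ) - n) • c.bV.coord (iM (n - q)) := by
    apply c.bV.ext
    rintro (((k|k)|u)|(k|k)) <;>
      simp only [LinearMap.comp_apply, LinearMap.smul_apply, Module.Basis.coord_apply,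
        c.br_Gp_L, c.br_Gp_H, c.hGpGp, c.hGpGm, map_add, map_smul, map_neg, map_zero,
        Module.Basis.repr_self, Finsupp.smul_apply, Finsupp.add_apply, Finsupp.neg_apply,
        Finsupp.single_apply, smul_eq_mul]
    · simp
    · simp
    · simp [c.hxC]
    · simp
    · by_cases h1 : q + k = n
      · have h2 : k = n - q := by omega
        simp [h1, h2]
        push_cast
        ring
      · have h2 : ¬ (k = n - q) := by omega
        simp [h1, h2]
  have := LinearMap.congr_fun h v
  simpa [co, Module.Basis.coord_apply] using this

lemma co_br_Gp_iP (q t : ℤ) (v : V) :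
    c.co (c.br (c.bV (iP q)) v) (iP t)
      = ((3*(q:ℂ) - t)/2) * c.co v (iL (t - q)) - c.co v (iH (t - q)) := by
  have h : (c.bV.coord (iP t)).comp (c.br (c.bV (iP q)))
      = ((3*(q:ℂ) - t)/2) • c.bV.coord (iL (t - q)) - c.bV.coord (iH (t - q)) := by
    apply c.bV.ext
    rintro (((k|k)|u)|(k|k)) <;>
      simp only [LinearMap.comp_apply, LinearMap.smul_apply, LinearMap.sub_apply,
        Module.Basis.coord_apply,
        c.br_Gp_L, c.br_Gp_H, c.hGpGp, c.hGpGm, map_add, map_smul, map_neg, map_zero,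
        Module.Basis.repr_self, Finsupp.smul_apply, Finsupp.add_apply, Finsupp.neg_apply,
        Finsupp.single_apply, smul_eq_mul]
    · by_cases h1 : q + k = t
      · have h2 : k = t - q := by omega
        simp [h1, h2]
        push_cast
        ring
      · have h2 : ¬ (k = t - q) := by omega
        simp [h1, h2]
    · by_cases h1 : q + k = t
      · have h2 : k = t - q := by omega
        simp [h1, h2]
      · have h2 : ¬ (k = t - q) := by omega
        simp [h1, h2]
    · simp [c.hxC]
    · simp
    · simp
  have := LinearMap.congr_fun h v
  simpa [co, Module.Basis.coord_apply] using this

lemma co_br_Gp_iM (q t : ℤ) (v : V) : c.co (c.br (c.bV (iP q)) v) (iM t) = 0 := by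
  have h : (c.bV.coord (iM t)).comp (c.br (c.bV (iP q))) = 0 := by
    apply c.bV.ext
    rintro (((k|k)|u)|(k|k)) <;>
      simp only [LinearMap.comp_apply, LinearMap.zero_apply, Module.Basis.coord_apply,
        c.br_Gp_L, c.br_Gp_H, c.hGpGp, c.hGpGm, map_add, map_smul, map_neg, map_zero,
        Module.Basis.repr_self, Finsupp.smul_apply, Finsupp.add_apply, Finsupp.neg_apply,
        Finsupp.single_apply, smul_eq_mul] <;>
      simp [c.hxC]
  have := LinearMap.congr_fun h v
  simpa [co, Module.Basis.coord_apply] using this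

lemma co_br_Gm_iL (q n : ℤ) (v : V) :
    c.co (c.br (c.bV (iM q)) v) (iL n) = 2 * c.co v (iP (n - q)) := by
  have h : (c.bV.coord (iL n)).comp (c.br (c.bV (iM q))) = (2:ℂ) • c.bV.coord (iP (n - q)) := by
    apply c.bV.ext
    rintro (((k|k)|u)|(k|k)) <;>
      simp only [LinearMap.comp_apply, LinearMap.smul_apply, Module.Basis.coord_apply,
        c.br_Gm_L, c.br_Gm_H, c.br_Gm_Gp, c.hGpGm, c.hGmGm, map_add, map_smul, map_neg,
        map_zero, Module.Basis.repr_self, Finsupp.smul_apply, Finsupp.add_apply, Finsupp.neg_apply,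
        Finsupp.single_apply, smul_eq_mul]
    · simp
    · simp
    · simp [c.hxC]
    · by_cases h1 : k + q = n
      · have h2 : k = n - q := by omega
        simp [h1, h2]
      · have h2 : ¬ (k = n - q) := by omega
        simp [h1, h2]
    · simp
  have := LinearMap.congr_fun h v
  simpa [co, Module.Basis.coord_apply] using this

lemma co_br_Gm_iH (q n : ℤ) (v : V) :
    c.co (c.br (c.bV (iM q)) v) (iH n) = ((n:ℂ) - 2*q) * c.co v (iP (n - q)) := by
  have h : (c.bV.coord (iH n)).comp (c.br (c.bV (iM q)))
      = ((n:ℂ) - 2*q) • c.bV.coord (iP (n - q)) := by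
    apply c.bV.ext
    rintro (((k|k)|u)|(k|k)) <;>
      simp only [LinearMap.comp_apply, LinearMap.smul_apply, Module.Basis.coord_apply,
        c.br_Gm_L, c.br_Gm_H, c.br_Gm_Gp, c.hGpGm, c.hGmGm, map_add, map_smul, map_neg,
        map_zero, Module.Basis.repr_self, Finsupp.smul_apply, Finsupp.add_apply, Finsupp.neg_apply,
        Finsupp.single_apply, smul_eq_mul]
    · simp
    · simp
    · simp [c.hxC]
    · by_cases h1 : k + q = n
      · have h2 : k = n - q := by omega
        simp [h1, h2]
        push_cast
        ring
      · have h2 : ¬ (k = n - q) := by omega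
        simp [h1, h2]
    · simp
  have := LinearMap.congr_fun h v
  simpa [co, Module.Basis.coord_apply] using this

lemma co_br_Gm_iM (q t : ℤ) (v : V) :
    c.co (c.br (c.bV (iM q)) v) (iM t)
      = ((3*(q:ℂ) - t)/2) * c.co v (iL (t - q)) + c.co v (iH (t - q)) := by
  have h : (c.bV.coord (iM t)).comp (c.br (c.bV (iM q)))
      = ((3*(q:ℂ) - t)/2) • c.bV.coord (iL (t - q)) + c.bV.coord (iH (t - q)) := by
    apply c.bV.ext
    rintro (((k|k)|u)|(k|k)) <;>
      simp only [LinearMap.comp_apply, LinearMap.smul_apply, LinearMap.add_apply,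
        Module.Basis.coord_apply,
        c.br_Gm_L, c.br_Gm_H, c.br_Gm_Gp, c.hGpGm, c.hGmGm, map_add, map_smul, map_neg,
        map_zero, Module.Basis.repr_self, Finsupp.smul_apply, Finsupp.add_apply, Finsupp.neg_apply,
        Finsupp.single_apply, smul_eq_mul]
    · by_cases h1 : q + k = t
      · have h2 : k = t - q := by omega
        simp [h1, h2]
        push_cast
        ring
      · have h2 : ¬ (k = t - q) := by omega
        simp [h1, h2]
    · by_cases h1 : q + k = t
      · have h2 : k = t - q := by omega
        simp [h1, h2]
      · have h2 : ¬ (k = t - q) := by omega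
        simp [h1, h2]
    · simp [c.hxC]
    · simp
    · simp
  have := LinearMap.congr_fun h v
  simpa [co, Module.Basis.coord_apply] using this

lemma co_br_Gm_iP (q t : ℤ) (v : V) : c.co (c.br (c.bV (iM q)) v) (iP t) = 0 := by
  have h : (c.bV.coord (iP t)).comp (c.br (c.bV (iM q))) = 0 := by
    apply c.bV.ext
    rintro (((k|k)|u)|(k|k)) <;>
      simp only [LinearMap.comp_apply, LinearMap.zero_apply, Module.Basis.coord_apply,
        c.br_Gm_L, c.br_Gm_H, c.br_Gm_Gp, c.hGpGm, c.hGmGm, map_add, map_smul, map_neg,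
        map_zero, Module.Basis.repr_self, Finsupp.smul_apply, Finsupp.add_apply, Finsupp.neg_apply,
        Finsupp.single_apply, smul_eq_mul] <;>
      simp [c.hxC]
  have := LinearMap.congr_fun h v
  simpa [co, Module.Basis.coord_apply] using this

end Ctx
end N2R
namespace N2R
namespace Ctx
variable {V : Type} [AddCommGroup V] [Module ℂ V] (c : Ctx V)

lemma br_L0_diag (v : V) (i : Idx) : c.co (c.br (c.bV (iL 0)) v) i = wt i * c.co v i := by
  rcases i with (((n|n)|u)|(t|t))
  · rw [c.co_br_L_iL]; norm_num
  · rw [c.co_br_L_iH]; norm_num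
  · cases u; rw [c.co_br_L_iC]; norm_num
  · rw [c.co_br_L_iP]; norm_num
  · rw [c.co_br_L_iM]; norm_num

lemma br_H0_diag (v : V) (i : Idx) : c.co (c.br (c.bV (iH 0)) v) i = ch i * c.co v i := by
  rcases i with (((n|n)|u)|(t|t))
  · rw [c.co_br_H_iL]; norm_num
  · rw [c.co_br_H_iH]; norm_num
  · cases u; rw [c.co_br_H_iC]; norm_num
  · rw [c.co_br_H_iP]; norm_num
  · rw [c.co_br_H_iM]; norm_num

lemma diamond_L (p : ZMod 2) (x : V) (hx : x ∈ c.Vsub p) (k : ℤ) (i : Idx) :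
    (-(k:ℂ) - wt i) * c.co (c.φ x (c.bV (iL k))) i
      = -c.co (c.br (c.bV (iL k)) (c.φ x (c.bV (iL 0)))) i := by
  have h2 := c.hbd2 p 0 0 x hx _ (c.memL 0) _ (c.memL k)
  rw [c.hLL 0 k] at h2
  have hc : (if (0:ℤ) + k = 0 then (((0:ℤ):ℂ)^3 - ((0:ℤ):ℂ))/12 else 0) = (0:ℂ) := by
    split <;> norm_num
  rw [hc, zero_smul, add_zero, zero_add] at h2
  simp only [add_zero, mul_zero, zero_mul, c.sgn_zero, one_smul, map_smul, Int.cast_zero, zero_sub] at h2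
  have h3 := congrArg (fun w => c.co w i) h2
  simp only [co_smul, co_sub, c.br_L0_diag] at h3
  linear_combination h3

lemma diamond_H (p : ZMod 2) (x : V) (hx : x ∈ c.Vsub p) (k : ℤ) (i : Idx) :
    (-(k:ℂ) - wt i) * c.co (c.φ x (c.bV (iH k))) i
      = -c.co (c.br (c.bV (iH k)) (c.φ x (c.bV (iL 0)))) i := by
  have h2 := c.hbd2 p 0 0 x hx _ (c.memL 0) _ (c.memH k)
  rw [c.hLH 0 k] at h2
  rw [zero_add] at h2
  simp only [add_zero, mul_zero, zero_mul, c.sgn_zero, one_smul, map_smul] at h2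
  have h3 := congrArg (fun w => c.co w i) h2
  simp only [co_smul, co_sub, c.br_L0_diag] at h3
  linear_combination h3

lemma diamond_P (p : ZMod 2) (x : V) (hx : x ∈ c.Vsub p) (q : ℤ) (i : Idx) :
    (-(q:ℂ) - wt i) * c.co (c.φ x (c.bV (iP q))) i
      = -c.sgn (c.d + p) * c.co (c.br (c.bV (iP q)) (c.φ x (c.bV (iL 0)))) i := by
  have h2 := c.hbd2 p 0 1 x hx _ (c.memL 0) _ (c.memP q)
  rw [c.hLGp 0 q] at h2
  rw [add_zero] at h2
  simp only [add_zero, mul_zero, one_mul, c.sgn_zero, one_smul, map_smul, Int.cast_zero] at h2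
  have h4 : ((0:ℂ)/2 - q) = -(q:ℂ) := by norm_num
  rw [h4] at h2
  have h3 := congrArg (fun w => c.co w i) h2
  simp only [co_smul, co_sub, c.br_L0_diag] at h3
  linear_combination h3

lemma diamond_M (p : ZMod 2) (x : V) (hx : x ∈ c.Vsub p) (q : ℤ) (i : Idx) :
    (-(q:ℂ) - wt i) * c.co (c.φ x (c.bV (iM q))) i
      = -c.sgn (c.d + p) * c.co (c.br (c.bV (iM q)) (c.φ x (c.bV (iL 0)))) i := by
  have h2 := c.hbd2 p 0 1 x hx _ (c.memL 0) _ (c.memM q)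
  rw [c.hLGm 0 q] at h2
  rw [add_zero] at h2
  simp only [add_zero, mul_zero, one_mul, c.sgn_zero, one_smul, map_smul, Int.cast_zero] at h2
  have h4 : ((0:ℂ)/2 - q) = -(q:ℂ) := by norm_num
  rw [h4] at h2
  have h3 := congrArg (fun w => c.co w i) h2
  simp only [co_smul, co_sub, c.br_L0_diag] at h3
  linear_combination h3

lemma clubs_L (p : ZMod 2) (x : V) (hx : x ∈ c.Vsub p) (k : ℤ) (i : Idx) :
    (0 - ch i) * c.co (c.φ x (c.bV (iL k))) i
      = -c.co (c.br (c.bV (iL k)) (c.φ x (c.bV (iH 0)))) i := by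
  have h2 := c.hbd2 p 0 0 x hx _ (c.memH 0) _ (c.memL k)
  rw [c.br_H_L 0 k] at h2
  rw [zero_add] at h2
  simp only [add_zero, mul_zero, zero_mul, c.sgn_zero, one_smul, map_smul, Int.cast_zero, zero_smul, map_zero] at h2
  have h3 := congrArg (fun w => c.co w i) h2
  simp only [co_smul, co_sub, co_zero, c.br_H0_diag] at h3
  linear_combination h3

lemma clubs_H (p : ZMod 2) (x : V) (hx : x ∈ c.Vsub p) (k : ℤ) (i : Idx) :
    (0 - ch i) * c.co (c.φ x (c.bV (iH k))) i
      = -c.co (c.br (c.bV (iH k)) (c.φ x (c.bV (iH 0)))) i := by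
  have h2 := c.hbd2 p 0 0 x hx _ (c.memH 0) _ (c.memH k)
  rw [c.hHH 0 k] at h2
  rw [zero_add] at h2
  have hc : (if (0:ℤ) + k = 0 then ((0:ℤ):ℂ)/3 else 0) = (0:ℂ) := by split <;> norm_num
  rw [zero_add] at hc
  rw [hc, zero_smul, map_zero] at h2
  simp only [add_zero, mul_zero, zero_mul, c.sgn_zero, one_smul] at h2
  have h3 := congrArg (fun w => c.co w i) h2
  simp only [co_smul, co_sub, co_zero, c.br_H0_diag] at h3
  linear_combination h3

lemma clubs_P (p : ZMod 2) (x : V) (hx : x ∈ c.Vsub p) (q : ℤ) (i : Idx) :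
    (1 - ch i) * c.co (c.φ x (c.bV (iP q))) i
      = -c.sgn (c.d + p) * c.co (c.br (c.bV (iP q)) (c.φ x (c.bV (iH 0)))) i := by
  have h2 := c.hbd2 p 0 1 x hx _ (c.memH 0) _ (c.memP q)
  rw [c.hHGp 0 q] at h2
  rw [add_zero, zero_add] at h2
  simp only [add_zero, mul_zero, one_mul, c.sgn_zero, one_smul] at h2
  have h3 := congrArg (fun w => c.co w i) h2
  simp only [co_smul, co_sub, c.br_H0_diag] at h3
  linear_combination h3

lemma clubs_M (p : ZMod 2) (x : V) (hx : x ∈ c.Vsub p) (q : ℤ) (i : Idx) :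
    (-1 - ch i) * c.co (c.φ x (c.bV (iM q))) i
      = -c.sgn (c.d + p) * c.co (c.br (c.bV (iM q)) (c.φ x (c.bV (iH 0)))) i := by
  have h2 := c.hbd2 p 0 1 x hx _ (c.memH 0) _ (c.memM q)
  rw [c.hHGm 0 q] at h2
  rw [add_zero, zero_add, map_neg] at h2
  simp only [add_zero, mul_zero, one_mul, c.sgn_zero, one_smul] at h2
  have h3 := congrArg (fun w => c.co w i) h2
  simp only [co_smul, co_sub, co_neg, c.br_H0_diag] at h3
  linear_combination h3

end Ctx
end N2R
namespace N2R

def par : Idx → ZMod 2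
  | Sum.inl _ => 0
  | Sum.inr _ => 1

@[simp] lemma par_iL (m : ℤ) : par (iL m) = 0 := rfl
@[simp] lemma par_iH (m : ℤ) : par (iH m) = 0 := rfl
@[simp] lemma par_iC : par iC = 0 := rfl
@[simp] lemma par_iP (p : ℤ) : par (iP p) = 1 := rfl
@[simp] lemma par_iM (p : ℤ) : par (iM p) = 1 := rfl

namespace Ctx
variable {V : Type} [AddCommGroup V] [Module ℂ V] (c : Ctx V)

lemma mem_basis (j : Idx) : c.bV j ∈ c.Vsub (par j) := by
  rcases j with (((k|k)|u)|(k|k))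
  · exact c.memL k
  · exact c.memH k
  · cases u; exact c.memC
  · exact c.memP k
  · exact c.memM k

/-- the bracket of any basis vector with φ x C vanishes -/
lemma br_phiC (p : ZMod 2) (x : V) (hx : x ∈ c.Vsub p) (j : Idx) :
    c.br (c.bV j) (c.φ x (c.bV iC)) = 0 := by
  have h2 := c.hbd2 p (par j) 0 x hx _ (c.mem_basis j) _ c.memC
  rw [c.hxC, c.br_Cc, map_zero] at h2
  rw [smul_zero, sub_zero] at h2
  have := h2.symm
  rcases smul_eq_zero.mp this with h | h
  · exact absurd h (c.sgn_ne_zero _)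
  · exact h

/-- an element killed by all ad(basis) is a multiple of C -/
lemma cent_iL {v : V} (hv : ∀ j : Idx, c.br (c.bV j) v = 0) (k : ℤ) : c.co v (iL k) = 0 := by
  have h2 : c.co (c.br (c.bV (iL (k+1))) v) (iL (2*k+1)) = 0 := by rw [hv]; simp
  rw [c.co_br_L_iL] at h2
  have e1 : 2*k+1 - (k+1) = k := by ring
  rw [e1] at h2
  have e2 : (2*(((k+1):ℤ):ℂ) - ((2*k+1 : ℤ):ℂ)) = 1 := by push_cast; ring
  rw [e2, one_mul] at h2
  exact h2

lemma cent_iH {v : V} (hv : ∀ j : Idx, c.br (c.bV j) v = 0) (k : ℤ) : c.co v (iH k) = 0 := by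
  rcases eq_or_ne k 0 with rfl | hk
  · have h2 : c.co (c.br (c.bV (iP 1)) v) (iP 1) = 0 := by rw [hv]; simp
    rw [c.co_br_Gp_iP] at h2
    norm_num at h2
    rw [c.cent_iL hv 0] at h2
    simpa using h2
  · have h2 : c.co (c.br (c.bV (iL 1)) v) (iH (k+1)) = 0 := by rw [hv]; simp
    rw [c.co_br_L_iH] at h2
    have e1 : k+1 - 1 = k := by ring
    rw [e1] at h2
    have e2 : ((1:ℤ):ℂ) - (((k+1):ℤ):ℂ) = -k := by push_cast; ring
    rw [e2] at h2
    rcases mul_eq_zero.mp h2 with h | h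
    · exfalso
      have : (k:ℂ) = 0 := neg_eq_zero.mp h
      exact hk (by exact_mod_cast this)
    · exact h

lemma cent_iP {v : V} (hv : ∀ j : Idx, c.br (c.bV j) v = 0) (s : ℤ) : c.co v (iP s) = 0 := by
  have h2 : c.co (c.br (c.bV (iL (2*s+2))) v) (iP (3*s+2)) = 0 := by rw [hv]; simp
  rw [c.co_br_L_iP] at h2
  have e1 : 3*s+2 - (2*s+2) = s := by ring
  rw [e1] at h2
  have e2 : 3*(((2*s+2):ℤ):ℂ)/2 - ((3*s+2 : ℤ):ℂ) = 1 := by push_cast; ring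
  rw [e2, one_mul] at h2
  exact h2

lemma cent_iM {v : V} (hv : ∀ j : Idx, c.br (c.bV j) v = 0) (s : ℤ) : c.co v (iM s) = 0 := by
  have h2 : c.co (c.br (c.bV (iL (2*s+2))) v) (iM (3*s+2)) = 0 := by rw [hv]; simp
  rw [c.co_br_L_iM] at h2
  have e1 : 3*s+2 - (2*s+2) = s := by ring
  rw [e1] at h2
  have e2 : 3*(((2*s+2):ℤ):ℂ)/2 - ((3*s+2 : ℤ):ℂ) = 1 := by push_cast; ring
  rw [e2, one_mul] at h2
  exact h2

lemma cent_onlyC {v : V} (hv : ∀ j : Idx, c.br (c.bV j) v = 0) :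
    v = c.co v iC • c.bV iC := by
  apply c.ext_co
  intro i
  rcases i with (((k|k)|u)|(k|k))
  · rw [c.cent_iL hv]; simp
  · rw [c.cent_iH hv]; simp
  · cases u; simp
  · rw [c.cent_iP hv]; simp
  · rw [c.cent_iM hv]; simp

/-- φ(x, C) is a multiple of C for homogeneous x -/
lemma phiC_rep (p : ZMod 2) (x : V) (hx : x ∈ c.Vsub p) :
    c.φ x (c.bV iC) = c.co (c.φ x (c.bV iC)) iC • c.bV iC :=
  c.cent_onlyC (c.br_phiC p x hx)

/-- φ of any bracket of basis elements with C vanishes -/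
lemma phiC_br (jx jy : Idx) : c.φ (c.br (c.bV jx) (c.bV jy)) (c.bV iC) = 0 := by
  have h1 := c.hbd1 (par jx) (par jy) 0 _ (c.mem_basis jx) _ (c.mem_basis jy) _ c.memC
  rw [c.phiC_rep (par jy) _ (c.mem_basis jy), c.phiC_rep (par jx) _ (c.mem_basis jx)] at h1
  rw [map_smul, map_smul, c.hxC, c.hxC] at h1
  simpa using h1

lemma phiC_basis (j : Idx) : c.φ (c.bV j) (c.bV iC) = 0 := by
  rcases j with (((n|n)|u)|(s|s))
  · rcases eq_or_ne n 0 with rfl | hn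
    · have h := c.phiC_br (iL 1) (iL (-1))
      rw [c.hLL] at h
      norm_num at h
      exact h
    · have h := c.phiC_br (iL 0) (iL n)
      rw [c.hLL] at h
      have hc : (if (0:ℤ) + n = 0 then (((0:ℤ):ℂ)^3 - ((0:ℤ):ℂ))/12 else 0) = (0:ℂ) := by
        split <;> norm_num
      rw [hc, zero_smul, add_zero, zero_add] at h
      rw [map_smul, LinearMap.smul_apply] at h
      rcases smul_eq_zero.mp h with h | h
      · exfalso
        have : (n:ℂ) = 0 := by
          have := sub_eq_zero.mp h
          simpa using this.symm
        exact hn (by exact_mod_cast this)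
      · exact h
  · have h := c.phiC_br (iL (n+1)) (iH (-1))
    rw [c.hLH] at h
    have e1 : n + 1 + -1 = n := by ring
    rw [e1] at h
    rw [map_smul, LinearMap.smul_apply] at h
    rcases smul_eq_zero.mp h with h | h
    · exfalso; norm_num at h
    · exact h
  · cases u
    have h := c.phiC_br (iL 2) (iL (-2))
    rw [c.hLL] at h
    norm_num at h
    have h0 : c.φ (c.bV (iL 0)) (c.bV iC) = 0 := by
      have h' := c.phiC_br (iL 1) (iL (-1))
      rw [c.hLL] at h'
      norm_num at h'
      exact h'
    rw [h0, smul_zero, zero_add] at h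
    rcases smul_eq_zero.mp h with h | h
    · exfalso; norm_num at h
    · exact h
  · have h := c.phiC_br (iH 1) (iP (s-1))
    rw [c.hHGp] at h
    have e1 : 1 + (s - 1) = s := by ring
    rw [e1] at h
    exact h
  · have h := c.phiC_br (iH 1) (iM (s-1))
    rw [c.hHGm] at h
    have e1 : 1 + (s - 1) = s := by ring
    rw [e1] at h
    rw [map_neg, LinearMap.neg_apply, neg_eq_zero] at h
    exact h

lemma phiC (x : V) : c.φ x (c.bV iC) = 0 := by
  have h : (c.φ.flip (c.bV iC)) = 0 := by
    apply c.bV.ext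
    intro j
    simpa using c.phiC_basis j
  have := LinearMap.congr_fun h x
  simpa using this

lemma Cphi (j : Idx) : c.φ (c.bV iC) (c.bV j) = 0 := by
  rw [c.hsym 0 (par j) _ c.memC _ (c.mem_basis j), c.phiC_basis j, smul_zero]

end Ctx
end N2R
namespace N2R
namespace Ctx
variable {V : Type} [AddCommGroup V] [Module ℂ V] (c : Ctx V)

lemma neg_sgn_mul {e : ZMod 2} {X : ℂ} (h : (0:ℂ) = -c.sgn e * X) : X = 0 := by
  rcases mul_eq_zero.mp h.symm with h' | h'
  · exact absurd (neg_eq_zero.mp h') (c.sgn_ne_zero e)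
  · exact h'

/-- coords of φ(x, L0) at iL 0 vanish -/
lemma u_iL0 (p : ZMod 2) (x : V) (hx : x ∈ c.Vsub p) :
    c.co (c.φ x (c.bV (iL 0))) (iL 0) = 0 := by
  have h := c.diamond_L p x hx 1 (iL 1)
  rw [c.co_br_L_iL] at h
  norm_num at h
  exact h

lemma u_iH0 (p : ZMod 2) (x : V) (hx : x ∈ c.Vsub p) :
    c.co (c.φ x (c.bV (iL 0))) (iH 0) = 0 := by
  have h := c.diamond_P p x hx 1 (iP 1)
  norm_num at h
  have h2 := h.resolve_left (c.sgn_ne_zero _)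
  rw [c.co_br_Gp_iP] at h2
  norm_num at h2
  rw [c.u_iL0 p x hx] at h2
  simpa using h2

lemma u_iP0 (p : ZMod 2) (x : V) (hx : x ∈ c.Vsub p) :
    c.co (c.φ x (c.bV (iL 0))) (iP 0) = 0 := by
  have h := c.diamond_L p x hx 2 (iP 2)
  rw [c.co_br_L_iP] at h
  norm_num at h
  exact h

lemma u_iM0 (p : ZMod 2) (x : V) (hx : x ∈ c.Vsub p) :
    c.co (c.φ x (c.bV (iL 0))) (iM 0) = 0 := by
  have h := c.diamond_L p x hx 2 (iM 2)
  rw [c.co_br_L_iM] at h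
  norm_num at h
  exact h

/-- φ(x, H0) has no iL nor iH coordinates -/
lemma h_iL (p : ZMod 2) (x : V) (hx : x ∈ c.Vsub p) (m : ℤ) :
    c.co (c.φ x (c.bV (iH 0))) (iL m) = 0 := by
  have key : ∀ q : ℤ, ((3*(q:ℂ) - (q+m))/2) * c.co (c.φ x (c.bV (iH 0))) (iL m)
      - c.co (c.φ x (c.bV (iH 0))) (iH m) = 0 := by
    intro q
    have h := c.clubs_P p x hx q (iP (q+m))
    norm_num at h
    have h2 := h.resolve_left (c.sgn_ne_zero _)
    rw [c.co_br_Gp_iP] at h2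
    have e1 : q + m - q = m := by ring
    rw [e1] at h2
    have e2 : (((q+m):ℤ):ℂ) = (q:ℂ) + m := by push_cast; ring
    rw [e2] at h2
    linear_combination h2
  have k0 := key 0
  have k1 := key 1
  have : c.co (c.φ x (c.bV (iH 0))) (iL m) = 0 := by
    push_cast at k0 k1
    linear_combination k1 - k0
  exact this

lemma h_iH (p : ZMod 2) (x : V) (hx : x ∈ c.Vsub p) (m : ℤ) :
    c.co (c.φ x (c.bV (iH 0))) (iH m) = 0 := by
  have h := c.clubs_P p x hx 0 (iP m)
  norm_num at h
  have h2 := h.resolve_left (c.sgn_ne_zero _)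
  rw [c.co_br_Gp_iP] at h2
  norm_num at h2
  rw [c.h_iL p x hx] at h2
  simpa using h2

-- symmetry helpers
lemma sym_even_left (i j : Idx) (hi : par i = 0) :
    c.φ (c.bV i) (c.bV j) = c.φ (c.bV j) (c.bV i) := by
  have h := c.hsym (par i) (par j) _ (c.mem_basis i) _ (c.mem_basis j)
  rw [hi, zero_mul, c.sgn_zero, one_smul] at h
  exact h

lemma sym_even_right (i j : Idx) (hj : par j = 0) :
    c.φ (c.bV i) (c.bV j) = c.φ (c.bV j) (c.bV i) := by
  have h := c.hsym (par i) (par j) _ (c.mem_basis i) _ (c.mem_basis j)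
  rw [hj, mul_zero, c.sgn_zero, one_smul] at h
  exact h

lemma sym_odd (i j : Idx) (hi : par i = 1) (hj : par j = 1) :
    c.φ (c.bV i) (c.bV j) = -c.φ (c.bV j) (c.bV i) := by
  have h := c.hsym (par i) (par j) _ (c.mem_basis i) _ (c.mem_basis j)
  rw [hi, hj, mul_one, c.sgn_one] at h
  simpa using h

end Ctx
end N2R
namespace N2R
namespace Ctx
variable {V : Type} [AddCommGroup V] [Module ℂ V] (c : Ctx V)

/-- all iL coordinates of φ(L0,L0) vanish -/
lemma U_iL (k : ℤ) : c.co (c.φ (c.bV (iL 0)) (c.bV (iL 0))) (iL k) = 0 := by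
  rcases eq_or_ne k 0 with rfl | hk
  · exact c.u_iL0 0 _ (c.memL 0)
  · have h := c.diamond_L 0 _ (c.memL 0) (-k) (iL 0)
    rw [c.co_br_L_iL] at h
    have e1 : (0:ℤ) - -k = k := by ring
    rw [e1] at h
    have hs : c.co (c.φ (c.bV (iL 0)) (c.bV (iL (-k)))) (iL 0) = 0 := by
      rw [c.sym_even_left (iL 0) (iL (-k)) rfl]
      exact c.u_iL0 0 _ (c.memL (-k))
    rw [hs, mul_zero] at h
    push_cast at h
    have h2 : (k:ℂ) * c.co (c.φ (c.bV (iL 0)) (c.bV (iL 0))) (iL k) = 0 := by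
      linear_combination -h/2
    rcases mul_eq_zero.mp h2 with h3 | h3
    · exact absurd h3 (by exact_mod_cast hk)
    · exact h3

/-- all iH coordinates of φ(L0,L0) vanish -/
lemma U_iH (k : ℤ) : c.co (c.φ (c.bV (iL 0)) (c.bV (iL 0))) (iH k) = 0 := by
  rcases eq_or_ne k 0 with rfl | hk
  · exact c.u_iH0 0 _ (c.memL 0)
  · have h := c.diamond_L 0 _ (c.memL 0) (-k) (iH 0)
    rw [c.co_br_L_iH] at h
    have e1 : (0:ℤ) - -k = k := by ring
    rw [e1] at h
    have hs : c.co (c.φ (c.bV (iL 0)) (c.bV (iL (-k)))) (iH 0) = 0 := by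
      rw [c.sym_even_left (iL 0) (iL (-k)) rfl]
      exact c.u_iH0 0 _ (c.memL (-k))
    rw [hs, mul_zero] at h
    push_cast at h
    have h2 : (k:ℂ) * c.co (c.φ (c.bV (iL 0)) (c.bV (iL 0))) (iH k) = 0 := by
      linear_combination -h
    rcases mul_eq_zero.mp h2 with h3 | h3
    · exact absurd h3 (by exact_mod_cast hk)
    · exact h3

section D0
variable (hd : c.d = 0)

include hd

lemma d0_U_rep : c.φ (c.bV (iL 0)) (c.bV (iL 0))
    = c.co (c.φ (c.bV (iL 0)) (c.bV (iL 0))) iC • c.bV iC := by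
  have hpar : c.φ (c.bV (iL 0)) (c.bV (iL 0)) ∈ c.Vsub 0 := by
    have := c.hhom 0 0 _ (c.memL 0) _ (c.memL 0)
    rwa [hd, show (0+0+0 : ZMod 2) = 0 by decide] at this
  apply c.ext_co
  intro i
  rcases i with (((k|k)|u)|(k|k))
  · rw [c.U_iL]; simp
  · rw [c.U_iH]; simp
  · cases u; simp
  · rw [c.even_co hpar]; simp
  · rw [c.even_co hpar]; simp

lemma d0_h0_rep : c.φ (c.bV (iL 0)) (c.bV (iH 0))
    = c.co (c.φ (c.bV (iL 0)) (c.bV (iH 0))) iC • c.bV iC := by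
  have hpar : c.φ (c.bV (iL 0)) (c.bV (iH 0)) ∈ c.Vsub 0 := by
    have := c.hhom 0 0 _ (c.memL 0) _ (c.memH 0)
    rwa [hd, show (0+0+0 : ZMod 2) = 0 by decide] at this
  apply c.ext_co
  intro i
  rcases i with (((k|k)|u)|(k|k))
  · rw [c.h_iL 0 _ (c.memL 0)]; simp
  · rw [c.h_iH 0 _ (c.memL 0)]; simp
  · cases u; simp
  · rw [c.even_co hpar]; simp
  · rw [c.even_co hpar]; simp

lemma d0_phiL0Gp_rep (q : ℤ) : c.φ (c.bV (iL 0)) (c.bV (iP q))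
    = c.co (c.φ (c.bV (iL 0)) (c.bV (iP q))) (iP q) • c.bV (iP q) := by
  have hpar : c.φ (c.bV (iL 0)) (c.bV (iP q)) ∈ c.Vsub 1 := by
    have := c.hhom 0 1 _ (c.memL 0) _ (c.memP q)
    rwa [hd, show (0+1+0 : ZMod 2) = 1 by decide] at this
  apply c.ext_co
  intro i
  rcases i with (((k|k)|u)|(t|t))
  · rw [c.odd_co hpar]; simp
  · rw [c.odd_co hpar]; simp
  · cases u; rw [c.odd_co hpar]; simp
  · rcases eq_or_ne t q with rfl | ht
    · simp
    · have h := c.diamond_P 0 _ (c.memL 0) q (iP t)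
      rw [c.d0_U_rep hd] at h
      rw [map_smul] at h
      rw [c.hxC] at h
      rw [smul_zero] at h
      simp only [co_zero, mul_zero, neg_zero] at h
      have h2 : (-(q:ℂ) - wt (iP t)) ≠ 0 := by
        simp only [wt_iP]
        intro hcon
        apply ht
        have : (t:ℂ) = q := by linear_combination hcon
        exact_mod_cast this
      have := mul_eq_zero.mp h
      rcases this with h3 | h3
      · exact absurd h3 h2
      · rw [h3]; simp [Ne.symm ht]
  · have h := c.clubs_P 0 _ (c.memL 0) q (iM t)
    rw [c.co_br_Gp_iM] at h
    simp only [ch_iM, mul_zero, neg_zero] at h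
    have h2 : c.co (c.φ (c.bV (iL 0)) (c.bV (iP q))) (iM t) = 0 := by
      have hne : (1 - (-1) : ℂ) ≠ 0 := by norm_num
      rcases mul_eq_zero.mp h with h3 | h3
      · exact absurd h3 hne
      · exact h3
    rw [h2]; simp

lemma d0_phiL0Gm_rep (q : ℤ) : c.φ (c.bV (iL 0)) (c.bV (iM q))
    = c.co (c.φ (c.bV (iL 0)) (c.bV (iM q))) (iM q) • c.bV (iM q) := by
  have hpar : c.φ (c.bV (iL 0)) (c.bV (iM q)) ∈ c.Vsub 1 := by
    have := c.hhom 0 1 _ (c.memL 0) _ (c.memM q)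
    rwa [hd, show (0+1+0 : ZMod 2) = 1 by decide] at this
  apply c.ext_co
  intro i
  rcases i with (((k|k)|u)|(t|t))
  · rw [c.odd_co hpar]; simp
  · rw [c.odd_co hpar]; simp
  · cases u; rw [c.odd_co hpar]; simp
  · have h := c.clubs_M 0 _ (c.memL 0) q (iP t)
    rw [c.co_br_Gm_iP] at h
    simp only [ch_iP, mul_zero, neg_zero] at h
    have h2 : c.co (c.φ (c.bV (iL 0)) (c.bV (iM q))) (iP t) = 0 := by
      have hne : (-1 - 1 : ℂ) ≠ 0 := by norm_num
      rcases mul_eq_zero.mp h with h3 | h3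
      · exact absurd h3 hne
      · exact h3
    rw [h2]; simp
  · rcases eq_or_ne t q with rfl | ht
    · simp
    · have h := c.diamond_M 0 _ (c.memL 0) q (iM t)
      rw [c.d0_U_rep hd] at h
      rw [map_smul] at h
      rw [c.hxC] at h
      rw [smul_zero] at h
      simp only [co_zero, mul_zero, neg_zero] at h
      have h2 : (-(q:ℂ) - wt (iM t)) ≠ 0 := by
        simp only [wt_iM]
        intro hcon
        apply ht
        have : (t:ℂ) = q := by linear_combination hcon
        exact_mod_cast this
      rcases mul_eq_zero.mp h with h3 | h3
      · exact absurd h3 h2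
      · rw [h3]; simp [Ne.symm ht]

end D0

end Ctx
end N2R
namespace N2R
namespace Ctx
variable {V : Type} [AddCommGroup V] [Module ℂ V] (c : Ctx V)

section D0
variable (hd : c.d = 0)
include hd

lemma d0_crel (q : ℤ) :
    (c.co (c.φ (c.bV (iL 0)) (c.bV (iL 0))) iC
      + (q:ℂ) * c.co (c.φ (c.bV (iL 0)) (c.bV (iH 0))) iC = 0)
    ∧ (c.co (c.φ (c.bV (iL 0)) (c.bV (iM (-q)))) (iM (-q))
      + c.co (c.φ (c.bV (iL 0)) (c.bV (iP q))) (iP q) = 0) := by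
  have e0 : q + -q = 0 := by ring
  have bb : c.br (c.bV (iP q)) (c.bV (iM (-q))) = (2:ℂ) • c.bV (iL 0)
      + ((q:ℂ) - ((-q:ℤ):ℂ)) • c.bV (iH 0) + (((q:ℂ)^2 - 1/4)/3) • c.bV iC := by
    rw [c.hGpGm, e0, if_pos rfl]
  have bb' : c.br (c.bV (iM (-q))) (c.bV (iP q)) = (2:ℂ) • c.bV (iL 0)
      + ((q:ℂ) - ((-q:ℤ):ℂ)) • c.bV (iH 0) + (((q:ℂ)^2 - 1/4)/3) • c.bV iC := by
    rw [c.br_Gm_Gp, bb]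
  have h2 := c.hbd2 0 1 1 _ (c.memL 0) _ (c.memP q) _ (c.memM (-q))
  rw [show (c.d + 0) * 1 = 0 by rw [hd]; decide,
    show (1:ZMod 2) * (c.d + 0 + 1) = 1 by rw [hd]; decide,
    c.sgn_zero, c.sgn_one, one_smul] at h2
  rw [bb] at h2
  rw [c.d0_phiL0Gm_rep hd (-q), c.d0_phiL0Gp_rep hd q] at h2
  rw [map_smul, map_smul, bb, bb'] at h2
  simp only [neg_smul, one_smul, sub_neg_eq_add] at h2
  rw [map_add, map_add, map_smul, map_smul, map_smul, c.phiC, smul_zero, add_zero] at h2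
  have hL := congrArg (fun w => c.co w (iL 0)) h2
  simp only [co_add, co_smul, co_basis, Sum.inl.injEq, Sum.inr.injEq, reduceCtorEq,
    if_true, if_false, ite_true, ite_false, mul_one, mul_zero, add_zero, zero_add] at hL
  rw [c.U_iL 0, c.h_iL 0 _ (c.memL 0) 0] at hL
  norm_num at hL
  have hskw : c.co (c.φ (c.bV (iL 0)) (c.bV (iM (-q)))) (iM (-q))
      + c.co (c.φ (c.bV (iL 0)) (c.bV (iP q))) (iP q) = 0 := by
    linear_combination -hL/2
  refine ⟨?_, hskw⟩
  have hC := congrArg (fun w => c.co w iC) h2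
  simp only [co_add, co_smul, co_basis, Sum.inl.injEq, Sum.inr.injEq, reduceCtorEq,
    if_true, if_false, ite_true, ite_false, mul_one, mul_zero, add_zero, zero_add] at hC
  push_cast at hC
  linear_combination hC/2 + (((q:ℂ)^2 - 1/4)/3)/2 * hskw

lemma d0_U0 : c.φ (c.bV (iL 0)) (c.bV (iL 0)) = 0 := by
  have h := (c.d0_crel hd 0).1
  norm_num at h
  rw [c.d0_U_rep hd, h]
  simp

lemma d0_h00 : c.φ (c.bV (iL 0)) (c.bV (iH 0)) = 0 := by
  have h0 := (c.d0_crel hd 0).1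
  have h1 := (c.d0_crel hd 1).1
  norm_num at h0 h1
  rw [c.d0_h0_rep hd]
  rw [h0] at h1
  norm_num at h1
  rw [h1]
  simp

lemma d0_eskew (q : ℤ) : c.co (c.φ (c.bV (iL 0)) (c.bV (iM (-q)))) (iM (-q))
    = -c.co (c.φ (c.bV (iL 0)) (c.bV (iP q))) (iP q) := by
  have h := (c.d0_crel hd q).2
  linear_combination h

end D0
end Ctx
end N2R
namespace N2R
namespace Ctx
variable {V : Type} [AddCommGroup V] [Module ℂ V] (c : Ctx V)

section D0
variable (hd : c.d = 0)
include hd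

/-- row L_k against G+_q : k * (coordinate) = β_k - (q - k/2) α_k -/
lemma d0_rowL_Gp (k q : ℤ) :
    (k:ℂ) * c.co (c.φ (c.bV (iL k)) (c.bV (iP q))) (iP (q+k))
      = c.co (c.φ (c.bV (iL 0)) (c.bV (iL k))) (iH k)
        - ((q:ℂ) - (k:ℂ)/2) * c.co (c.φ (c.bV (iL 0)) (c.bV (iL k))) (iL k) := by
  have h := c.diamond_P 0 _ (c.memL k) q (iP (q+k))
  rw [show c.d + 0 = 0 by rw [hd]; decide, c.sgn_zero] at h
  rw [c.sym_even_left (iL k) (iL 0) rfl] at h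
  rw [c.co_br_Gp_iP] at h
  rw [show q + k - q = k by ring] at h
  simp only [wt_iP] at h
  push_cast at h
  linear_combination h

lemma d0_rowL_Gm (k q : ℤ) :
    (k:ℂ) * c.co (c.φ (c.bV (iL k)) (c.bV (iM q))) (iM (q+k))
      = -c.co (c.φ (c.bV (iL 0)) (c.bV (iL k))) (iH k)
        - ((q:ℂ) - (k:ℂ)/2) * c.co (c.φ (c.bV (iL 0)) (c.bV (iL k))) (iL k) := by
  have h := c.diamond_M 0 _ (c.memL k) q (iM (q+k))
  rw [show c.d + 0 = 0 by rw [hd]; decide, c.sgn_zero] at h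
  rw [c.sym_even_left (iL k) (iL 0) rfl] at h
  rw [c.co_br_Gm_iM] at h
  rw [show q + k - q = k by ring] at h
  simp only [wt_iM] at h
  push_cast at h
  linear_combination h

/-- row G+_q against L_k : q * (coordinate) = e_q (q - k/2) -/
lemma d0_rowGp_L (q k : ℤ) :
    (q:ℂ) * c.co (c.φ (c.bV (iP q)) (c.bV (iL k))) (iP (q+k))
      = c.co (c.φ (c.bV (iL 0)) (c.bV (iP q))) (iP q) * ((q:ℂ) - (k:ℂ)/2) := by
  have h := c.diamond_L 1 _ (c.memP q) k (iP (q+k))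
  rw [c.sym_even_right (iP q) (iL 0) rfl] at h
  rw [c.d0_phiL0Gp_rep hd q] at h
  rw [map_smul, c.hLGp k q] at h
  simp only [co_smul, co_basis, wt_iP, if_pos rfl] at h
  push_cast at h
  linear_combination h

lemma d0_rowGm_L (q k : ℤ) :
    (q:ℂ) * c.co (c.φ (c.bV (iM q)) (c.bV (iL k))) (iM (q+k))
      = c.co (c.φ (c.bV (iL 0)) (c.bV (iM q))) (iM q) * ((q:ℂ) - (k:ℂ)/2) := by
  have h := c.diamond_L 1 _ (c.memM q) k (iM (q+k))
  rw [c.sym_even_right (iM q) (iL 0) rfl] at h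
  rw [c.d0_phiL0Gm_rep hd q] at h
  rw [map_smul, c.hLGm k q] at h
  simp only [co_smul, co_basis, wt_iM, if_pos rfl] at h
  push_cast at h
  linear_combination h

lemma d0_rowL_L (k m : ℤ) :
    (k:ℂ) * c.co (c.φ (c.bV (iL k)) (c.bV (iL m))) (iL (m+k))
      = -c.co (c.φ (c.bV (iL 0)) (c.bV (iL k))) (iL k) * ((m:ℂ) - k) := by
  have h := c.diamond_L 0 _ (c.memL k) m (iL (m+k))
  rw [c.sym_even_left (iL k) (iL 0) rfl] at h
  rw [c.co_br_L_iL] at h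
  rw [show m + k - m = k by ring] at h
  simp only [wt_iL] at h
  push_cast at h
  linear_combination h

lemma d0_alpha_rel (k m : ℤ) :
    (m:ℂ) * (-c.co (c.φ (c.bV (iL 0)) (c.bV (iL k))) (iL k) * ((m:ℂ) - k))
      = (k:ℂ) * (-c.co (c.φ (c.bV (iL 0)) (c.bV (iL m))) (iL m) * ((k:ℂ) - m)) := by
  have h1 := c.d0_rowL_L hd k m
  have h2 := c.d0_rowL_L hd m k
  have hco : c.co (c.φ (c.bV (iL k)) (c.bV (iL m))) (iL (m+k))
      = c.co (c.φ (c.bV (iL m)) (c.bV (iL k))) (iL (k+m)) := by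
    rw [c.sym_even_left (iL k) (iL m) rfl, add_comm]
  rw [hco] at h1
  linear_combination (k:ℂ) * h2 - (m:ℂ) * h1

/-- α ≡ 0 -/
lemma d0_alpha (k : ℤ) : c.co (c.φ (c.bV (iL 0)) (c.bV (iL k))) (iL k) = 0 := by
  have r12 := c.d0_alpha_rel hd 1 2
  have r13 := c.d0_alpha_rel hd 1 3
  have r23 := c.d0_alpha_rel hd 2 3
  push_cast at r12 r13 r23
  have hA1 : c.co (c.φ (c.bV (iL 0)) (c.bV (iL 1))) (iL 1) = 0 := by
    linear_combination (-1/4 : ℂ)*r12 + (-1/12 : ℂ)*r13 + (1/12 : ℂ)*r23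
  rcases eq_or_ne k 1 with rfl | hk
  · exact hA1
  · have rk := c.d0_alpha_rel hd k 1
    push_cast at rk
    rw [hA1] at rk
    have h2 : c.co (c.φ (c.bV (iL 0)) (c.bV (iL k))) (iL k) * ((1:ℂ) - k) = 0 := by
      linear_combination -rk
    rcases mul_eq_zero.mp h2 with h | h
    · exact h
    · exfalso
      apply hk
      have : (k:ℂ) = 1 := by linear_combination -h
      exact_mod_cast this

lemma d0_betae_rel (k q : ℤ) :
    (q:ℂ) * c.co (c.φ (c.bV (iL 0)) (c.bV (iL k))) (iH k)
      = (k:ℂ) * (c.co (c.φ (c.bV (iL 0)) (c.bV (iP q))) (iP q) * ((q:ℂ) - (k:ℂ)/2)) := by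
  have h1 := c.d0_rowL_Gp hd k q
  have h2 := c.d0_rowGp_L hd q k
  have hco : c.co (c.φ (c.bV (iL k)) (c.bV (iP q))) (iP (q+k))
      = c.co (c.φ (c.bV (iP q)) (c.bV (iL k))) (iP (q+k)) := by
    rw [c.sym_even_left (iL k) (iP q) rfl]
  rw [hco] at h1
  rw [c.d0_alpha hd k] at h1
  linear_combination (k:ℂ) * h2 - (q:ℂ) * h1

lemma d0_beta1 : c.co (c.φ (c.bV (iL 0)) (c.bV (iL 1))) (iH 1) = 0 := by
  have r21 := c.d0_betae_rel hd 1 2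
  have r22 := c.d0_betae_rel hd 2 2
  have r31 := c.d0_betae_rel hd 1 3
  have r32 := c.d0_betae_rel hd 2 3
  push_cast at r21 r22 r31 r32
  linear_combination (-5/2 : ℂ)*r21 + (15/8 : ℂ)*r22 + (2 : ℂ)*r31 + (-5/4 : ℂ)*r32

/-- e ≡ 0 -/
lemma d0_e (q : ℤ) : c.co (c.φ (c.bV (iL 0)) (c.bV (iP q))) (iP q) = 0 := by
  have h := c.d0_betae_rel hd 1 q
  push_cast at h
  rw [c.d0_beta1 hd] at h
  have h2 : c.co (c.φ (c.bV (iL 0)) (c.bV (iP q))) (iP q) * ((q:ℂ) - 1/2) = 0 := by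
    linear_combination -h
  rcases mul_eq_zero.mp h2 with h3 | h3
  · exact h3
  · exfalso
    have : ((2*q : ℤ) : ℂ) = ((1:ℤ) : ℂ) := by push_cast; linear_combination 2*h3
    have h4 : (2*q : ℤ) = 1 := by exact_mod_cast this
    omega

/-- β ≡ 0 -/
lemma d0_beta (k : ℤ) : c.co (c.φ (c.bV (iL 0)) (c.bV (iL k))) (iH k) = 0 := by
  have h := c.d0_betae_rel hd k 1
  push_cast at h
  rw [c.d0_e hd 1] at h
  linear_combination h

/-- e' ≡ 0 -/
lemma d0_e' (q : ℤ) : c.co (c.φ (c.bV (iL 0)) (c.bV (iM q))) (iM q) = 0 := by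
  have h := c.d0_eskew hd (-q)
  simp only [neg_neg] at h
  rw [c.d0_e hd (-q)] at h
  simpa using h

lemma d0_phiL0Gp0 (q : ℤ) : c.φ (c.bV (iL 0)) (c.bV (iP q)) = 0 := by
  rw [c.d0_phiL0Gp_rep hd q, c.d0_e hd q, zero_smul]

lemma d0_phiL0Gm0 (q : ℤ) : c.φ (c.bV (iL 0)) (c.bV (iM q)) = 0 := by
  rw [c.d0_phiL0Gm_rep hd q, c.d0_e' hd q, zero_smul]

end D0
end Ctx
end N2R
namespace N2R
namespace Ctx
variable {V : Type} [AddCommGroup V] [Module ℂ V] (c : Ctx V)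

section D0
variable (hd : c.d = 0)
include hd

lemma d0_phiH0L0 : c.φ (c.bV (iH 0)) (c.bV (iL 0)) = 0 := by
  rw [c.sym_even_left (iH 0) (iL 0) rfl, c.d0_h00 hd]

lemma d0_phiH0Gp_rep (q : ℤ) : c.φ (c.bV (iH 0)) (c.bV (iP q))
    = c.co (c.φ (c.bV (iH 0)) (c.bV (iP q))) (iP q) • c.bV (iP q) := by
  have hpar : c.φ (c.bV (iH 0)) (c.bV (iP q)) ∈ c.Vsub 1 := by
    have := c.hhom 0 1 _ (c.memH 0) _ (c.memP q)
    rwa [hd, show (0+1+0 : ZMod 2) = 1 by decide] at this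
  apply c.ext_co
  intro i
  rcases i with (((k|k)|u)|(t|t))
  · rw [c.odd_co hpar]; simp
  · rw [c.odd_co hpar]; simp
  · cases u; rw [c.odd_co hpar]; simp
  · rcases eq_or_ne t q with rfl | ht
    · simp
    · have h := c.diamond_P 0 _ (c.memH 0) q (iP t)
      rw [c.d0_phiH0L0 hd, map_zero] at h
      simp only [co_zero, mul_zero, neg_zero] at h
      have h2 : (-(q:ℂ) - wt (iP t)) ≠ 0 := by
        simp only [wt_iP]
        intro hcon
        apply ht
        have : (t:ℂ) = q := by linear_combination hcon
        exact_mod_cast this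
      rcases mul_eq_zero.mp h with h3 | h3
      · exact absurd h3 h2
      · rw [h3]; simp [Ne.symm ht]
  · have h := c.clubs_P 0 _ (c.memH 0) q (iM t)
    rw [c.co_br_Gp_iM] at h
    simp only [ch_iM, mul_zero, neg_zero] at h
    have h2 : c.co (c.φ (c.bV (iH 0)) (c.bV (iP q))) (iM t) = 0 := by
      have hne : (1 - (-1) : ℂ) ≠ 0 := by norm_num
      rcases mul_eq_zero.mp h with h3 | h3
      · exact absurd h3 hne
      · exact h3
    rw [h2]; simp

lemma d0_phiH0Gm_rep (q : ℤ) : c.φ (c.bV (iH 0)) (c.bV (iM q))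
    = c.co (c.φ (c.bV (iH 0)) (c.bV (iM q))) (iM q) • c.bV (iM q) := by
  have hpar : c.φ (c.bV (iH 0)) (c.bV (iM q)) ∈ c.Vsub 1 := by
    have := c.hhom 0 1 _ (c.memH 0) _ (c.memM q)
    rwa [hd, show (0+1+0 : ZMod 2) = 1 by decide] at this
  apply c.ext_co
  intro i
  rcases i with (((k|k)|u)|(t|t))
  · rw [c.odd_co hpar]; simp
  · rw [c.odd_co hpar]; simp
  · cases u; rw [c.odd_co hpar]; simp
  · have h := c.clubs_M 0 _ (c.memH 0) q (iP t)
    rw [c.co_br_Gm_iP] at h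
    simp only [ch_iP, mul_zero, neg_zero] at h
    have h2 : c.co (c.φ (c.bV (iH 0)) (c.bV (iM q))) (iP t) = 0 := by
      have hne : (-1 - 1 : ℂ) ≠ 0 := by norm_num
      rcases mul_eq_zero.mp h with h3 | h3
      · exact absurd h3 hne
      · exact h3
    rw [h2]; simp
  · rcases eq_or_ne t q with rfl | ht
    · simp
    · have h := c.diamond_M 0 _ (c.memH 0) q (iM t)
      rw [c.d0_phiH0L0 hd, map_zero] at h
      simp only [co_zero, mul_zero, neg_zero] at h
      have h2 : (-(q:ℂ) - wt (iM t)) ≠ 0 := by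
        simp only [wt_iM]
        intro hcon
        apply ht
        have : (t:ℂ) = q := by linear_combination hcon
        exact_mod_cast this
      rcases mul_eq_zero.mp h with h3 | h3
      · exact absurd h3 h2
      · rw [h3]; simp [Ne.symm ht]

/-- the G+ row against L_k, via clubs: coordinate = f_q (k/2 - q) -/
lemma d0_rowGp_L_clubs (q k : ℤ) :
    c.co (c.φ (c.bV (iP q)) (c.bV (iL k))) (iP (q+k))
      = c.co (c.φ (c.bV (iH 0)) (c.bV (iP q))) (iP q) * ((k:ℂ)/2 - q) := by
  have h := c.clubs_L 1 _ (c.memP q) k (iP (q+k))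
  rw [c.sym_even_right (iP q) (iH 0) rfl] at h
  rw [c.d0_phiH0Gp_rep hd q] at h
  rw [map_smul, c.hLGp k q] at h
  simp only [co_smul, co_basis, ch_iP, if_pos rfl, if_true, ite_true] at h
  linear_combination -h

lemma d0_rowGm_L_clubs (q k : ℤ) :
    c.co (c.φ (c.bV (iM q)) (c.bV (iL k))) (iM (q+k))
      = -(c.co (c.φ (c.bV (iH 0)) (c.bV (iM q))) (iM q) * ((k:ℂ)/2 - q)) := by
  have h := c.clubs_L 1 _ (c.memM q) k (iM (q+k))
  rw [c.sym_even_right (iM q) (iH 0) rfl] at h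
  rw [c.d0_phiH0Gm_rep hd q] at h
  rw [map_smul, c.hLGm k q] at h
  simp only [co_smul, co_basis, ch_iM, if_pos rfl, if_true, ite_true] at h
  linear_combination h

/-- the G+ row vanishes against L_k -/
lemma d0_GpL_co (q k : ℤ) : c.co (c.φ (c.bV (iP q)) (c.bV (iL k))) (iP (q+k)) = 0 := by
  have h1 : c.co (c.φ (c.bV (iP q)) (c.bV (iL 1))) (iP (q+1)) = 0 := by
    have h := c.d0_rowL_Gp hd 1 q
    rw [c.d0_alpha hd 1, c.d0_beta hd 1] at h
    rw [c.sym_even_left (iL 1) (iP q) rfl] at h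
    push_cast at h
    linear_combination h
  have h2 : c.co (c.φ (c.bV (iP q)) (c.bV (iL (-1)))) (iP (q+(-1))) = 0 := by
    have h := c.d0_rowL_Gp hd (-1) q
    rw [c.d0_alpha hd (-1), c.d0_beta hd (-1)] at h
    rw [c.sym_even_left (iL (-1)) (iP q) rfl] at h
    push_cast at h
    linear_combination -h
  have g1 := c.d0_rowGp_L_clubs hd q 1
  have g2 := c.d0_rowGp_L_clubs hd q (-1)
  rw [h1] at g1
  rw [h2] at g2
  push_cast at g1 g2
  have hf : c.co (c.φ (c.bV (iH 0)) (c.bV (iP q))) (iP q) = 0 := by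
    linear_combination g2 - g1
  rw [c.d0_rowGp_L_clubs hd q k, hf, zero_mul]

lemma d0_GmL_co (q k : ℤ) : c.co (c.φ (c.bV (iM q)) (c.bV (iL k))) (iM (q+k)) = 0 := by
  have h1 : c.co (c.φ (c.bV (iM q)) (c.bV (iL 1))) (iM (q+1)) = 0 := by
    have h := c.d0_rowL_Gm hd 1 q
    rw [c.d0_alpha hd 1, c.d0_beta hd 1] at h
    rw [c.sym_even_left (iL 1) (iM q) rfl] at h
    push_cast at h
    linear_combination h
  have h2 : c.co (c.φ (c.bV (iM q)) (c.bV (iL (-1)))) (iM (q+(-1))) = 0 := by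
    have h := c.d0_rowL_Gm hd (-1) q
    rw [c.d0_alpha hd (-1), c.d0_beta hd (-1)] at h
    rw [c.sym_even_left (iL (-1)) (iM q) rfl] at h
    push_cast at h
    linear_combination -h
  have g1 := c.d0_rowGm_L_clubs hd q 1
  have g2 := c.d0_rowGm_L_clubs hd q (-1)
  rw [h1] at g1
  rw [h2] at g2
  push_cast at g1 g2
  have hf : c.co (c.φ (c.bV (iH 0)) (c.bV (iM q))) (iM q) = 0 := by
    linear_combination g1 - g2
  rw [c.d0_rowGm_L_clubs hd q k, hf, zero_mul]
  simp

lemma d0_f (q : ℤ) : c.φ (c.bV (iH 0)) (c.bV (iP q)) = 0 := by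
  have g1 := c.d0_rowGp_L_clubs hd q 1
  rw [c.d0_GpL_co hd q 1] at g1
  have g2 := c.d0_rowGp_L_clubs hd q (-1)
  rw [c.d0_GpL_co hd q (-1)] at g2
  push_cast at g1 g2
  have hf : c.co (c.φ (c.bV (iH 0)) (c.bV (iP q))) (iP q) = 0 := by
    linear_combination g2 - g1
  rw [c.d0_phiH0Gp_rep hd q, hf, zero_smul]

lemma d0_f' (q : ℤ) : c.φ (c.bV (iH 0)) (c.bV (iM q)) = 0 := by
  have g1 := c.d0_rowGm_L_clubs hd q 1
  rw [c.d0_GmL_co hd q 1] at g1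
  have g2 := c.d0_rowGm_L_clubs hd q (-1)
  rw [c.d0_GmL_co hd q (-1)] at g2
  push_cast at g1 g2
  have hf : c.co (c.φ (c.bV (iH 0)) (c.bV (iM q))) (iM q) = 0 := by
    linear_combination g1 - g2
  rw [c.d0_phiH0Gm_rep hd q, hf, zero_smul]

end D0
end Ctx
end N2R
namespace N2R
namespace Ctx
variable {V : Type} [AddCommGroup V] [Module ℂ V] (c : Ctx V)

section D0
variable (hd : c.d = 0)
include hd

lemma d0_Gp_L0 (q : ℤ) : c.φ (c.bV (iP q)) (c.bV (iL 0)) = 0 := by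
  rw [c.sym_even_right (iP q) (iL 0) rfl, c.d0_phiL0Gp0 hd q]

lemma d0_Gp_H0 (q : ℤ) : c.φ (c.bV (iP q)) (c.bV (iH 0)) = 0 := by
  rw [c.sym_even_right (iP q) (iH 0) rfl, c.d0_f hd q]

lemma d0_Gm_L0 (q : ℤ) : c.φ (c.bV (iM q)) (c.bV (iL 0)) = 0 := by
  rw [c.sym_even_right (iM q) (iL 0) rfl, c.d0_phiL0Gm0 hd q]

lemma d0_Gm_H0 (q : ℤ) : c.φ (c.bV (iM q)) (c.bV (iH 0)) = 0 := by
  rw [c.sym_even_right (iM q) (iH 0) rfl, c.d0_f' hd q]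

lemma d0_Gp_row (q : ℤ) (j : Idx) : c.φ (c.bV (iP q)) (c.bV j) = 0 := by
  rcases j with (((k|k)|u)|(t|t))
  · -- z = L k
    have hpar : c.φ (c.bV (iP q)) (c.bV (iL k)) ∈ c.Vsub 1 := by
      have := c.hhom 1 0 _ (c.memP q) _ (c.memL k)
      rwa [hd, show (1+0+0 : ZMod 2) = 1 by decide] at this
    apply c.eq_zero_of_co
    intro i
    rcases i with (((n|n)|u)|(s|s))
    · exact c.odd_co hpar _
    · exact c.odd_co hpar _
    · cases u; exact c.odd_co hpar _
    · have h := c.clubs_L 1 _ (c.memP q) k (iP s)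
      rw [c.d0_Gp_H0 hd q, map_zero] at h
      simp only [co_zero, mul_zero, neg_zero, ch_iP] at h
      linear_combination -h
    · have h := c.clubs_L 1 _ (c.memP q) k (iM s)
      rw [c.d0_Gp_H0 hd q, map_zero] at h
      simp only [co_zero, mul_zero, neg_zero, ch_iM] at h
      linear_combination h
  · -- z = H k
    have hpar : c.φ (c.bV (iP q)) (c.bV (iH k)) ∈ c.Vsub 1 := by
      have := c.hhom 1 0 _ (c.memP q) _ (c.memH k)
      rwa [hd, show (1+0+0 : ZMod 2) = 1 by decide] at this
    apply c.eq_zero_of_co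
    intro i
    rcases i with (((n|n)|u)|(s|s))
    · exact c.odd_co hpar _
    · exact c.odd_co hpar _
    · cases u; exact c.odd_co hpar _
    · have h := c.clubs_H 1 _ (c.memP q) k (iP s)
      rw [c.d0_Gp_H0 hd q, map_zero] at h
      simp only [co_zero, mul_zero, neg_zero, ch_iP] at h
      linear_combination -h
    · have h := c.clubs_H 1 _ (c.memP q) k (iM s)
      rw [c.d0_Gp_H0 hd q, map_zero] at h
      simp only [co_zero, mul_zero, neg_zero, ch_iM] at h
      linear_combination h
  · cases u; exact c.phiC_basis (iP q)
  · -- z = G+ t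
    have hpar : c.φ (c.bV (iP q)) (c.bV (iP t)) ∈ c.Vsub 0 := by
      have := c.hhom 1 1 _ (c.memP q) _ (c.memP t)
      rwa [hd, show (1+1+0 : ZMod 2) = 0 by decide] at this
    apply c.eq_zero_of_co
    intro i
    rcases i with (((n|n)|u)|(s|s))
    · have h := c.clubs_P 1 _ (c.memP q) t (iL n)
      rw [c.d0_Gp_H0 hd q, map_zero] at h
      simp only [co_zero, mul_zero, neg_zero, ch_iL, mul_zero] at h
      linear_combination h
    · have h := c.clubs_P 1 _ (c.memP q) t (iH n)
      rw [c.d0_Gp_H0 hd q, map_zero] at h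
      simp only [co_zero, mul_zero, neg_zero, ch_iH] at h
      linear_combination h
    · cases u
      have h := c.clubs_P 1 _ (c.memP q) t iC
      rw [c.d0_Gp_H0 hd q, map_zero] at h
      simp only [co_zero, mul_zero, neg_zero, ch_iC] at h
      linear_combination h
    · exact c.even_co hpar _
    · exact c.even_co hpar _
  · -- z = G- t
    have hpar : c.φ (c.bV (iP q)) (c.bV (iM t)) ∈ c.Vsub 0 := by
      have := c.hhom 1 1 _ (c.memP q) _ (c.memM t)
      rwa [hd, show (1+1+0 : ZMod 2) = 0 by decide] at this
    apply c.eq_zero_of_co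
    intro i
    rcases i with (((n|n)|u)|(s|s))
    · have h := c.clubs_M 1 _ (c.memP q) t (iL n)
      rw [c.d0_Gp_H0 hd q, map_zero] at h
      simp only [co_zero, mul_zero, neg_zero, ch_iL] at h
      linear_combination -h
    · have h := c.clubs_M 1 _ (c.memP q) t (iH n)
      rw [c.d0_Gp_H0 hd q, map_zero] at h
      simp only [co_zero, mul_zero, neg_zero, ch_iH] at h
      linear_combination -h
    · cases u
      have h := c.clubs_M 1 _ (c.memP q) t iC
      rw [c.d0_Gp_H0 hd q, map_zero] at h
      simp only [co_zero, mul_zero, neg_zero, ch_iC] at h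
      linear_combination -h
    · exact c.even_co hpar _
    · exact c.even_co hpar _

lemma d0_Gm_row (q : ℤ) (j : Idx) : c.φ (c.bV (iM q)) (c.bV j) = 0 := by
  rcases j with (((k|k)|u)|(t|t))
  · have hpar : c.φ (c.bV (iM q)) (c.bV (iL k)) ∈ c.Vsub 1 := by
      have := c.hhom 1 0 _ (c.memM q) _ (c.memL k)
      rwa [hd, show (1+0+0 : ZMod 2) = 1 by decide] at this
    apply c.eq_zero_of_co
    intro i
    rcases i with (((n|n)|u)|(s|s))
    · exact c.odd_co hpar _
    · exact c.odd_co hpar _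
    · cases u; exact c.odd_co hpar _
    · have h := c.clubs_L 1 _ (c.memM q) k (iP s)
      rw [c.d0_Gm_H0 hd q, map_zero] at h
      simp only [co_zero, mul_zero, neg_zero, ch_iP] at h
      linear_combination -h
    · have h := c.clubs_L 1 _ (c.memM q) k (iM s)
      rw [c.d0_Gm_H0 hd q, map_zero] at h
      simp only [co_zero, mul_zero, neg_zero, ch_iM] at h
      linear_combination h
  · have hpar : c.φ (c.bV (iM q)) (c.bV (iH k)) ∈ c.Vsub 1 := by
      have := c.hhom 1 0 _ (c.memM q) _ (c.memH k)
      rwa [hd, show (1+0+0 : ZMod 2) = 1 by decide] at this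
    apply c.eq_zero_of_co
    intro i
    rcases i with (((n|n)|u)|(s|s))
    · exact c.odd_co hpar _
    · exact c.odd_co hpar _
    · cases u; exact c.odd_co hpar _
    · have h := c.clubs_H 1 _ (c.memM q) k (iP s)
      rw [c.d0_Gm_H0 hd q, map_zero] at h
      simp only [co_zero, mul_zero, neg_zero, ch_iP] at h
      linear_combination -h
    · have h := c.clubs_H 1 _ (c.memM q) k (iM s)
      rw [c.d0_Gm_H0 hd q, map_zero] at h
      simp only [co_zero, mul_zero, neg_zero, ch_iM] at h
      linear_combination h
  · cases u; exact c.phiC_basis (iM q)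
  · have hpar : c.φ (c.bV (iM q)) (c.bV (iP t)) ∈ c.Vsub 0 := by
      have := c.hhom 1 1 _ (c.memM q) _ (c.memP t)
      rwa [hd, show (1+1+0 : ZMod 2) = 0 by decide] at this
    apply c.eq_zero_of_co
    intro i
    rcases i with (((n|n)|u)|(s|s))
    · have h := c.clubs_P 1 _ (c.memM q) t (iL n)
      rw [c.d0_Gm_H0 hd q, map_zero] at h
      simp only [co_zero, mul_zero, neg_zero, ch_iL] at h
      linear_combination h
    · have h := c.clubs_P 1 _ (c.memM q) t (iH n)
      rw [c.d0_Gm_H0 hd q, map_zero] at h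
      simp only [co_zero, mul_zero, neg_zero, ch_iH] at h
      linear_combination h
    · cases u
      have h := c.clubs_P 1 _ (c.memM q) t iC
      rw [c.d0_Gm_H0 hd q, map_zero] at h
      simp only [co_zero, mul_zero, neg_zero, ch_iC] at h
      linear_combination h
    · exact c.even_co hpar _
    · exact c.even_co hpar _
  · have hpar : c.φ (c.bV (iM q)) (c.bV (iM t)) ∈ c.Vsub 0 := by
      have := c.hhom 1 1 _ (c.memM q) _ (c.memM t)
      rwa [hd, show (1+1+0 : ZMod 2) = 0 by decide] at this
    apply c.eq_zero_of_co
    intro i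
    rcases i with (((n|n)|u)|(s|s))
    · have h := c.clubs_M 1 _ (c.memM q) t (iL n)
      rw [c.d0_Gm_H0 hd q, map_zero] at h
      simp only [co_zero, mul_zero, neg_zero, ch_iL] at h
      linear_combination -h
    · have h := c.clubs_M 1 _ (c.memM q) t (iH n)
      rw [c.d0_Gm_H0 hd q, map_zero] at h
      simp only [co_zero, mul_zero, neg_zero, ch_iH] at h
      linear_combination -h
    · cases u
      have h := c.clubs_M 1 _ (c.memM q) t iC
      rw [c.d0_Gm_H0 hd q, map_zero] at h
      simp only [co_zero, mul_zero, neg_zero, ch_iC] at h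
      linear_combination -h
    · exact c.even_co hpar _
    · exact c.even_co hpar _

lemma d0_even_Gp (j : Idx) (hj : par j = 0) (s : ℤ) : c.φ (c.bV j) (c.bV (iP s)) = 0 := by
  rw [c.sym_even_left j (iP s) hj, c.d0_Gp_row hd s j]

lemma d0_even_Gm (j : Idx) (hj : par j = 0) (s : ℤ) : c.φ (c.bV j) (c.bV (iM s)) = 0 := by
  rw [c.sym_even_left j (iM s) hj, c.d0_Gm_row hd s j]

lemma d0_even_LH (j : Idx) (hj : par j = 0) (n : ℤ) :
    c.φ (c.bV j) (c.bV (iL n)) = 0 ∧ c.φ (c.bV j) (c.bV (iH n)) = 0 := by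
  have memj : c.bV j ∈ c.Vsub 0 := by rw [← hj]; exact c.mem_basis j
  have inst : ∀ qq ss : ℤ, qq + ss = n →
      (2:ℂ) • c.φ (c.bV j) (c.bV (iL n)) + ((qq:ℂ) - (ss:ℂ)) • c.φ (c.bV j) (c.bV (iH n)) = 0 := by
    intro qq ss hqs
    have h2 := c.hbd2 0 1 1 _ memj _ (c.memP qq) _ (c.memM ss)
    rw [c.hGpGm qq ss, hqs] at h2
    rw [c.d0_even_Gp hd j hj qq, c.d0_even_Gm hd j hj ss] at h2
    rw [map_zero, map_zero, smul_zero, smul_zero, sub_zero] at h2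
    rw [map_add, map_add, map_smul, map_smul, map_smul, c.phiC_basis, smul_zero, add_zero] at h2
    exact h2
  have e1 := inst n 0 (by ring)
  have e2 := inst (n+1) (-1) (by ring)
  have coef1 : ((n:ℤ):ℂ) - ((0:ℤ):ℂ) = (n:ℂ) := by push_cast; ring
  have coef2 : (((n+1):ℤ):ℂ) - (((-1):ℤ):ℂ) = (n:ℂ) + 2 := by push_cast; ring
  rw [coef1] at e1
  rw [coef2] at e2
  have hB : c.φ (c.bV j) (c.bV (iH n)) = 0 := by
    have h3 : (2:ℂ) • c.φ (c.bV j) (c.bV (iH n)) = 0 := by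
      calc (2:ℂ) • c.φ (c.bV j) (c.bV (iH n))
          = ((2:ℂ) • c.φ (c.bV j) (c.bV (iL n)) + ((n:ℂ)+2) • c.φ (c.bV j) (c.bV (iH n)))
            - ((2:ℂ) • c.φ (c.bV j) (c.bV (iL n)) + (n:ℂ) • c.φ (c.bV j) (c.bV (iH n))) := by
            module
        _ = 0 := by rw [e1, e2, sub_zero]
    rcases smul_eq_zero.mp h3 with h | h
    · exact absurd h two_ne_zero
    · exact h
  refine ⟨?_, hB⟩
  rw [hB, smul_zero, add_zero] at e1
  rcases smul_eq_zero.mp e1 with h | h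
  · exact absurd h two_ne_zero
  · exact h

lemma d0_all (j j2 : Idx) : c.φ (c.bV j) (c.bV j2) = 0 := by
  rcases j with (((k|k)|u)|(t|t))
  · rcases j2 with (((n|n)|u2)|(s|s))
    · exact (c.d0_even_LH hd (iL k) rfl n).1
    · exact (c.d0_even_LH hd (iL k) rfl n).2
    · cases u2; exact c.phiC_basis (iL k)
    · exact c.d0_even_Gp hd (iL k) rfl s
    · exact c.d0_even_Gm hd (iL k) rfl s
  · rcases j2 with (((n|n)|u2)|(s|s))
    · exact (c.d0_even_LH hd (iH k) rfl n).1
    · exact (c.d0_even_LH hd (iH k) rfl n).2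
    · cases u2; exact c.phiC_basis (iH k)
    · exact c.d0_even_Gp hd (iH k) rfl s
    · exact c.d0_even_Gm hd (iH k) rfl s
  · cases u; exact c.Cphi j2
  · exact c.d0_Gp_row hd t j2
  · exact c.d0_Gm_row hd t j2

end D0
end Ctx
end N2R
namespace N2R
namespace Ctx
variable {V : Type} [AddCommGroup V] [Module ℂ V] (c : Ctx V)

/-- all iP coordinates of φ(L0,L0) vanish (any degree) -/
lemma U_iP (s : ℤ) : c.co (c.φ (c.bV (iL 0)) (c.bV (iL 0))) (iP s) = 0 := by
  rcases eq_or_ne s 0 with rfl | hs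
  · exact c.u_iP0 0 _ (c.memL 0)
  · have h := c.diamond_L 0 _ (c.memL 0) (-s) (iP 0)
    rw [c.co_br_L_iP] at h
    rw [show (0:ℤ) - -s = s by ring] at h
    have hs0 : c.co (c.φ (c.bV (iL 0)) (c.bV (iL (-s)))) (iP 0) = 0 := by
      rw [c.sym_even_left (iL 0) (iL (-s)) rfl]
      exact c.u_iP0 0 _ (c.memL (-s))
    rw [hs0, mul_zero] at h
    push_cast at h
    have h2 : (s:ℂ) * c.co (c.φ (c.bV (iL 0)) (c.bV (iL 0))) (iP s) = 0 := by
      linear_combination (-2/3 : ℂ) * h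
    rcases mul_eq_zero.mp h2 with h3 | h3
    · exact absurd h3 (by exact_mod_cast hs)
    · exact h3

lemma U_iM (s : ℤ) : c.co (c.φ (c.bV (iL 0)) (c.bV (iL 0))) (iM s) = 0 := by
  rcases eq_or_ne s 0 with rfl | hs
  · exact c.u_iM0 0 _ (c.memL 0)
  · have h := c.diamond_L 0 _ (c.memL 0) (-s) (iM 0)
    rw [c.co_br_L_iM] at h
    rw [show (0:ℤ) - -s = s by ring] at h
    have hs0 : c.co (c.φ (c.bV (iL 0)) (c.bV (iL (-s)))) (iM 0) = 0 := by
      rw [c.sym_even_left (iL 0) (iL (-s)) rfl]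
      exact c.u_iM0 0 _ (c.memL (-s))
    rw [hs0, mul_zero] at h
    push_cast at h
    have h2 : (s:ℂ) * c.co (c.φ (c.bV (iL 0)) (c.bV (iL 0))) (iM s) = 0 := by
      linear_combination (-2/3 : ℂ) * h
    rcases mul_eq_zero.mp h2 with h3 | h3
    · exact absurd h3 (by exact_mod_cast hs)
    · exact h3

section D1
variable (hd : c.d = 1)
include hd

lemma d1_U0 : c.φ (c.bV (iL 0)) (c.bV (iL 0)) = 0 := by
  have hpar : c.φ (c.bV (iL 0)) (c.bV (iL 0)) ∈ c.Vsub 1 := by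
    have := c.hhom 0 0 _ (c.memL 0) _ (c.memL 0)
    rwa [hd, show (0+0+1 : ZMod 2) = 1 by decide] at this
  apply c.eq_zero_of_co
  intro i
  rcases i with (((n|n)|u)|(s|s))
  · exact c.odd_co hpar _
  · exact c.odd_co hpar _
  · cases u; exact c.odd_co hpar _
  · exact c.U_iP s
  · exact c.U_iM s

lemma d1_h0 : c.φ (c.bV (iL 0)) (c.bV (iH 0)) = 0 := by
  have hpar : c.φ (c.bV (iL 0)) (c.bV (iH 0)) ∈ c.Vsub 1 := by
    have := c.hhom 0 0 _ (c.memL 0) _ (c.memH 0)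
    rwa [hd, show (0+0+1 : ZMod 2) = 1 by decide] at this
  apply c.eq_zero_of_co
  intro i
  rcases i with (((n|n)|u)|(s|s))
  · exact c.odd_co hpar _
  · exact c.odd_co hpar _
  · cases u; exact c.odd_co hpar _
  · -- iP s
    rcases eq_or_ne s 0 with rfl | hs
    · -- use clubs_M at iL 0 with q = 0
      have h := c.clubs_M 0 _ (c.memL 0) 0 (iL 0)
      rw [show c.d + 0 = 1 by rw [hd]; decide, c.sgn_one] at h
      rw [c.co_br_Gm_iL] at h
      have hL : c.co (c.φ (c.bV (iL 0)) (c.bV (iM 0))) (iL 0) = 0 := by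
        rw [c.sym_even_left (iL 0) (iM 0) rfl]
        exact c.u_iL0 1 _ (c.memM 0)
      rw [hL] at h
      simp only [ch_iL, mul_zero, zero_mul] at h
      simpa using h
    · -- cross trick
      have hz : c.co (c.φ (c.bV (iL 0)) (c.bV (iL (2*s+2)))) (iP ((2*s+2)+s)) = 0 := by
        have h := c.diamond_L 0 _ (c.memL 0) (2*s+2) (iP ((2*s+2)+s))
        rw [c.d1_U0 hd, map_zero] at h
        simp only [co_zero, neg_zero] at h
        have hco : (-((2*s+2 : ℤ):ℂ) - wt (iP ((2*s+2)+s))) = (s:ℂ) := by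
          simp only [wt_iP]; push_cast; ring
        rw [hco] at h
        rcases mul_eq_zero.mp h with h3 | h3
        · exact absurd h3 (by exact_mod_cast hs)
        · exact h3
      have h := c.clubs_L 0 _ (c.memL 0) (2*s+2) (iP ((2*s+2)+s))
      rw [hz] at h
      rw [c.co_br_L_iP] at h
      rw [show (2*s+2)+s - (2*s+2) = s by ring] at h
      simp only [ch_iP, mul_zero, zero_mul] at h
      have hcoef : (3*((2*s+2 : ℤ):ℂ)/2 - (((2*s+2)+s : ℤ):ℂ)) = 1 := by push_cast; ring
      rw [hcoef, one_mul] at h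
      linear_combination h
  · -- iM s
    rcases eq_or_ne s 0 with rfl | hs
    · have h := c.clubs_P 0 _ (c.memL 0) 0 (iL 0)
      rw [show c.d + 0 = 1 by rw [hd]; decide, c.sgn_one] at h
      rw [c.co_br_Gp_iL] at h
      have hL : c.co (c.φ (c.bV (iL 0)) (c.bV (iP 0))) (iL 0) = 0 := by
        rw [c.sym_even_left (iL 0) (iP 0) rfl]
        exact c.u_iL0 1 _ (c.memP 0)
      rw [hL] at h
      simp only [ch_iL, mul_zero, zero_mul] at h
      simpa using h
    · have hz : c.co (c.φ (c.bV (iL 0)) (c.bV (iL (2*s+2)))) (iM ((2*s+2)+s)) = 0 := by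
        have h := c.diamond_L 0 _ (c.memL 0) (2*s+2) (iM ((2*s+2)+s))
        rw [c.d1_U0 hd, map_zero] at h
        simp only [co_zero, neg_zero] at h
        have hco : (-((2*s+2 : ℤ):ℂ) - wt (iM ((2*s+2)+s))) = (s:ℂ) := by
          simp only [wt_iM]; push_cast; ring
        rw [hco] at h
        rcases mul_eq_zero.mp h with h3 | h3
        · exact absurd h3 (by exact_mod_cast hs)
        · exact h3
      have h := c.clubs_L 0 _ (c.memL 0) (2*s+2) (iM ((2*s+2)+s))
      rw [hz] at h
      rw [c.co_br_L_iM] at h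
      rw [show (2*s+2)+s - (2*s+2) = s by ring] at h
      simp only [ch_iM, mul_zero, zero_mul] at h
      have hcoef : (3*((2*s+2 : ℤ):ℂ)/2 - (((2*s+2)+s : ℤ):ℂ)) = 1 := by push_cast; ring
      rw [hcoef, one_mul] at h
      linear_combination h

end D1
end Ctx
end N2R
namespace N2R
namespace Ctx
variable {V : Type} [AddCommGroup V] [Module ℂ V] (c : Ctx V)

section D1
variable (hd : c.d = 1)
include hd

lemma d1_even_row (j0 : Idx) (hj0 : par j0 = 0)
    (hu : c.φ (c.bV j0) (c.bV (iL 0)) = 0) (hh : c.φ (c.bV j0) (c.bV (iH 0)) = 0)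
    (j2 : Idx) : c.φ (c.bV j0) (c.bV j2) = 0 := by
  have memj : c.bV j0 ∈ c.Vsub 0 := by rw [← hj0]; exact c.mem_basis j0
  rcases j2 with (((k|k)|u)|(t|t))
  · have hpar : c.φ (c.bV j0) (c.bV (iL k)) ∈ c.Vsub 1 := by
      have := c.hhom 0 0 _ memj _ (c.memL k)
      rwa [hd, show (0+0+1 : ZMod 2) = 1 by decide] at this
    apply c.eq_zero_of_co
    intro i
    rcases i with (((n|n)|u)|(s|s))
    · exact c.odd_co hpar _
    · exact c.odd_co hpar _
    · cases u; exact c.odd_co hpar _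
    · have h := c.clubs_L 0 _ memj k (iP s)
      rw [hh, map_zero] at h
      simp only [co_zero, neg_zero, ch_iP, mul_zero] at h
      linear_combination -h
    · have h := c.clubs_L 0 _ memj k (iM s)
      rw [hh, map_zero] at h
      simp only [co_zero, neg_zero, ch_iM, mul_zero] at h
      linear_combination h
  · have hpar : c.φ (c.bV j0) (c.bV (iH k)) ∈ c.Vsub 1 := by
      have := c.hhom 0 0 _ memj _ (c.memH k)
      rwa [hd, show (0+0+1 : ZMod 2) = 1 by decide] at this
    apply c.eq_zero_of_co
    intro i
    rcases i with (((n|n)|u)|(s|s))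
    · exact c.odd_co hpar _
    · exact c.odd_co hpar _
    · cases u; exact c.odd_co hpar _
    · have h := c.clubs_H 0 _ memj k (iP s)
      rw [hh, map_zero] at h
      simp only [co_zero, neg_zero, ch_iP, mul_zero] at h
      linear_combination -h
    · have h := c.clubs_H 0 _ memj k (iM s)
      rw [hh, map_zero] at h
      simp only [co_zero, neg_zero, ch_iM, mul_zero] at h
      linear_combination h
  · cases u; exact c.phiC _
  · have hpar : c.φ (c.bV j0) (c.bV (iP t)) ∈ c.Vsub 0 := by
      have := c.hhom 0 1 _ memj _ (c.memP t)
      rwa [hd, show (0+1+1 : ZMod 2) = 0 by decide] at this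
    apply c.eq_zero_of_co
    intro i
    rcases i with (((n|n)|u)|(s|s))
    · have h := c.clubs_P 0 _ memj t (iL n)
      rw [hh, map_zero] at h
      simp only [co_zero, neg_zero, ch_iL, mul_zero] at h
      linear_combination h
    · have h := c.clubs_P 0 _ memj t (iH n)
      rw [hh, map_zero] at h
      simp only [co_zero, neg_zero, ch_iH, mul_zero] at h
      linear_combination h
    · cases u
      have h := c.clubs_P 0 _ memj t iC
      rw [hh, map_zero] at h
      simp only [co_zero, neg_zero, ch_iC, mul_zero] at h
      linear_combination h
    · exact c.even_co hpar _
    · exact c.even_co hpar _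
  · have hpar : c.φ (c.bV j0) (c.bV (iM t)) ∈ c.Vsub 0 := by
      have := c.hhom 0 1 _ memj _ (c.memM t)
      rwa [hd, show (0+1+1 : ZMod 2) = 0 by decide] at this
    apply c.eq_zero_of_co
    intro i
    rcases i with (((n|n)|u)|(s|s))
    · have h := c.clubs_M 0 _ memj t (iL n)
      rw [hh, map_zero] at h
      simp only [co_zero, neg_zero, ch_iL, mul_zero] at h
      linear_combination -h
    · have h := c.clubs_M 0 _ memj t (iH n)
      rw [hh, map_zero] at h
      simp only [co_zero, neg_zero, ch_iH, mul_zero] at h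
      linear_combination -h
    · cases u
      have h := c.clubs_M 0 _ memj t iC
      rw [hh, map_zero] at h
      simp only [co_zero, neg_zero, ch_iC, mul_zero] at h
      linear_combination -h
    · exact c.even_co hpar _
    · exact c.even_co hpar _

lemma d1_L0_row (j2 : Idx) : c.φ (c.bV (iL 0)) (c.bV j2) = 0 :=
  c.d1_even_row hd (iL 0) rfl (c.d1_U0 hd) (c.d1_h0 hd) j2

lemma d1_H0L0 : c.φ (c.bV (iH 0)) (c.bV (iL 0)) = 0 := by
  rw [c.sym_even_left (iH 0) (iL 0) rfl]
  exact c.d1_h0 hd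

lemma d1_H0H0 : c.φ (c.bV (iH 0)) (c.bV (iH 0)) = 0 := by
  have hpar : c.φ (c.bV (iH 0)) (c.bV (iH 0)) ∈ c.Vsub 1 := by
    have := c.hhom 0 0 _ (c.memH 0) _ (c.memH 0)
    rwa [hd, show (0+0+1 : ZMod 2) = 1 by decide] at this
  apply c.eq_zero_of_co
  intro i
  rcases i with (((n|n)|u)|(s|s))
  · exact c.odd_co hpar _
  · exact c.odd_co hpar _
  · cases u; exact c.odd_co hpar _
  · rcases eq_or_ne s 0 with rfl | hs
    · have h := c.clubs_M 0 _ (c.memH 0) 0 (iL 0)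
      rw [show c.d + 0 = 1 by rw [hd]; decide, c.sgn_one] at h
      rw [c.co_br_Gm_iL] at h
      have hL : c.co (c.φ (c.bV (iH 0)) (c.bV (iM 0))) (iL 0) = 0 := by
        rw [c.sym_even_left (iH 0) (iM 0) rfl]
        exact c.h_iL 1 _ (c.memM 0) 0
      rw [hL] at h
      simp only [ch_iL, mul_zero, zero_mul] at h
      simpa using h
    · have hz : c.co (c.φ (c.bV (iH 0)) (c.bV (iL (2*s+2)))) (iP ((2*s+2)+s)) = 0 := by
        have h := c.diamond_L 0 _ (c.memH 0) (2*s+2) (iP ((2*s+2)+s))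
        rw [c.d1_H0L0 hd, map_zero] at h
        simp only [co_zero, neg_zero] at h
        have hco : (-((2*s+2 : ℤ):ℂ) - wt (iP ((2*s+2)+s))) = (s:ℂ) := by
          simp only [wt_iP]; push_cast; ring
        rw [hco] at h
        rcases mul_eq_zero.mp h with h3 | h3
        · exact absurd h3 (by exact_mod_cast hs)
        · exact h3
      have h := c.clubs_L 0 _ (c.memH 0) (2*s+2) (iP ((2*s+2)+s))
      rw [hz] at h
      rw [c.co_br_L_iP] at h
      rw [show (2*s+2)+s - (2*s+2) = s by ring] at h
      simp only [ch_iP, mul_zero, zero_mul] at h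
      have hcoef : (3*((2*s+2 : ℤ):ℂ)/2 - (((2*s+2)+s : ℤ):ℂ)) = 1 := by push_cast; ring
      rw [hcoef, one_mul] at h
      linear_combination h
  · rcases eq_or_ne s 0 with rfl | hs
    · have h := c.clubs_P 0 _ (c.memH 0) 0 (iL 0)
      rw [show c.d + 0 = 1 by rw [hd]; decide, c.sgn_one] at h
      rw [c.co_br_Gp_iL] at h
      have hL : c.co (c.φ (c.bV (iH 0)) (c.bV (iP 0))) (iL 0) = 0 := by
        rw [c.sym_even_left (iH 0) (iP 0) rfl]
        exact c.h_iL 1 _ (c.memP 0) 0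
      rw [hL] at h
      simp only [ch_iL, mul_zero, zero_mul] at h
      simpa using h
    · have hz : c.co (c.φ (c.bV (iH 0)) (c.bV (iL (2*s+2)))) (iM ((2*s+2)+s)) = 0 := by
        have h := c.diamond_L 0 _ (c.memH 0) (2*s+2) (iM ((2*s+2)+s))
        rw [c.d1_H0L0 hd, map_zero] at h
        simp only [co_zero, neg_zero] at h
        have hco : (-((2*s+2 : ℤ):ℂ) - wt (iM ((2*s+2)+s))) = (s:ℂ) := by
          simp only [wt_iM]; push_cast; ring
        rw [hco] at h
        rcases mul_eq_zero.mp h with h3 | h3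
        · exact absurd h3 (by exact_mod_cast hs)
        · exact h3
      have h := c.clubs_L 0 _ (c.memH 0) (2*s+2) (iM ((2*s+2)+s))
      rw [hz] at h
      rw [c.co_br_L_iM] at h
      rw [show (2*s+2)+s - (2*s+2) = s by ring] at h
      simp only [ch_iM, mul_zero, zero_mul] at h
      have hcoef : (3*((2*s+2 : ℤ):ℂ)/2 - (((2*s+2)+s : ℤ):ℂ)) = 1 := by push_cast; ring
      rw [hcoef, one_mul] at h
      linear_combination h

lemma d1_H0_row (j2 : Idx) : c.φ (c.bV (iH 0)) (c.bV j2) = 0 :=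
  c.d1_even_row hd (iH 0) rfl (c.d1_H0L0 hd) (c.d1_H0H0 hd) j2

lemma d1_even_row' (j0 : Idx) (hj0 : par j0 = 0) (j2 : Idx) :
    c.φ (c.bV j0) (c.bV j2) = 0 := by
  apply c.d1_even_row hd j0 hj0
  · rw [c.sym_even_left j0 (iL 0) hj0]
    exact c.d1_L0_row hd j0
  · rw [c.sym_even_left j0 (iH 0) hj0]
    exact c.d1_H0_row hd j0

end D1
end Ctx
end N2R
namespace N2R
namespace Ctx
variable {V : Type} [AddCommGroup V] [Module ℂ V] (c : Ctx V)

section D1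
variable (hd : c.d = 1)
include hd

lemma d1_odd_Gp_co (x : V) (hx : x ∈ c.Vsub 1)
    (hu : c.φ x (c.bV (iL 0)) = 0) (hh : c.φ x (c.bV (iH 0)) = 0) (t : ℤ) :
    ∀ i, i ≠ iP t → c.co (c.φ x (c.bV (iP t))) i = 0 := by
  have hpar : c.φ x (c.bV (iP t)) ∈ c.Vsub 1 := by
    have := c.hhom 1 1 x hx _ (c.memP t)
    rwa [hd, show (1+1+1 : ZMod 2) = 1 by decide] at this
  intro i hi
  rcases i with (((n|n)|u)|(s|s))
  · exact c.odd_co hpar _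
  · exact c.odd_co hpar _
  · cases u; exact c.odd_co hpar _
  · have hst : s ≠ t := fun hcon => hi (by rw [hcon])
    have h := c.diamond_P 1 x hx t (iP s)
    rw [hu, map_zero] at h
    simp only [co_zero, mul_zero, neg_zero, wt_iP] at h
    rcases mul_eq_zero.mp h with h3 | h3
    · exfalso
      apply hst
      have : (s:ℂ) = t := by linear_combination h3
      exact_mod_cast this
    · exact h3
  · have h := c.clubs_P 1 x hx t (iM s)
    rw [hh, map_zero] at h
    simp only [co_zero, mul_zero, neg_zero, ch_iM] at h
    have hne : (1 - (-1) : ℂ) ≠ 0 := by norm_num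
    rcases mul_eq_zero.mp h with h3 | h3
    · exact absurd h3 hne
    · exact h3

lemma d1_odd_Gm_co (x : V) (hx : x ∈ c.Vsub 1)
    (hu : c.φ x (c.bV (iL 0)) = 0) (hh : c.φ x (c.bV (iH 0)) = 0) (t : ℤ) :
    ∀ i, i ≠ iM t → c.co (c.φ x (c.bV (iM t))) i = 0 := by
  have hpar : c.φ x (c.bV (iM t)) ∈ c.Vsub 1 := by
    have := c.hhom 1 1 x hx _ (c.memM t)
    rwa [hd, show (1+1+1 : ZMod 2) = 1 by decide] at this
  intro i hi
  rcases i with (((n|n)|u)|(s|s))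
  · exact c.odd_co hpar _
  · exact c.odd_co hpar _
  · cases u; exact c.odd_co hpar _
  · have h := c.clubs_M 1 x hx t (iP s)
    rw [hh, map_zero] at h
    simp only [co_zero, mul_zero, neg_zero, ch_iP] at h
    have hne : (-1 - 1 : ℂ) ≠ 0 := by norm_num
    rcases mul_eq_zero.mp h with h3 | h3
    · exact absurd h3 hne
    · exact h3
  · have hst : s ≠ t := fun hcon => hi (by rw [hcon])
    have h := c.diamond_M 1 x hx t (iM s)
    rw [hu, map_zero] at h
    simp only [co_zero, mul_zero, neg_zero, wt_iM] at h
    rcases mul_eq_zero.mp h with h3 | h3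
    · exfalso
      apply hst
      have : (s:ℂ) = t := by linear_combination h3
      exact_mod_cast this
    · exact h3

lemma d1_uGp (q : ℤ) : c.φ (c.bV (iP q)) (c.bV (iL 0)) = 0 := by
  rw [c.sym_even_right (iP q) (iL 0) rfl]
  exact c.d1_L0_row hd (iP q)

lemma d1_hGp (q : ℤ) : c.φ (c.bV (iP q)) (c.bV (iH 0)) = 0 := by
  rw [c.sym_even_right (iP q) (iH 0) rfl]
  exact c.d1_H0_row hd (iP q)

lemma d1_uGm (q : ℤ) : c.φ (c.bV (iM q)) (c.bV (iL 0)) = 0 := by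
  rw [c.sym_even_right (iM q) (iL 0) rfl]
  exact c.d1_L0_row hd (iM q)

lemma d1_hGm (q : ℤ) : c.φ (c.bV (iM q)) (c.bV (iH 0)) = 0 := by
  rw [c.sym_even_right (iM q) (iH 0) rfl]
  exact c.d1_H0_row hd (iM q)

lemma d1_GpGp (q t : ℤ) : c.φ (c.bV (iP q)) (c.bV (iP t)) = 0 := by
  apply c.eq_zero_of_co
  intro i
  rcases eq_or_ne i (iP t) with rfl | hi
  · have hs := c.sym_odd (iP q) (iP t) rfl rfl
    have h := congrArg (fun w => c.co w (iP t)) hs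
    simp only [co_neg] at h
    rcases eq_or_ne q t with rfl | hqt
    · linear_combination h/2
    · rw [c.d1_odd_Gp_co hd _ (c.memP t) (c.d1_uGp hd t) (c.d1_hGp hd t) q (iP t)
        (fun hcon => hqt (by simpa [iP] using hcon.symm))] at h
      simpa using h
  · exact c.d1_odd_Gp_co hd _ (c.memP q) (c.d1_uGp hd q) (c.d1_hGp hd q) t i hi

lemma d1_GpGm (q t : ℤ) : c.φ (c.bV (iP q)) (c.bV (iM t)) = 0 := by
  apply c.eq_zero_of_co
  intro i
  rcases eq_or_ne i (iM t) with rfl | hi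
  · have hs := c.sym_odd (iP q) (iM t) rfl rfl
    have h := congrArg (fun w => c.co w (iM t)) hs
    simp only [co_neg] at h
    rw [c.d1_odd_Gp_co hd _ (c.memM t) (c.d1_uGm hd t) (c.d1_hGm hd t) q (iM t)
      (by simp [iP, iM])] at h
    simpa using h
  · exact c.d1_odd_Gm_co hd _ (c.memP q) (c.d1_uGp hd q) (c.d1_hGp hd q) t i hi

lemma d1_GmGp (q t : ℤ) : c.φ (c.bV (iM q)) (c.bV (iP t)) = 0 := by
  rw [c.sym_odd (iM q) (iP t) rfl rfl, c.d1_GpGm hd t q, neg_zero]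

lemma d1_GmGm (q t : ℤ) : c.φ (c.bV (iM q)) (c.bV (iM t)) = 0 := by
  apply c.eq_zero_of_co
  intro i
  rcases eq_or_ne i (iM t) with rfl | hi
  · have hs := c.sym_odd (iM q) (iM t) rfl rfl
    have h := congrArg (fun w => c.co w (iM t)) hs
    simp only [co_neg] at h
    rcases eq_or_ne q t with rfl | hqt
    · linear_combination h/2
    · rw [c.d1_odd_Gm_co hd _ (c.memM t) (c.d1_uGm hd t) (c.d1_hGm hd t) q (iM t)
        (fun hcon => hqt (by simpa [iM] using hcon.symm))] at h
      simpa using h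
  · exact c.d1_odd_Gm_co hd _ (c.memM q) (c.d1_uGm hd q) (c.d1_hGm hd q) t i hi

lemma d1_all (j j2 : Idx) : c.φ (c.bV j) (c.bV j2) = 0 := by
  rcases j with (((k|k)|u)|(t|t))
  · exact c.d1_even_row' hd (iL k) rfl j2
  · exact c.d1_even_row' hd (iH k) rfl j2
  · cases u; exact c.Cphi j2
  · rcases j2 with (((n|n)|u2)|(s|s))
    · rw [c.sym_even_right (iP t) (iL n) rfl]
      exact c.d1_even_row' hd (iL n) rfl (iP t)
    · rw [c.sym_even_right (iP t) (iH n) rfl]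
      exact c.d1_even_row' hd (iH n) rfl (iP t)
    · cases u2; exact c.phiC_basis (iP t)
    · exact c.d1_GpGp hd t s
    · exact c.d1_GpGm hd t s
  · rcases j2 with (((n|n)|u2)|(s|s))
    · rw [c.sym_even_right (iM t) (iL n) rfl]
      exact c.d1_even_row' hd (iL n) rfl (iM t)
    · rw [c.sym_even_right (iM t) (iH n) rfl]
      exact c.d1_even_row' hd (iH n) rfl (iM t)
    · cases u2; exact c.phiC_basis (iM t)
    · exact c.d1_GmGp hd t s
    · exact c.d1_GmGm hd t s

end D1

lemma all_basis (j j2 : Idx) : c.φ (c.bV j) (c.bV j2) = 0 := by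
  rcases zmod2_cases c.d with hd | hd
  · exact c.d0_all hd j j2
  · exact c.d1_all hd j j2

lemma main (x y : V) : c.φ x y = 0 := by
  have h : c.φ = 0 := by
    apply c.bV.ext
    intro j
    apply c.bV.ext
    intro j2
    simpa using c.all_basis j j2
  rw [h]
  rfl

end Ctx
end N2R
theorem symmetric_superbiderivation_N2Ramond_trivial
    (V : Type) [AddCommGroup V] [Module ℂ V]
    (bV : Module.Basis (((ℤ ⊕ ℤ) ⊕ Unit) ⊕ (ℤ ⊕ ℤ)) ℂ V)
    (br : V →ₗ[ℂ] V →ₗ[ℂ] V)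
    (L : ℤ → V) (H : ℤ → V) (Cc : V) (Gp : ℤ → V) (Gm : ℤ → V)
    (hLdef : ∀ m : ℤ, L m = bV (Sum.inl (Sum.inl (Sum.inl m))))
    (hHdef : ∀ m : ℤ, H m = bV (Sum.inl (Sum.inl (Sum.inr m))))
    (hCdef : Cc = bV (Sum.inl (Sum.inr ())))
    (hGpdef : ∀ p : ℤ, Gp p = bV (Sum.inr (Sum.inl p)))
    (hGmdef : ∀ p : ℤ, Gm p = bV (Sum.inr (Sum.inr p)))
    (Vsub : ZMod 2 → Submodule ℂ V)
    (hV0 : Vsub 0 = Submodule.span ℂ (Set.range (fun i : (ℤ ⊕ ℤ) ⊕ Unit => bV (Sum.inl i))))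
    (hV1 : Vsub 1 = Submodule.span ℂ (Set.range (fun j : ℤ ⊕ ℤ => bV (Sum.inr j))))
    (sgn : ZMod 2 → ℂ) (hsgn : ∀ p : ZMod 2, sgn p = if p = 1 then -1 else 1)
    (hLL : ∀ m n : ℤ, br (L m) (L n) = ((m : ℂ) - n) • L (m + n) +
      (if m + n = 0 then ((m : ℂ) ^ 3 - m) / 12 else 0) • Cc)
    (hHH : ∀ m n : ℤ, br (H m) (H n) = (if m + n = 0 then (m : ℂ) / 3 else 0) • Cc)
    (hLH : ∀ m n : ℤ, br (L m) (H n) = (-(n : ℂ)) • H (m + n))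
    (hLGp : ∀ m p : ℤ, br (L m) (Gp p) = ((m : ℂ) / 2 - p) • Gp (p + m))
    (hLGm : ∀ m p : ℤ, br (L m) (Gm p) = ((m : ℂ) / 2 - p) • Gm (p + m))
    (hHGp : ∀ m p : ℤ, br (H m) (Gp p) = Gp (m + p))
    (hHGm : ∀ m p : ℤ, br (H m) (Gm p) = -Gm (m + p))
    (hGpGm : ∀ p q : ℤ, br (Gp p) (Gm q) = (2 : ℂ) • L (p + q) + ((p : ℂ) - q) • H (p + q) +
      (if p + q = 0 then ((p : ℂ) ^ 2 - 1 / 4) / 3 else 0) • Cc)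
    (hGpGp : ∀ p q : ℤ, br (Gp p) (Gp q) = 0)
    (hGmGm : ∀ p q : ℤ, br (Gm p) (Gm q) = 0)
    (hxC : ∀ x : V, br x Cc = 0)
    (hskew : ∀ p q : ZMod 2, ∀ x ∈ Vsub p, ∀ y ∈ Vsub q,
      br x y = (-(sgn (p * q))) • br y x)
    (φ : V →ₗ[ℂ] V →ₗ[ℂ] V) (d : ZMod 2)
    (hhom : ∀ p q : ZMod 2, ∀ x ∈ Vsub p, ∀ y ∈ Vsub q, φ x y ∈ Vsub (p + q + d))
    (hbd1 : ∀ p q t : ZMod 2, ∀ x ∈ Vsub p, ∀ y ∈ Vsub q, ∀ z ∈ Vsub t,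
      φ (br x y) z = sgn (d * p) • br x (φ y z) - sgn (q * (d + p)) • br y (φ x z))
    (hbd2 : ∀ p q t : ZMod 2, ∀ x ∈ Vsub p, ∀ y ∈ Vsub q, ∀ z ∈ Vsub t,
      φ x (br y z) = sgn ((d + p) * q) • br y (φ x z) - sgn (t * (d + p + q)) • br z (φ x y))
    (hsym : ∀ p q : ZMod 2, ∀ x ∈ Vsub p, ∀ y ∈ Vsub q, φ x y = sgn (p * q) • φ y x) :
    ∀ x y : V, φ x y = 0 := by
  intro x y
  let c : N2R.Ctx V :=
    { bV := bV, br := br, Vsub := Vsub, sgn := sgn, φ := φ, d := d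
      hV0 := hV0, hV1 := hV1, hsgn := hsgn
      hLL := fun m n => by
        have h := hLL m n
        rw [hLdef, hLdef, hLdef, hCdef] at h
        exact h
      hHH := fun m n => by
        have h := hHH m n
        rw [hHdef, hHdef, hCdef] at h
        exact h
      hLH := fun m n => by
        have h := hLH m n
        rw [hLdef, hHdef, hHdef] at h
        exact h
      hLGp := fun m p => by
        have h := hLGp m p
        rw [hLdef, hGpdef, hGpdef] at h
        exact h
      hLGm := fun m p => by
        have h := hLGm m p
        rw [hLdef, hGmdef, hGmdef] at h
        exact h
      hHGp := fun m p => by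
        have h := hHGp m p
        rw [hHdef, hGpdef, hGpdef] at h
        exact h
      hHGm := fun m p => by
        have h := hHGm m p
        rw [hHdef, hGmdef, hGmdef] at h
        exact h
      hGpGm := fun p q => by
        have h := hGpGm p q
        rw [hGpdef, hGmdef, hLdef, hHdef, hCdef] at h
        exact h
      hGpGp := fun p q => by
        have h := hGpGp p q
        rw [hGpdef, hGpdef] at h
        exact h
      hGmGm := fun p q => by
        have h := hGmGm p q
        rw [hGmdef, hGmdef] at h
        exact h
      hxC := fun v => by
        have h := hxC v
        rw [hCdef] at h
        exact h
      hskew := hskew, hhom := hhom, hbd1 := hbd1, hbd2 := hbd2, hsym := hsym }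
  exact c.main x y
end
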